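/- arXiv:2509.09407 — 5 statements merged into one kernel-verified Lean document; each statement's English description precedes it below -/
import Mathlib

section
/- Let G be a claw-free graph with maximum degree Δ(G) ≤ 4, let uv be an edge of G, and suppose u is not adjacent to any vertex of N(v)\{u}. Then the number of edges f of G that are disjoint from {u,v} and have at least one endpoint in N(u)\{v} is at most 6. -/
open SimpleGraph

/-- A graph is claw-free if it has no induced subgraph isomorphic to `K_{1,3}`. -/
def ClawFree {V : Type} (G : SimpleGraph V) : Prop :=
  IsEmpty ((completeBipartiteGraph (Fin 1) (Fin 3)) ↪g G)

/-- Edge `e` sees edge `e'` if they are at distance two (share no endpoint and some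
edge of `G` joins an endpoint of `e` to an endpoint of `e'`) or lie in a common triangle. -/
def Sees {V : Type} (G : SimpleGraph V) (e e' : Sym2 V) : Prop :=
  ((∀ x ∈ e, x ∉ e') ∧ ∃ x ∈ e, ∃ y ∈ e', G.Adj x y) ∨
  (∃ x y z : V, G.Adj x y ∧ G.Adj y z ∧ G.Adj x z ∧
    e ∈ ({s(x, y), s(y, z), s(x, z)} : Set (Sym2 V)) ∧
    e' ∈ ({s(x, y), s(y, z), s(x, z)} : Set (Sym2 V)))

/-- An injective edge-coloring: distinct edges that see each other get distinct colors. -/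
def IsInjEdgeColoring {V : Type} (G : SimpleGraph V) {k : ℕ}
    (φ : G.edgeSet → Fin k) : Prop :=
  ∀ e e' : G.edgeSet, (e : Sym2 V) ≠ (e' : Sym2 V) → Sees G e e' → φ e ≠ φ e'

/-- `G` has an injective `k`-edge-coloring. -/
def HasInjColoring {V : Type} (G : SimpleGraph V) (k : ℕ) : Prop :=
  ∃ φ : G.edgeSet → Fin k, IsInjEdgeColoring G φ

/-- The injective chromatic index: the least `k` such that `G` has an injective
`k`-edge-coloring. -/
noncomputable def injChromIndex {V : Type} (G : SimpleGraph V) : ℕ :=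
  sInf {k | HasInjColoring G k}

lemma claw_aux {V : Type} {G : SimpleGraph V} (hclaw : ClawFree G)
    {u v a b : V} (huv : G.Adj u v) (hua : G.Adj u a) (hub : G.Adj u b)
    (hva : ¬G.Adj v a) (hvb : ¬G.Adj v b) (hvna : v ≠ a) (hvnb : v ≠ b)
    (hab : a ≠ b) : G.Adj a b := by
  by_contra hnab
  apply hclaw.elim'
  refine ⟨⟨Sum.elim (fun _ => u) (![v, a, b]), ?_⟩, ?_⟩
  · rintro (⟨i⟩ | i) (⟨j⟩ | j) h
    · simp [Fin.ext_iff]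
    · fin_cases j <;> simp_all
    · fin_cases i <;> simp_all
    · fin_cases i <;> fin_cases j <;> simp_all [G.adj_comm]
  · rintro (⟨i⟩ | i) (⟨j⟩ | j)
    · simp [DFunLike.coe]
    · fin_cases j <;> simp_all [DFunLike.coe]
    · fin_cases i <;> dsimp only [DFunLike.coe] <;> simp_all [G.adj_comm]
    · fin_cases i <;> fin_cases j <;> simp_all [G.adj_comm, DFunLike.coe]

theorem stmt_2 {V : Type} [Fintype V] (G : SimpleGraph V) [DecidableRel G.Adj]
    (hclaw : ClawFree G) (hΔ : G.maxDegree ≤ 4)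
    (u v : V) (huv : G.Adj u v)
    (hu : ∀ w ∈ G.neighborSet v, w ≠ u → ¬G.Adj u w) :
    {f ∈ G.edgeSet | (u ∉ f ∧ v ∉ f) ∧ ∃ x ∈ f, G.Adj u x ∧ x ≠ v}.ncard ≤ 6 := by
  classical
  set F : Set (Sym2 V) :=
    {f ∈ G.edgeSet | (u ∉ f ∧ v ∉ f) ∧ ∃ x ∈ f, G.Adj u x ∧ x ≠ v} with hF
  have hdeg : ∀ x : V, (G.neighborFinset x).card ≤ 4 := fun x => by
    rw [G.card_neighborFinset_eq_degree]
    exact le_trans (G.degree_le_maxDegree x) hΔ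
  -- decompose an edge of F
  have hdecomp : ∀ f ∈ F, ∃ x y : V, f = s(x, y) ∧ G.Adj x y ∧ G.Adj u x ∧ x ≠ v ∧
      y ≠ u ∧ y ≠ v := by
    rintro f ⟨hfe, ⟨hufn, hvfn⟩, x, hxf, hux, hxv⟩
    refine ⟨x, Sym2.Mem.other hxf, (Sym2.other_spec hxf).symm, ?_, hux, hxv, ?_, ?_⟩
    · have := hfe; rw [← Sym2.other_spec hxf, SimpleGraph.mem_edgeSet] at this; exact this
    · rintro rfl; exact hufn (Sym2.other_mem hxf)
    · rintro rfl; exact hvfn (Sym2.other_mem hxf)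
  set S : Finset V := (G.neighborFinset u).erase v with hS
  have hmemS : ∀ x ∈ S, G.Adj u x ∧ x ≠ v := by
    intro x hx
    obtain ⟨hxv, hxn⟩ := Finset.mem_erase.mp hx
    exact ⟨(G.mem_neighborFinset u x).mp hxn, hxv⟩
  have hxS : ∀ x : V, G.Adj u x → x ≠ v → x ∈ S := by
    intro x h1 h2
    exact Finset.mem_erase.mpr ⟨h2, (G.mem_neighborFinset u x).mpr h1⟩
  have hvnadj : ∀ x ∈ S, ¬G.Adj v x ∧ v ≠ x := by
    intro x hx
    obtain ⟨h1, h2⟩ := hmemS x hx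
    constructor
    · intro hvx
      exact hu x hvx (G.ne_of_adj h1).symm h1
    · exact fun h => h2 h.symm
  have hclique : ∀ x ∈ S, ∀ y ∈ S, x ≠ y → G.Adj x y := by
    intro x hx y hy hxy
    obtain ⟨h1, _⟩ := hmemS x hx
    obtain ⟨h2, _⟩ := hmemS y hy
    exact claw_aux hclaw huv h1 h2 (hvnadj x hx).1 (hvnadj y hy).1
      (hvnadj x hx).2 (hvnadj y hy).2 hxy
  have hScard : S.card ≤ 3 := by
    have := hdeg u
    have hv : v ∈ G.neighborFinset u := (G.mem_neighborFinset u v).mpr huv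
    rw [hS, Finset.card_erase_of_mem hv]
    omega
  by_cases hc : S.card = 3
  · -- clique case
    obtain ⟨a, b, c, hab, hac, hbc, hSeq⟩ := Finset.card_eq_three.mp hc
    have haS : a ∈ S := by rw [hSeq]; simp
    have hbS : b ∈ S := by rw [hSeq]; simp
    have hcS : c ∈ S := by rw [hSeq]; simp
    have qab : G.Adj a b := hclique a haS b hbS hab
    have qac : G.Adj a c := hclique a haS c hcS hac
    have qbc : G.Adj b c := hclique b hbS c hcS hbc
    have hRcard : ∀ x p q : V, G.Adj u x → G.Adj x p → G.Adj x q → p ≠ q → p ≠ u → q ≠ u →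
        ((((G.neighborFinset x).erase u).erase p).erase q).card ≤ 1 := by
      intro x p q h1 h2 h3 h4 h5 h6
      have h4x := hdeg x
      have hum : u ∈ G.neighborFinset x := (G.mem_neighborFinset x u).mpr h1.symm
      have hpm : p ∈ (G.neighborFinset x).erase u :=
        Finset.mem_erase.mpr ⟨h5, (G.mem_neighborFinset x p).mpr h2⟩
      have hqm : q ∈ ((G.neighborFinset x).erase u).erase p :=
        Finset.mem_erase.mpr ⟨h4.symm, Finset.mem_erase.mpr ⟨h6, (G.mem_neighborFinset x q).mpr h3⟩⟩
      rw [Finset.card_erase_of_mem hqm, Finset.card_erase_of_mem hpm,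
        Finset.card_erase_of_mem hum]
      omega
    set Ra := (((G.neighborFinset a).erase u).erase b).erase c with hRa
    set Rb := (((G.neighborFinset b).erase u).erase a).erase c with hRb
    set Rc := (((G.neighborFinset c).erase u).erase a).erase b with hRc
    set T : Finset (Sym2 V) :=
      ({s(a, b), s(a, c), s(b, c)} : Finset (Sym2 V)) ∪ Ra.image (fun y => s(a, y)) ∪
        Rb.image (fun y => s(b, y)) ∪ Rc.image (fun y => s(c, y)) with hT
    have hau : a ≠ u := fun h => G.irrefl (h ▸ (hmemS a haS).1)
    have hbu : b ≠ u := fun h => G.irrefl (h ▸ (hmemS b hbS).1)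
    have hcu : c ≠ u := fun h => G.irrefl (h ▸ (hmemS c hcS).1)
    have hTcard : T.card ≤ 6 := by
      have c1 : Ra.card ≤ 1 := hRcard a b c (hmemS a haS).1 qab qac hbc hbu hcu
      have c2 : Rb.card ≤ 1 := hRcard b a c (hmemS b hbS).1 qab.symm qbc hac hau hcu
      have c3 : Rc.card ≤ 1 := hRcard c a b (hmemS c hcS).1 qac.symm qbc.symm hab hau hbu
      calc T.card ≤ (({s(a, b), s(a, c), s(b, c)} : Finset (Sym2 V)) ∪
            Ra.image (fun y => s(a, y)) ∪ Rb.image (fun y => s(b, y))).card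
            + (Rc.image (fun y => s(c, y))).card := Finset.card_union_le _ _
        _ ≤ (({s(a, b), s(a, c), s(b, c)} : Finset (Sym2 V)) ∪
            Ra.image (fun y => s(a, y))).card + (Rb.image (fun y => s(b, y))).card
            + (Rc.image (fun y => s(c, y))).card := by
            gcongr; exact Finset.card_union_le _ _
        _ ≤ ({s(a, b), s(a, c), s(b, c)} : Finset (Sym2 V)).card
            + (Ra.image (fun y => s(a, y))).card + (Rb.image (fun y => s(b, y))).card
            + (Rc.image (fun y => s(c, y))).card := by
            gcongr; exact Finset.card_union_le _ _
        _ ≤ 3 + 1 + 1 + 1 := by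
            gcongr
            · refine le_trans (Finset.card_insert_le _ _) (Nat.succ_le_succ ?_)
              refine le_trans (Finset.card_insert_le _ _) (Nat.succ_le_succ ?_)
              exact (Finset.card_singleton _).le
            · exact le_trans (Finset.card_image_le) c1
            · exact le_trans (Finset.card_image_le) c2
            · exact le_trans (Finset.card_image_le) c3
        _ = 6 := rfl
    have hsub : F ⊆ ↑T := by
      intro f hf
      obtain ⟨x, y, rfl, hxy, hux, hxv, hyu, hyv⟩ := hdecomp f hf
      have hxmem : x ∈ S := hxS x hux hxv
      rw [hSeq] at hxmem
      simp only [Finset.mem_insert, Finset.mem_singleton] at hxmem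
      have tml : ∀ e ∈ ({s(a, b), s(a, c), s(b, c)} : Finset (Sym2 V)), e ∈ T :=
        fun e he => Finset.mem_union_left _ (Finset.mem_union_left _
          (Finset.mem_union_left _ he))
      have tma : ∀ z ∈ Ra, s(a, z) ∈ T := fun z hz => Finset.mem_union_left _
        (Finset.mem_union_left _ (Finset.mem_union_right _ (Finset.mem_image_of_mem _ hz)))
      have tmb : ∀ z ∈ Rb, s(b, z) ∈ T := fun z hz => Finset.mem_union_left _
        (Finset.mem_union_right _ (Finset.mem_image_of_mem _ hz))
      have tmc : ∀ z ∈ Rc, s(c, z) ∈ T := fun z hz => Finset.mem_union_right _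
        (Finset.mem_image_of_mem _ hz)
      rcases hxmem with rfl | rfl | rfl
      · by_cases hyb : y = b
        · subst hyb; exact Finset.mem_coe.mpr (tml _ (Finset.mem_insert_self _ _))
        · by_cases hyc : y = c
          · subst hyc
            exact Finset.mem_coe.mpr (tml _ (Finset.mem_insert_of_mem (Finset.mem_insert_self _ _)))
          · have hyR : y ∈ Ra := Finset.mem_erase.mpr ⟨hyc, Finset.mem_erase.mpr ⟨hyb,
              Finset.mem_erase.mpr ⟨hyu, (G.mem_neighborFinset x y).mpr hxy⟩⟩⟩
            exact Finset.mem_coe.mpr (tma _ hyR)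
      · by_cases hya : y = a
        · subst hya
          rw [Finset.mem_coe, Sym2.eq_swap]
          exact tml _ (Finset.mem_insert_self _ _)
        · by_cases hyc : y = c
          · subst hyc
            exact Finset.mem_coe.mpr (tml _ (Finset.mem_insert_of_mem
              (Finset.mem_insert_of_mem (Finset.mem_singleton_self _))))
          · have hyR : y ∈ Rb := Finset.mem_erase.mpr ⟨hyc, Finset.mem_erase.mpr ⟨hya,
              Finset.mem_erase.mpr ⟨hyu, (G.mem_neighborFinset x y).mpr hxy⟩⟩⟩
            exact Finset.mem_coe.mpr (tmb _ hyR)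
      · by_cases hya : y = a
        · subst hya
          rw [Finset.mem_coe, Sym2.eq_swap]
          exact tml _ (Finset.mem_insert_of_mem (Finset.mem_insert_self _ _))
        · by_cases hyb : y = b
          · subst hyb
            rw [Finset.mem_coe, Sym2.eq_swap]
            exact tml _ (Finset.mem_insert_of_mem (Finset.mem_insert_of_mem
              (Finset.mem_singleton_self _)))
          · have hyR : y ∈ Rc := Finset.mem_erase.mpr ⟨hyb, Finset.mem_erase.mpr ⟨hya,
              Finset.mem_erase.mpr ⟨hyu, (G.mem_neighborFinset x y).mpr hxy⟩⟩⟩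
            exact Finset.mem_coe.mpr (tmc _ hyR)
    calc F.ncard ≤ (↑T : Set (Sym2 V)).ncard := Set.ncard_le_ncard hsub (T.finite_toSet)
      _ = T.card := Set.ncard_coe_finset T
      _ ≤ 6 := hTcard
  · -- small S case
    have hS2 : S.card ≤ 2 := by omega
    set T : Finset (Sym2 V) :=
      S.biUnion (fun x => ((G.neighborFinset x).erase u).image (fun y => s(x, y))) with hT
    have hTcard : T.card ≤ 6 := by
      have h1 : T.card ≤ ∑ x ∈ S, (((G.neighborFinset x).erase u).image
          (fun y => s(x, y))).card := Finset.card_biUnion_le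
      have h2 : ∀ x ∈ S, (((G.neighborFinset x).erase u).image (fun y => s(x, y))).card ≤ 3 := by
        intro x hx
        have hum : u ∈ G.neighborFinset x := (G.mem_neighborFinset x u).mpr (hmemS x hx).1.symm
        calc (((G.neighborFinset x).erase u).image (fun y => s(x, y))).card
            ≤ ((G.neighborFinset x).erase u).card := Finset.card_image_le
          _ ≤ 3 := by rw [Finset.card_erase_of_mem hum]; have := hdeg x; omega
      calc T.card ≤ ∑ x ∈ S, (((G.neighborFinset x).erase u).image (fun y => s(x, y))).card := h1
        _ ≤ ∑ _x ∈ S, 3 := Finset.sum_le_sum h2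
        _ = 3 * S.card := by rw [Finset.sum_const]; ring
        _ ≤ 6 := by omega
    have hsub : F ⊆ ↑T := by
      intro f hf
      obtain ⟨x, y, rfl, hxy, hux, hxv, hyu, hyv⟩ := hdecomp f hf
      have hxmem : x ∈ S := hxS x hux hxv
      refine Finset.mem_coe.mpr (Finset.mem_biUnion.mpr ⟨x, hxmem, Finset.mem_image.mpr
        ⟨y, Finset.mem_erase.mpr ⟨hyu, (G.mem_neighborFinset x y).mpr hxy⟩, rfl⟩⟩)
    calc F.ncard ≤ (↑T : Set (Sym2 V)).ncard := Set.ncard_le_ncard hsub (T.finite_toSet)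
      _ = T.card := Set.ncard_coe_finset T
      _ ≤ 6 := hTcard
end

section
/- Let G be a claw-free graph with maximum degree Δ(G) ≤ 4, let v be a vertex of G with degree d(v) ≤ 3, and suppose the graph G − v obtained by deleting v admits an injective 13-edge-coloring. Then G admits an injective 13-edge-coloring. -/
open SimpleGraph

open Finset

lemma sees_symm {V : Type} (G : SimpleGraph V) {e e' : Sym2 V} (h : Sees G e e') :
    Sees G e' e := by
  rcases h with ⟨hd, p, hp, q, hq, hadj⟩ | ⟨x, y, z, h1, h2, h3, ha, hb⟩
  · exact Or.inl ⟨fun y hy hye => hd y hye hy, q, hq, p, hp, hadj.symm⟩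
  · exact Or.inr ⟨x, y, z, h1, h2, h3, hb, ha⟩

lemma greedy {E : Type} [Fintype E] [DecidableEq E] {k : ℕ} (R : E → E → Prop)
    (hsym : ∀ e e', R e e' → R e' e) (hirr : ∀ e, ¬ R e e) :
    ∀ (S : Finset E) (φ : E → Fin (k+1)),
    (∀ e ∈ S, ∃ F : Finset E, F.card ≤ k ∧ ∀ e', R e e' → e' ∈ F) →
    (∀ e e', e ∉ S → e' ∉ S → R e e' → φ e ≠ φ e') →
    ∃ ψ : E → Fin (k+1), ∀ e e', R e e' → ψ e ≠ ψ e' := by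
  intro S
  induction S using Finset.strongInduction with
  | _ S ih =>
    intro φ hdeg hφ
    rcases S.eq_empty_or_nonempty with rfl | ⟨e, he⟩
    · exact ⟨φ, fun e e' h => hφ e e' (by simp) (by simp) h⟩
    · obtain ⟨F, hFcard, hF⟩ := hdeg e he
      have hne : ((F.image φ)ᶜ : Finset (Fin (k+1))).Nonempty := by
        rw [← Finset.card_pos, Finset.card_compl]
        have := Finset.card_image_le (s := F) (f := φ)
        have : (F.image φ).card ≤ k := le_trans this hFcard
        simp only [Fintype.card_fin]
        omega
      obtain ⟨c, hc⟩ := hne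
      rw [Finset.mem_compl] at hc
      refine ih (S.erase e) (Finset.erase_ssubset he) (Function.update φ e c)
        (fun e₁ h₁ => hdeg e₁ (Finset.mem_of_mem_erase h₁)) ?_
      intro e₁ e₂ h₁ h₂ hR
      by_cases he₁ : e₁ = e
      · by_cases he₂ : e₂ = e
        · exfalso; rw [he₁, he₂] at hR; exact hirr e hR
        · subst he₁
          rw [Function.update_self, Function.update_of_ne he₂]
          intro hc'
          exact hc (hc' ▸ Finset.mem_image_of_mem φ (hF e₂ hR))
      · by_cases he₂ : e₂ = e
        · subst he₂
          rw [Function.update_of_ne he₁, Function.update_self]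
          intro hc'
          exact hc (hc' ▸ Finset.mem_image_of_mem φ (hF e₁ (hsym _ _ hR)))
        · rw [Function.update_of_ne he₁, Function.update_of_ne he₂]
          exact hφ e₁ e₂ (fun hs => h₁ (Finset.mem_erase.mpr ⟨he₁, hs⟩))
            (fun hs => h₂ (Finset.mem_erase.mpr ⟨he₂, hs⟩)) hR

lemma claw_helper {V : Type} {G : SimpleGraph V} (hclaw : ClawFree G) {x v p q : V}
    (hxv : G.Adj x v) (hxp : G.Adj x p) (hxq : G.Adj x q)
    (hvp : ¬ G.Adj v p) (hvq : ¬ G.Adj v q) (hpq : ¬ G.Adj p q)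
    (hvp' : v ≠ p) (hvq' : v ≠ q) (hpq' : p ≠ q) : False := by
  let f : Fin 1 ⊕ Fin 3 → V := Sum.elim (fun _ => x) (![v, p, q])
  have hinj : Function.Injective f := by
    intro a b hab
    match a, b with
    | .inl a, .inl b => simp [Fin.eq_zero a, Fin.eq_zero b]
    | .inl a, .inr b =>
      exfalso; revert hab; fin_cases b <;>
        simp [f, Matrix.cons_val_zero, Matrix.cons_val_one] <;>
        [exact hxv.ne; exact hxp.ne; exact hxq.ne]
    | .inr a, .inl b =>
      exfalso; revert hab; fin_cases a <;>
        simp [f] <;> [exact hxv.ne'; exact hxp.ne'; exact hxq.ne']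
    | .inr a, .inr b =>
      revert hab; fin_cases a <;> fin_cases b <;>
        simp_all [f, hvp', hvq', hpq', hvp'.symm, hvq'.symm, hpq'.symm]
  have hrel : ∀ a b, G.Adj (f a) (f b) ↔ (completeBipartiteGraph (Fin 1) (Fin 3)).Adj a b := by
    intro a b
    match a, b with
    | .inl a, .inl b => simp [f, G.irrefl]
    | .inl a, .inr b =>
      fin_cases b <;> simp [f, hxv, hxp, hxq]
    | .inr a, .inl b =>
      fin_cases a <;> simp [f, hxv.symm, hxp.symm, hxq.symm]
    | .inr a, .inr b =>
      fin_cases a <;> fin_cases b <;>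
        simp_all [f, G.irrefl, hvp, hvq, hpq, fun h => hvp (G.adj_symm h),
          fun h => hvq (G.adj_symm h), fun h => hpq (G.adj_symm h)] <;>
        [exact fun h => hvp (G.adj_symm h); exact fun h => hvq (G.adj_symm h);
         exact fun h => hpq (G.adj_symm h)]
  exact hclaw.false ⟨⟨f, hinj⟩, hrel _ _⟩

lemma sees_lift {V : Type} (G : SimpleGraph V) (v : V)
    (a b : Sym2 ({v}ᶜ : Set V))
    (hab : Sym2.map Subtype.val a ≠ Sym2.map Subtype.val b)
    (h : Sees G (Sym2.map Subtype.val a) (Sym2.map Subtype.val b)) :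
    Sees (G.induce ({v}ᶜ : Set V)) a b := by
  have hinj : Function.Injective (Subtype.val : ({v}ᶜ : Set V) → V) := Subtype.val_injective
  rcases h with ⟨hd, p, hp, q, hq, hadj⟩ | ⟨x, y, z, h1, h2, h3, ha, hb⟩
  · obtain ⟨p', hp', rfl⟩ := Sym2.mem_map.mp hp
    obtain ⟨q', hq', rfl⟩ := Sym2.mem_map.mp hq
    refine Or.inl ⟨fun y hy hyb => hd _ (Sym2.mem_map.mpr ⟨y, hy, rfl⟩)
      (Sym2.mem_map.mpr ⟨y, hyb, rfl⟩), p', hp', q', hq', by simpa using hadj⟩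
  · -- every triangle vertex is in a or b
    have hcov : ∀ w ∈ ({x, y, z} : Set V),
        w ∈ Sym2.map Subtype.val a ∨ w ∈ Sym2.map Subtype.val b := by
      intro w hw
      rcases ha with ha | ha | ha <;> rcases hb with hb | hb | hb <;>
        first
          | (exact absurd (ha.trans hb.symm) hab)
          | (rcases hw with rfl | rfl | rfl <;>
              simp_all [Sym2.mem_iff, (G.ne_of_adj h1), (G.ne_of_adj h2), (G.ne_of_adj h3)])
    have hnv : ∀ w ∈ ({x, y, z} : Set V), w ≠ v := by
      intro w hw hwv
      rcases hcov w hw with hm | hm <;>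
      · obtain ⟨⟨u, hu⟩, _, h2⟩ := Sym2.mem_map.mp hm
        exact hu (show u ∈ ({v} : Set V) from Set.mem_singleton_iff.mpr ((show u = w from h2).trans hwv))
    have hx : x ∈ ({v}ᶜ : Set V) := by simpa using hnv x (by simp)
    have hy : y ∈ ({v}ᶜ : Set V) := by simpa using hnv y (by simp)
    have hz : z ∈ ({v}ᶜ : Set V) := by simpa using hnv z (by simp)
    refine Or.inr ⟨⟨x, hx⟩, ⟨y, hy⟩, ⟨z, hz⟩, by simpa using h1, by simpa using h2,
      by simpa using h3, ?_, ?_⟩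
    · rcases ha with ha | ha | ha
      · exact Or.inl (Sym2.map.injective hinj (by simpa using ha))
      · exact Or.inr (Or.inl (Sym2.map.injective hinj (by simpa using ha)))
      · exact Or.inr (Or.inr (Sym2.map.injective hinj (by simpa using ha)))
    · rcases hb with hb | hb | hb
      · exact Or.inl (Sym2.map.injective hinj (by simpa using hb))
      · exact Or.inr (Or.inl (Sym2.map.injective hinj (by simpa using hb)))
      · exact Or.inr (Or.inr (Sym2.map.injective hinj (by simpa using hb)))

lemma conf_bound {V : Type} [Fintype V] [DecidableEq V] (G : SimpleGraph V) [DecidableRel G.Adj]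
    (hclaw : ClawFree G) (hΔ : G.maxDegree ≤ 4) {v x : V} (hvx : G.Adj v x)
    (hdv : G.degree v ≤ 3) :
    ∃ F : Finset (Sym2 V), F.card ≤ 12 ∧
      ∀ s ∈ G.edgeSet, s ≠ s(v, x) → Sees G s(v, x) s → s ∈ F := by
  classical
  set A := G.neighborFinset v \ {x} with hA
  set B := G.neighborFinset x \ {v} with hB
  set K := A ∩ B with hK
  set W := A ∪ B with hW
  set C := B \ A with hC
  set Ew : V → Finset (Sym2 V) :=
    fun w => G.edgeFinset.filter (fun s => w ∈ s ∧ v ∉ s ∧ x ∉ s) with hEw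
  set D := W.biUnion Ew with hD
  set I := D.filter (fun s => ∀ y ∈ s, y ∈ W) with hI
  set Ts := K.image (fun w => s(x, w)) with hTs
  set Ns := K.image (fun w => s(v, w)) with hNs
  -- basic memberships
  have hAW : A ⊆ W := Finset.subset_union_left
  have hBW : B ⊆ W := Finset.subset_union_right
  have hmemA : ∀ w, w ∈ A ↔ (G.Adj v w ∧ w ≠ x) := by
    intro w; simp [hA, SimpleGraph.mem_neighborFinset]
  have hmemB : ∀ w, w ∈ B ↔ (G.Adj x w ∧ w ≠ v) := by
    intro w; simp [hB, SimpleGraph.mem_neighborFinset]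
  -- cardinal facts
  have hAcard : A.card ≤ 2 := by
    have h1 : A.card + ({x} : Finset V).card = (G.neighborFinset v).card := by
      rw [hA]
      exact Finset.card_sdiff_add_card_eq_card
        (Finset.singleton_subset_iff.mpr ((SimpleGraph.mem_neighborFinset _ _ _).mpr hvx))
    rw [G.card_neighborFinset_eq_degree] at h1
    simp at h1
    omega
  have hBcard : B.card ≤ 3 := by
    have h1 : B.card + ({v} : Finset V).card = (G.neighborFinset x).card := by
      rw [hB]
      exact Finset.card_sdiff_add_card_eq_card
        (Finset.singleton_subset_iff.mpr ((SimpleGraph.mem_neighborFinset _ _ _).mpr hvx.symm))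
    rw [G.card_neighborFinset_eq_degree] at h1
    have h2 : G.degree x ≤ 4 := le_trans (G.degree_le_maxDegree x) hΔ
    simp at h1
    omega
  have hWK : W.card + K.card = A.card + B.card := Finset.card_union_add_card_inter A B
  have hCK : C.card + K.card = B.card := by
    rw [hC, hK, Finset.inter_comm]
    exact Finset.card_sdiff_add_card_inter B A
  have hKA : K.card ≤ A.card := Finset.card_le_card Finset.inter_subset_left
  -- degree-based bound on Ew
  have hEwcard : ∀ w ∈ W,
      (Ew w).card + (if w ∈ A then 1 else 0) + (if w ∈ B then 1 else 0) ≤ 4 := by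
    intro w hw
    have hsub : Ew w ⊆ (G.neighborFinset w \ {v, x}).image (fun z => s(w, z)) := by
      intro e
      induction e using Sym2.ind with
      | _ p q =>
        intro he
        rw [hEw] at he
        simp only [Finset.mem_filter, SimpleGraph.mem_edgeFinset, SimpleGraph.mem_edgeSet] at he
        obtain ⟨hadj, hwm, hvm, hxm⟩ := he
        rw [Sym2.mem_iff] at hwm hvm hxm
        push_neg at hvm hxm
        rcases hwm with rfl | rfl
        · refine Finset.mem_image.mpr ⟨q, ?_, rfl⟩
          simp only [Finset.mem_sdiff, SimpleGraph.mem_neighborFinset, Finset.mem_insert,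
            Finset.mem_singleton]
          exact ⟨hadj, by push_neg; exact ⟨hvm.2.symm, hxm.2.symm⟩⟩
        · refine Finset.mem_image.mpr ⟨p, ?_, Sym2.eq_swap⟩
          simp only [Finset.mem_sdiff, SimpleGraph.mem_neighborFinset, Finset.mem_insert,
            Finset.mem_singleton]
          exact ⟨hadj.symm, by push_neg; exact ⟨hvm.1.symm, hxm.1.symm⟩⟩
    have h1 : (Ew w).card ≤ (G.neighborFinset w \ {v, x}).card :=
      le_trans (Finset.card_le_card hsub) Finset.card_image_le
    have h2 : (G.neighborFinset w \ {v, x}).card + (G.neighborFinset w ∩ {v, x}).card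
        = (G.neighborFinset w).card := Finset.card_sdiff_add_card_inter _ _
    have h3 : (G.neighborFinset w).card ≤ 4 := by
      rw [G.card_neighborFinset_eq_degree]
      exact le_trans (G.degree_le_maxDegree w) hΔ
    have h4 : (if w ∈ A then 1 else 0) + (if w ∈ B then 1 else 0)
        ≤ (G.neighborFinset w ∩ {v, x}).card := by
      have hvmem : w ∈ A → v ∈ G.neighborFinset w ∩ {v, x} := fun hwA =>
        Finset.mem_inter.mpr ⟨(SimpleGraph.mem_neighborFinset _ _ _).mpr
          ((hmemA w).mp hwA).1.symm, by simp⟩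
      have hxmem : w ∈ B → x ∈ G.neighborFinset w ∩ {v, x} := fun hwB =>
        Finset.mem_inter.mpr ⟨(SimpleGraph.mem_neighborFinset _ _ _).mpr
          ((hmemB w).mp hwB).1.symm, by simp⟩
      by_cases hwA : w ∈ A <;> by_cases hwB : w ∈ B <;> simp [hwA, hwB]
      · exact Finset.one_lt_card.mpr ⟨v, hvmem hwA, x, hxmem hwB, hvx.ne⟩
      · exact ⟨v, hvmem hwA⟩
      · exact ⟨x, hxmem hwB⟩
    omega
  -- double counting
  have hDI : D.card + I.card ≤ ∑ w ∈ W, (Ew w).card := by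
    have hEwD : ∀ w ∈ W, Ew w ⊆ D := fun w hw => Finset.subset_biUnion_of_mem Ew hw
    have step1 : ∀ w ∈ W, (Ew w).card = ∑ s ∈ D, (if s ∈ Ew w then 1 else 0) := by
      intro w hw
      rw [← Finset.card_filter]
      congr 1
      rw [Finset.filter_mem_eq_inter, Finset.inter_eq_right.mpr (hEwD w hw)]
    have step2 : ∑ w ∈ W, (Ew w).card = ∑ s ∈ D, (W.filter (fun w => s ∈ Ew w)).card := by
      rw [Finset.sum_congr rfl step1, Finset.sum_comm]
      exact Finset.sum_congr rfl fun s _ => (Finset.card_filter _ _).symm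
    rw [step2]
    have hIsubD : I ⊆ D := Finset.filter_subset _ _
    have h1 : ∀ s ∈ D, 1 ≤ (W.filter (fun w => s ∈ Ew w)).card := by
      intro s hs
      obtain ⟨w, hw, hsw⟩ := Finset.mem_biUnion.mp hs
      exact Finset.card_pos.mpr ⟨w, Finset.mem_filter.mpr ⟨hw, hsw⟩⟩
    have h2 : ∀ s ∈ I, 2 ≤ (W.filter (fun w => s ∈ Ew w)).card := by
      intro s hsI
      have hsD : s ∈ D := hIsubD hsI
      obtain ⟨w₀, hw₀, hsw₀⟩ := Finset.mem_biUnion.mp hsD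
      rw [hEw] at hsw₀
      simp only [Finset.mem_filter] at hsw₀
      obtain ⟨hedge, _, hvm, hxm⟩ := hsw₀
      have hallW : ∀ y ∈ s, y ∈ W := (Finset.mem_filter.mp hsI).2
      -- s has two distinct elements
      have : ∃ p q : V, p ≠ q ∧ s = s(p, q) := by
        induction s using Sym2.ind with
        | _ p q =>
          refine ⟨p, q, ?_, rfl⟩
          intro h
          rw [SimpleGraph.mem_edgeFinset] at hedge
          exact (G.mem_edgeSet.mp (h ▸ hedge)).ne rfl
      obtain ⟨p, q, hpq, rfl⟩ := this
      refine Finset.one_lt_card.mpr ⟨p, ?_, q, ?_, hpq⟩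
      · refine Finset.mem_filter.mpr ⟨hallW p (by simp), ?_⟩
        rw [hEw]
        exact Finset.mem_filter.mpr ⟨hedge, by simp, hvm, hxm⟩
      · refine Finset.mem_filter.mpr ⟨hallW q (by simp), ?_⟩
        rw [hEw]
        exact Finset.mem_filter.mpr ⟨hedge, by simp, hvm, hxm⟩
    calc D.card + I.card
        = (D \ I).card + I.card + I.card := by
          rw [Finset.card_sdiff_add_card_eq_card hIsubD]
      _ ≤ ∑ s ∈ D \ I, (W.filter (fun w => s ∈ Ew w)).card
          + ∑ s ∈ I, (W.filter (fun w => s ∈ Ew w)).card := by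
          have hb1 : (D \ I).card ≤ ∑ s ∈ D \ I, (W.filter (fun w => s ∈ Ew w)).card := by
            rw [Finset.card_eq_sum_ones]
            exact Finset.sum_le_sum fun s hs => h1 s (Finset.mem_sdiff.mp hs).1
          have hb2 : I.card + I.card ≤ ∑ s ∈ I, (W.filter (fun w => s ∈ Ew w)).card := by
            have : ∑ s ∈ I, 2 ≤ ∑ s ∈ I, (W.filter (fun w => s ∈ Ew w)).card :=
              Finset.sum_le_sum h2
            simp only [Finset.sum_const, smul_eq_mul] at this
            omega
          omega
      _ = ∑ s ∈ D, (W.filter (fun w => s ∈ Ew w)).card := Finset.sum_sdiff hIsubD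
  -- clique
  have hclique : ∀ p ∈ C, ∀ q ∈ C, p ≠ q → G.Adj p q := by
    intro p hp q hq hpq
    rw [hC, Finset.mem_sdiff] at hp hq
    obtain ⟨hpB, hpA⟩ := hp
    obtain ⟨hqB, hqA⟩ := hq
    rw [hmemB] at hpB hqB
    by_contra hadj
    refine claw_helper hclaw hvx.symm hpB.1 hqB.1 ?_ ?_ hadj hpB.2.symm hqB.2.symm hpq
    · intro hvp; exact hpA ((hmemA p).mpr ⟨hvp, hpB.1.ne'⟩)
    · intro hvq; exact hqA ((hmemA q).mpr ⟨hvq, hqB.1.ne'⟩)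
  have hedgeI : ∀ p ∈ C, ∀ q ∈ C, p ≠ q → s(p, q) ∈ I := by
    intro p hp q hq hpq
    have hadj := hclique p hp q hq hpq
    have hpB : p ∈ B := (Finset.mem_sdiff.mp hp).1
    have hqB : q ∈ B := (Finset.mem_sdiff.mp hq).1
    have hpW : p ∈ W := hBW hpB
    have hqW : q ∈ W := hBW hqB
    have hv_ne : v ∉ s(p, q) := by
      rw [Sym2.mem_iff]
      push_neg
      exact ⟨fun h => ((hmemB p).mp hpB).2 h.symm, fun h => ((hmemB q).mp hqB).2 h.symm⟩
    have hx_ne : x ∉ s(p, q) := by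
      rw [Sym2.mem_iff]
      push_neg
      exact ⟨fun h => ((hmemB p).mp hpB).1.ne h, fun h => ((hmemB q).mp hqB).1.ne h⟩
    have hD' : s(p, q) ∈ D := by
      rw [hD]
      refine Finset.mem_biUnion.mpr ⟨p, hpW, ?_⟩
      rw [hEw]
      simp only [Finset.mem_filter]
      exact ⟨SimpleGraph.mem_edgeFinset.mpr (G.mem_edgeSet.mpr hadj), by simp, hv_ne, hx_ne⟩
    rw [hI]
    refine Finset.mem_filter.mpr ⟨hD', ?_⟩
    intro y hy
    rcases Sym2.mem_iff.mp hy with rfl | rfl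
    · exact hpW
    · exact hqW
  have hI2 : 2 ≤ C.card → 1 ≤ I.card := by
    intro h
    obtain ⟨p, hp, q, hq, hpq⟩ := Finset.one_lt_card.mp h
    exact Finset.card_pos.mpr ⟨s(p, q), hedgeI p hp q hq hpq⟩
  have hI3 : 3 ≤ C.card → 3 ≤ I.card := by
    intro h
    obtain ⟨t, htC, ht3⟩ := Finset.exists_subset_card_eq h
    obtain ⟨p, q, r, hpq, hpr, hqr, rfl⟩ := Finset.card_eq_three.mp ht3
    have hp := htC (by simp : p ∈ ({p,q,r} : Finset V))
    have hq := htC (by simp : q ∈ ({p,q,r} : Finset V))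
    have hr := htC (by simp : r ∈ ({p,q,r} : Finset V))
    have hsub : ({s(p,q), s(p,r), s(q,r)} : Finset (Sym2 V)) ⊆ I := by
      intro e he
      simp only [Finset.mem_insert, Finset.mem_singleton] at he
      rcases he with rfl | rfl | rfl
      · exact hedgeI p hp q hq hpq
      · exact hedgeI p hp r hr hpr
      · exact hedgeI q hq r hr hqr
    have hcard3 : ({s(p,q), s(p,r), s(q,r)} : Finset (Sym2 V)).card = 3 := by
      rw [Finset.card_insert_of_notMem, Finset.card_insert_of_notMem, Finset.card_singleton]
      · simp [Sym2.eq_iff, hpq, hpr, hqr, hpq.symm, hpr.symm, hqr.symm]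
      · simp [Sym2.eq_iff, hpq, hpr, hqr, hpq.symm, hpr.symm, hqr.symm]
    calc 3 = ({s(p,q), s(p,r), s(q,r)} : Finset (Sym2 V)).card := hcard3.symm
    _ ≤ I.card := Finset.card_le_card hsub
  -- sum bound
  have hEsum : (∑ w ∈ W, (Ew w).card) + A.card + B.card ≤ 4 * W.card := by
    have hsumA2 : ∑ w ∈ W, (if w ∈ A then 1 else 0) = A.card := by
      rw [← Finset.card_filter, Finset.filter_mem_eq_inter, Finset.inter_eq_right.mpr hAW]
    have hsumB : ∑ w ∈ W, (if w ∈ B then 1 else 0) = B.card := by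
      rw [← Finset.card_filter, Finset.filter_mem_eq_inter, Finset.inter_eq_right.mpr hBW]
    calc (∑ w ∈ W, (Ew w).card) + A.card + B.card
        = ∑ w ∈ W, ((Ew w).card + (if w ∈ A then 1 else 0) + (if w ∈ B then 1 else 0)) := by
          rw [Finset.sum_add_distrib, Finset.sum_add_distrib, hsumA2, hsumB]
      _ ≤ ∑ w ∈ W, 4 := Finset.sum_le_sum hEwcard
      _ = 4 * W.card := by rw [Finset.sum_const, smul_eq_mul, Nat.mul_comm]
  refine ⟨Ts ∪ Ns ∪ D, ?_, ?_⟩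
  · -- cardinality
    have h1 : (Ts ∪ Ns ∪ D).card ≤ Ts.card + Ns.card + D.card :=
      le_trans (Finset.card_union_le _ _) (by
        have := Finset.card_union_le Ts Ns; omega)
    have h2 : Ts.card ≤ K.card := Finset.card_image_le
    have h3 : Ns.card ≤ K.card := Finset.card_image_le
    rcases Nat.lt_or_ge C.card 2 with hc | hc
    · omega
    rcases Nat.lt_or_ge C.card 3 with hc3 | hc3
    · have := hI2 hc; omega
    · have := hI3 hc3; omega
  · -- coverage
    intro s hs hne hsees
    have hmemTND : ∀ r : V, G.Adj v r → G.Adj x r →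
        (s = s(x, r) ∨ s = s(v, r)) → s ∈ Ts ∪ Ns ∪ D := by
      intro r hvr hxr hcase
      have hrK : r ∈ K := Finset.mem_inter.mpr
        ⟨(hmemA r).mpr ⟨hvr, hxr.ne'⟩, (hmemB r).mpr ⟨hxr, hvr.ne'⟩⟩
      rcases hcase with rfl | rfl
      · exact Finset.mem_union_left _ (Finset.mem_union_left _
          (Finset.mem_image.mpr ⟨r, hrK, rfl⟩))
      · exact Finset.mem_union_left _ (Finset.mem_union_right _
          (Finset.mem_image.mpr ⟨r, hrK, rfl⟩))
    rcases hsees with ⟨hd, p, hp, q, hq, hadj⟩ | ⟨a, b, c, h1, h2, h3, hm, hm'⟩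
    · -- distance two
      have hvs : v ∉ s := hd v (by simp)
      have hxs : x ∉ s := hd x (by simp)
      have hsE : s ∈ G.edgeFinset := SimpleGraph.mem_edgeFinset.mpr hs
      rcases Sym2.mem_iff.mp hp with rfl | rfl
      · -- p = v
        have hqA : q ∈ A := (hmemA q).mpr ⟨hadj, fun h => hxs (h ▸ hq)⟩
        refine Finset.mem_union_right _ (Finset.mem_biUnion.mpr ⟨q, hAW hqA, ?_⟩)
        rw [hEw]
        exact Finset.mem_filter.mpr ⟨hsE, hq, hvs, hxs⟩
      · -- p = x
        have hqB : q ∈ B := (hmemB q).mpr ⟨hadj, fun h => hvs (h ▸ hq)⟩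
        refine Finset.mem_union_right _ (Finset.mem_biUnion.mpr ⟨q, hBW hqB, ?_⟩)
        rw [hEw]
        exact Finset.mem_filter.mpr ⟨hsE, hq, hvs, hxs⟩
    · -- triangle
      simp only [Set.mem_insert_iff, Set.mem_singleton_iff] at hm hm'
      rcases hm with hm | hm | hm <;> rcases Sym2.eq_iff.mp hm.symm with ⟨rfl, rfl⟩ | ⟨rfl, rfl⟩
      · -- a = v, b = x, third c : Adj x c, Adj v c
        rcases hm' with rfl | rfl | rfl
        · exact absurd rfl hne
        · exact hmemTND c h3 h2 (Or.inl rfl)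
        · exact hmemTND c h3 h2 (Or.inr rfl)
      · -- a = x, b = v : h1 : Adj x v, h2 : Adj v c, h3 : Adj x c
        rcases hm' with rfl | rfl | rfl
        · exact absurd Sym2.eq_swap hne
        · exact hmemTND c h2 h3 (Or.inr rfl)
        · exact hmemTND c h2 h3 (Or.inl rfl)
      · -- b = v, c = x : h1 : Adj a v, h2 : Adj v x, h3 : Adj a x
        rcases hm' with rfl | rfl | rfl
        · exact hmemTND a h1.symm h3.symm (Or.inr Sym2.eq_swap)
        · exact absurd rfl hne
        · exact hmemTND a h1.symm h3.symm (Or.inl Sym2.eq_swap)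
      · -- b = x, c = v : h1 : Adj a x, h2 : Adj x v, h3 : Adj a v
        rcases hm' with rfl | rfl | rfl
        · exact hmemTND a h3.symm h1.symm (Or.inl Sym2.eq_swap)
        · exact absurd Sym2.eq_swap hne
        · exact hmemTND a h3.symm h1.symm (Or.inr Sym2.eq_swap)
      · -- a = v, c = x : h1 : Adj v b, h2 : Adj b x, h3 : Adj v x
        rcases hm' with rfl | rfl | rfl
        · exact hmemTND b h1 h2.symm (Or.inr rfl)
        · exact hmemTND b h1 h2.symm (Or.inl Sym2.eq_swap)
        · exact absurd rfl hne
      · -- a = x, c = v : h1 : Adj x b, h2 : Adj b v, h3 : Adj x v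
        rcases hm' with rfl | rfl | rfl
        · exact hmemTND b h2.symm h1 (Or.inl rfl)
        · exact hmemTND b h2.symm h1 (Or.inr Sym2.eq_swap)
        · exact absurd Sym2.eq_swap hne

theorem stmt_4 {V : Type} [Fintype V] (G : SimpleGraph V) [DecidableRel G.Adj]
    (hclaw : ClawFree G) (hΔ : G.maxDegree ≤ 4)
    (v : V) (hv : G.degree v ≤ 3)
    (h : HasInjColoring (G.induce ({v}ᶜ : Set V)) 13) :
    HasInjColoring G 13 := by
  classical
  obtain ⟨φ', hφ'⟩ := h
  have hπ : ∀ (e : G.edgeSet), v ∉ (e : Sym2 V) →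
      ∃ a : (G.induce ({v}ᶜ : Set V)).edgeSet,
        Sym2.map Subtype.val (a : Sym2 ({v}ᶜ : Set V)) = (e : Sym2 V) := by
    rintro ⟨e, he⟩
    induction e using Sym2.ind with
    | _ p q =>
      intro hv'
      rw [SimpleGraph.mem_edgeSet] at he
      rw [Sym2.mem_iff] at hv'
      push_neg at hv'
      have hp : p ∈ ({v}ᶜ : Set V) := by simp [hv'.1.symm]
      have hq : q ∈ ({v}ᶜ : Set V) := by simp [hv'.2.symm]
      refine ⟨⟨s(⟨p, hp⟩, ⟨q, hq⟩), ?_⟩, rfl⟩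
      rw [SimpleGraph.mem_edgeSet]
      simpa using he
  set R : G.edgeSet → G.edgeSet → Prop :=
    fun e e' => (e : Sym2 V) ≠ (e' : Sym2 V) ∧ Sees G e e' with hR
  have hsym : ∀ e e', R e e' → R e' e := fun e e' ⟨h1, h2⟩ => ⟨h1.symm, sees_symm G h2⟩
  have hirr : ∀ e, ¬ R e e := fun e he => he.1 rfl
  set φ₀ : G.edgeSet → Fin 13 :=
    fun e => if h : v ∈ (e : Sym2 V) then 0 else φ' (Classical.choose (hπ e h)) with hφ₀
  set S : Finset G.edgeSet := Finset.univ.filter (fun e => v ∈ (e : Sym2 V)) with hS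
  have hdeg : ∀ e ∈ S, ∃ F : Finset G.edgeSet, F.card ≤ 12 ∧ ∀ e', R e e' → e' ∈ F := by
    intro e heS
    have hve : v ∈ (e : Sym2 V) := (Finset.mem_filter.mp heS).2
    obtain ⟨x, hx⟩ := Sym2.mem_iff_exists.mp hve
    have hvx : G.Adj v x := by
      have := e.2
      rw [hx, SimpleGraph.mem_edgeSet] at this
      exact this
    obtain ⟨F, hF12, hFcov⟩ := conf_bound G hclaw hΔ hvx hv
    refine ⟨Finset.univ.filter (fun e' => (e' : Sym2 V) ∈ F), ?_, ?_⟩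
    · refine le_trans (Finset.card_le_card_of_injOn (fun e' => (e' : Sym2 V)) ?_ ?_) hF12
      · intro a ha
        exact (Finset.mem_filter.mp ha).2
      · intro a _ b _ hab
        exact Subtype.ext hab
    · intro e' hRe
      refine Finset.mem_filter.mpr ⟨Finset.mem_univ _, ?_⟩
      refine hFcov (e' : Sym2 V) e'.2 ?_ ?_
      · rw [← hx]; exact hRe.1.symm
      · rw [← hx]; exact hRe.2
  have hφ₀S : ∀ e e', e ∉ S → e' ∉ S → R e e' → φ₀ e ≠ φ₀ e' := by
    intro e₁ e₂ h₁ h₂ hRe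
    have hv₁ : v ∉ (e₁ : Sym2 V) := by
      intro hc; exact h₁ (Finset.mem_filter.mpr ⟨Finset.mem_univ _, hc⟩)
    have hv₂ : v ∉ (e₂ : Sym2 V) := by
      intro hc; exact h₂ (Finset.mem_filter.mpr ⟨Finset.mem_univ _, hc⟩)
    rw [hφ₀]
    simp only [dif_neg hv₁, dif_neg hv₂]
    set a₁ := Classical.choose (hπ e₁ hv₁) with ha₁
    set a₂ := Classical.choose (hπ e₂ hv₂) with ha₂
    have spec₁ := Classical.choose_spec (hπ e₁ hv₁)
    have spec₂ := Classical.choose_spec (hπ e₂ hv₂)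
    refine hφ' a₁ a₂ ?_ ?_
    · intro heq
      exact hRe.1 (by rw [← spec₁, ← spec₂, heq])
    · refine sees_lift G v a₁ a₂ ?_ ?_
      · rw [spec₁, spec₂]; exact hRe.1
      · rw [spec₁, spec₂]; exact hRe.2
  obtain ⟨ψ, hψ⟩ := greedy (k := 12) R hsym hirr S φ₀ hdeg hφ₀S
  exact ⟨ψ, fun e e' hne hsee => hψ e e' ⟨hne, hsee⟩⟩
end

section
/- Let G be a claw-free graph with maximum degree Δ(G) ≤ 4 such that χ'_inj(G) > 13, and suppose every claw-free graph H with Δ(H) ≤ 4 and |V(H)| < |V(G)| satisfies χ'_inj(H) ≤ 13. Then every vertex of G has degree exactly 4, i.e., the minimum degree δ(G) = 4. -/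
open SimpleGraph

section Aux

lemma Sees.symm' {V : Type} {G : SimpleGraph V} {e e' : Sym2 V} (h : Sees G e e') :
    Sees G e' e := by
  rcases h with ⟨hd, x, hx, y, hy, hxy⟩ | ⟨x, y, z, h1, h2, h3, he, he'⟩
  · exact Or.inl ⟨fun a ha hae => hd a hae ha, y, hy, x, hx, hxy.symm⟩
  · exact Or.inr ⟨x, y, z, h1, h2, h3, he', he⟩

lemma clawfree_adj {V : Type} {G : SimpleGraph V} (h : ClawFree G) {c x y z : V}
    (hx : G.Adj c x) (hy : G.Adj c y) (hz : G.Adj c z)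
    (hxy : x ≠ y) (hxz : x ≠ z) (hyz : y ≠ z)
    (nxy : ¬ G.Adj x y) (nxz : ¬ G.Adj x z) (nyz : ¬ G.Adj y z) : False := by
  apply h.false
  refine ⟨⟨Sum.elim (fun _ => c) ![x, y, z], ?_⟩, ?_⟩
  · rintro (a | a) (b | b) hab
    · simp [Fin.eq_zero a, Fin.eq_zero b]
    · exfalso
      simp only [Sum.elim_inl, Sum.elim_inr] at hab
      fin_cases b <;> simp_all <;> exact G.irrefl (hab ▸ hx) <;> skip
    · exfalso
      simp only [Sum.elim_inl, Sum.elim_inr] at hab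
      fin_cases a <;> simp_all
    · simp only [Sum.elim_inr] at hab
      congr 1
      fin_cases a <;> fin_cases b <;> simp_all
  · rintro (a | a) (b | b)
    · simp [completeBipartiteGraph_adj, DFunLike.coe]
    · fin_cases b <;> simp [completeBipartiteGraph_adj, DFunLike.coe, hx, hy, hz]
    · fin_cases a <;> simp [completeBipartiteGraph_adj, DFunLike.coe, hx.symm, hy.symm, hz.symm]
    · fin_cases a <;> fin_cases b <;>
        simp [completeBipartiteGraph_adj, DFunLike.coe, nxy, nxz, nyz,
          fun h => nxy (G.adj_symm h), fun h => nxz (G.adj_symm h), fun h => nyz (G.adj_symm h)] <;>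
        first
        | exact fun h => nxy (G.adj_symm h)
        | exact fun h => nxz (G.adj_symm h)
        | exact fun h => nyz (G.adj_symm h)

lemma hasInjColoring_mono {V : Type} {G : SimpleGraph V} {k m : ℕ}
    (h : HasInjColoring G k) (hkm : k ≤ m) : HasInjColoring G m := by
  obtain ⟨φ, hφ⟩ := h
  exact ⟨fun e => Fin.castLE hkm (φ e), fun e e' hne hs hEq =>
    hφ e e' hne hs (Fin.castLE_injective hkm hEq)⟩

lemma hasInjColoring_exists {V : Type} [Finite V] (G : SimpleGraph V) :
    ∃ k, HasInjColoring G k := by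
  classical
  have : Finite G.edgeSet := Subtype.finite
  letI := Fintype.ofFinite G.edgeSet
  refine ⟨Fintype.card G.edgeSet, Fintype.equivFin G.edgeSet, fun e e' hne _ hEq => ?_⟩
  exact hne (congrArg _ ((Fintype.equivFin G.edgeSet).injective hEq))

lemma hasInjColoring_13 {V : Type} [Finite V] {G : SimpleGraph V}
    (h : injChromIndex G ≤ 13) : HasInjColoring G 13 := by
  obtain ⟨k, hk⟩ := hasInjColoring_exists G
  have hne : {k | HasInjColoring G k}.Nonempty := ⟨k, hk⟩
  exact hasInjColoring_mono (Nat.sInf_mem hne) h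

open scoped Classical in
noncomputable def inc2 {V : Type} [Fintype V] (G : SimpleGraph V) (u v x : V) :
    Finset (Sym2 V) :=
  (G.incidenceFinset x).filter (fun f => u ∉ f ∧ v ∉ f)

open scoped Classical in
lemma mem_inc2 {V : Type} [Fintype V] {G : SimpleGraph V} {u v x : V} {f : Sym2 V} :
    f ∈ inc2 G u v x ↔ (f ∈ G.edgeSet ∧ x ∈ f) ∧ u ∉ f ∧ v ∉ f := by
  simp [inc2, mem_incidenceFinset, incidenceSet]

lemma inc2_card_le_one {V : Type} [Fintype V] {G : SimpleGraph V} [DecidableRel G.Adj] {u v x : V}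
    (hΔ : G.maxDegree ≤ 4) (hxu : G.Adj x u) :
    (inc2 G u v x).card ≤ 3 := by
  classical
  have hsub : inc2 G u v x ⊆ G.incidenceFinset x \ {s(x,u)} := by
    intro f hf
    rw [mem_inc2] at hf
    simp only [Finset.mem_sdiff, Finset.mem_singleton]
    refine ⟨by rw [mem_incidenceFinset]; exact ⟨hf.1.1, hf.1.2⟩, ?_⟩
    rintro rfl
    exact hf.2.1 (by simp)
  have h1 : ({s(x,u)} : Finset (Sym2 V)) ⊆ G.incidenceFinset x := by
    simp only [Finset.singleton_subset_iff, mem_incidenceFinset]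
    exact ⟨hxu, by simp⟩
  have := Finset.card_le_card hsub
  rw [Finset.card_sdiff_of_subset h1, card_incidenceFinset_eq_degree] at this
  have hd : G.degree x ≤ 4 := (G.degree_le_maxDegree x).trans hΔ
  simp only [Finset.card_singleton] at this
  omega

lemma inc2_card_le_two {V : Type} [Fintype V] {G : SimpleGraph V} [DecidableRel G.Adj] {u v x : V}
    (hΔ : G.maxDegree ≤ 4) (hxu : G.Adj x u) (hxv : G.Adj x v)
    (huv : u ≠ v) :
    (inc2 G u v x).card ≤ 2 := by
  classical
  have hsub : inc2 G u v x ⊆ G.incidenceFinset x \ {s(x,u), s(x,v)} := by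
    intro f hf
    rw [mem_inc2] at hf
    simp only [Finset.mem_sdiff, Finset.mem_insert, Finset.mem_singleton]
    refine ⟨by rw [mem_incidenceFinset]; exact ⟨hf.1.1, hf.1.2⟩, ?_⟩
    rintro (rfl | rfl)
    · exact hf.2.1 (by simp)
    · exact hf.2.2 (by simp)
  have h1 : ({s(x,u), s(x,v)} : Finset (Sym2 V)) ⊆ G.incidenceFinset x := by
    intro f hf
    simp only [Finset.mem_insert, Finset.mem_singleton] at hf
    rcases hf with rfl | rfl <;> rw [mem_incidenceFinset]
    · exact ⟨hxu, by simp⟩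
    · exact ⟨hxv, by simp⟩
  have hcard2 : ({s(x,u), s(x,v)} : Finset (Sym2 V)).card = 2 := by
    rw [Finset.card_insert_of_notMem, Finset.card_singleton]
    simp only [Finset.mem_singleton, Sym2.eq_iff]
    rintro (⟨-, h⟩ | ⟨h1, h2⟩)
    · exact huv h
    · exact G.irrefl (h1 ▸ hxv)
  have := Finset.card_le_card hsub
  rw [Finset.card_sdiff_of_subset h1, card_incidenceFinset_eq_degree, hcard2] at this
  have hd : G.degree x ≤ 4 := (G.degree_le_maxDegree x).trans hΔ
  omega

lemma card_union_succ_le {α : Type*} [DecidableEq α] {X Y : Finset α} {a : α}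
    (hX : a ∈ X) (hY : a ∈ Y) : (X ∪ Y).card + 1 ≤ X.card + Y.card := by
  have h1 := Finset.card_union_add_card_inter X Y
  have h2 : 0 < (X ∩ Y).card :=
    Finset.card_pos.mpr ⟨a, Finset.mem_inter.mpr ⟨hX, hY⟩⟩
  omega

lemma clique_bound {V : Type} [DecidableEq V] (S : Finset V) (E : V → Finset (Sym2 V))
    (hS : S.card ≤ 3) (hE : ∀ x ∈ S, (E x).card ≤ 3)
    (hpair : ∀ x ∈ S, ∀ y ∈ S, x ≠ y → ((E x) ∩ (E y)).Nonempty) :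
    (S.biUnion E).card ≤ 2 * S.card + 1 := by
  interval_cases h : S.card
  · rw [Finset.card_eq_zero] at h; subst h; simp
  · obtain ⟨a, rfl⟩ := Finset.card_eq_one.mp h
    simpa using hE a (by simp)
  · obtain ⟨a, b, hab, rfl⟩ := Finset.card_eq_two.mp h
    have ha : a ∈ ({a, b} : Finset V) := by simp
    have hb : b ∈ ({a, b} : Finset V) := by simp
    obtain ⟨s, hs⟩ := hpair a ha b hb hab
    rw [Finset.mem_inter] at hs
    have : ({a, b} : Finset V).biUnion E = E a ∪ E b := by
      simp [Finset.biUnion_insert]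
    rw [this]
    have := card_union_succ_le hs.1 hs.2
    have h3 := hE a ha; have h4 := hE b hb
    omega
  · obtain ⟨a, b, c, hab, hac, hbc, rfl⟩ := Finset.card_eq_three.mp h
    have ha : a ∈ ({a, b, c} : Finset V) := by simp
    have hb : b ∈ ({a, b, c} : Finset V) := by simp
    have hc : c ∈ ({a, b, c} : Finset V) := by simp
    obtain ⟨s, hs⟩ := hpair a ha b hb hab
    obtain ⟨s', hs'⟩ := hpair a ha c hc hac
    rw [Finset.mem_inter] at hs hs'
    have hrw : ({a, b, c} : Finset V).biUnion E = (E a ∪ E b) ∪ E c := by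
      simp [Finset.biUnion_insert, Finset.union_assoc]
    rw [hrw]
    have h1 := card_union_succ_le hs.1 hs.2
    have h2 := card_union_succ_le (Finset.mem_union_left (E b) hs'.1) hs'.2
    have h3 := hE a ha; have h4 := hE b hb; have h5 := hE c hc
    omega

lemma tri_struct {V : Type} {G : SimpleGraph V} {v u x y z : V}
    (h1 : G.Adj x y) (h2 : G.Adj y z) (h3 : G.Adj x z)
    (he : s(v,u) ∈ ({s(x,y), s(y,z), s(x,z)} : Set (Sym2 V))) :
    ∃ w, G.Adj u w ∧ G.Adj v w ∧
      ({s(x,y), s(y,z), s(x,z)} : Set (Sym2 V)) ⊆ {s(v,u), s(u,w), s(v,w)} := by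
  simp only [Set.mem_insert_iff, Set.mem_singleton_iff, Sym2.eq_iff] at he
  have sub : ∀ w : V, ({s(v,u), s(u,w), s(v,w)} : Set (Sym2 V)) ⊆
      {s(v,u), s(u,w), s(v,w)} := fun w => Set.Subset.rfl
  rcases he with (⟨rfl, rfl⟩ | ⟨rfl, rfl⟩) | (⟨rfl, rfl⟩ | ⟨rfl, rfl⟩) | (⟨rfl, rfl⟩ | ⟨rfl, rfl⟩)
  · refine ⟨z, h2, h3, ?_⟩
    intro s hs
    simp only [Set.mem_insert_iff, Set.mem_singleton_iff] at hs ⊢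
    rcases hs with rfl | rfl | rfl <;> simp [Sym2.eq_iff]
  · refine ⟨z, h3, h2, ?_⟩
    intro s hs
    simp only [Set.mem_insert_iff, Set.mem_singleton_iff] at hs ⊢
    rcases hs with rfl | rfl | rfl <;> simp [Sym2.eq_iff]
  · refine ⟨x, h3.symm, h1.symm, ?_⟩
    intro s hs
    simp only [Set.mem_insert_iff, Set.mem_singleton_iff] at hs ⊢
    rcases hs with rfl | rfl | rfl <;> simp [Sym2.eq_iff]
  · refine ⟨x, h1.symm, h3.symm, ?_⟩
    intro s hs
    simp only [Set.mem_insert_iff, Set.mem_singleton_iff] at hs ⊢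
    rcases hs with rfl | rfl | rfl <;> simp [Sym2.eq_iff]
  · refine ⟨y, h2.symm, h1, ?_⟩
    intro s hs
    simp only [Set.mem_insert_iff, Set.mem_singleton_iff] at hs ⊢
    rcases hs with rfl | rfl | rfl <;> simp [Sym2.eq_iff]
  · refine ⟨y, h1, h2.symm, ?_⟩
    intro s hs
    simp only [Set.mem_insert_iff, Set.mem_singleton_iff] at hs ⊢
    rcases hs with rfl | rfl | rfl <;> simp [Sym2.eq_iff]

lemma inc2_card_le_one' {V : Type} [Fintype V] {G : SimpleGraph V} [DecidableRel G.Adj] {u v x : V}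
    (hΔ : G.maxDegree ≤ 4) (hxv : G.Adj x v) :
    (inc2 G u v x).card ≤ 3 := by
  classical
  have hsub : inc2 G u v x ⊆ G.incidenceFinset x \ {s(x,v)} := by
    intro f hf
    rw [mem_inc2] at hf
    simp only [Finset.mem_sdiff, Finset.mem_singleton]
    refine ⟨by rw [mem_incidenceFinset]; exact ⟨hf.1.1, hf.1.2⟩, ?_⟩
    rintro rfl
    exact hf.2.2 (by simp)
  have h1 : ({s(x,v)} : Finset (Sym2 V)) ⊆ G.incidenceFinset x := by
    simp only [Finset.singleton_subset_iff, mem_incidenceFinset]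
    exact ⟨hxv, by simp⟩
  have := Finset.card_le_card hsub
  rw [Finset.card_sdiff_of_subset h1, card_incidenceFinset_eq_degree] at this
  have hd : G.degree x ≤ 4 := (G.degree_le_maxDegree x).trans hΔ
  simp only [Finset.card_singleton] at this
  omega

open scoped Classical in
noncomputable def conflicts {V : Type} [Fintype V] (G : SimpleGraph V) (v u : V) :
    Finset (Sym2 V) :=
  G.edgeFinset.filter (fun f => f ≠ s(v,u) ∧ Sees G s(v,u) f)

open scoped Classical in
lemma mem_conflicts {V : Type} [Fintype V] {G : SimpleGraph V} {v u : V} {f : Sym2 V} :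
    f ∈ conflicts G v u ↔ f ∈ G.edgeSet ∧ f ≠ s(v,u) ∧ Sees G s(v,u) f := by
  simp [conflicts, mem_edgeFinset]

lemma conflicts_card_le {V : Type} [Fintype V] {G : SimpleGraph V} [DecidableRel G.Adj]
    (hclaw : ClawFree G) (hΔ : G.maxDegree ≤ 4) {v u : V} (hadj : G.Adj v u)
    (hdeg : G.degree v ≤ 3) : (conflicts G v u).card ≤ 12 := by
  classical
  set A := (G.neighborFinset u).erase v with hAdef
  set B := (G.neighborFinset v).erase u with hBdef
  have hmemA : ∀ x, x ∈ A ↔ x ≠ v ∧ G.Adj u x := by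
    intro x; simp [hAdef, mem_neighborFinset]
  have hmemB : ∀ x, x ∈ B ↔ x ≠ u ∧ G.Adj v x := by
    intro x; simp [hBdef, mem_neighborFinset]
  have hAcard : A.card ≤ 3 := by
    rw [hAdef, Finset.card_erase_of_mem (by simp [mem_neighborFinset, hadj.symm])]
    have h4 : G.degree u ≤ 4 := (G.degree_le_maxDegree u).trans hΔ
    have : (G.neighborFinset u).card = G.degree u := rfl
    omega
  have hBcard : B.card ≤ 2 := by
    rw [hBdef, Finset.card_erase_of_mem (by simp [mem_neighborFinset, hadj])]
    have : (G.neighborFinset v).card = G.degree v := rfl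
    omega
  set E := fun x => inc2 G u v x with hEdef
  set T := (A ∩ B).biUnion (fun w => ({s(u,w), s(v,w)} : Finset (Sym2 V))) with hTdef
  have hplace : ∀ y f, (y ∈ A ∨ y ∈ B) → f ∈ E y →
      f ∈ (A ∩ B).biUnion E ∪ ((A \ B).biUnion E ∪ (B \ A).biUnion E) := by
    intro y f hy hfE
    by_cases hyA : y ∈ A
    · by_cases hyB : y ∈ B
      · exact Finset.mem_union_left _
          (Finset.mem_biUnion.mpr ⟨y, Finset.mem_inter.mpr ⟨hyA, hyB⟩, hfE⟩)
      · exact Finset.mem_union_right _ (Finset.mem_union_left _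
          (Finset.mem_biUnion.mpr ⟨y, Finset.mem_sdiff.mpr ⟨hyA, hyB⟩, hfE⟩))
    · have hyB : y ∈ B := hy.resolve_left hyA
      exact Finset.mem_union_right _ (Finset.mem_union_right _
        (Finset.mem_biUnion.mpr ⟨y, Finset.mem_sdiff.mpr ⟨hyB, hyA⟩, hfE⟩))
  have hcover : conflicts G v u ⊆
      T ∪ ((A ∩ B).biUnion E ∪ ((A \ B).biUnion E ∪ (B \ A).biUnion E)) := by
    intro f hf
    rw [mem_conflicts] at hf
    obtain ⟨hfE, hne, hsees⟩ := hf
    rcases hsees with ⟨hd, x, hx, yy, hy, hxy⟩ | ⟨x, y, z, h1, h2, h3, he, hf3⟩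
    · have hu : u ∉ f := hd u (by simp)
      have hv : v ∉ f := hd v (by simp)
      rw [Sym2.mem_iff] at hx
      have hfEy : f ∈ E yy := by
        rw [hEdef, mem_inc2]
        exact ⟨⟨hfE, hy⟩, hu, hv⟩
      refine Finset.mem_union_right _ (hplace yy f ?_ hfEy)
      rcases hx with rfl | rfl
      · exact Or.inr ((hmemB yy).mpr ⟨fun h => hu (h ▸ hy), hxy⟩)
      · exact Or.inl ((hmemA yy).mpr ⟨fun h => hv (h ▸ hy), hxy⟩)
    · obtain ⟨w, huw, hvw, hsub⟩ := tri_struct h1 h2 h3 he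
      have hw : w ∈ A ∩ B := Finset.mem_inter.mpr
        ⟨(hmemA w).mpr ⟨hvw.ne', huw⟩, (hmemB w).mpr ⟨huw.ne', hvw⟩⟩
      have hf4 := hsub hf3
      simp only [Set.mem_insert_iff, Set.mem_singleton_iff] at hf4
      rcases hf4 with rfl | rfl | rfl
      · exact absurd rfl hne
      · exact Finset.mem_union_left _ (Finset.mem_biUnion.mpr ⟨w, hw, by simp⟩)
      · exact Finset.mem_union_left _ (Finset.mem_biUnion.mpr ⟨w, hw, by simp⟩)
  have h0 := Finset.card_le_card hcover
  have hT2 : T.card ≤ 2 * (A ∩ B).card := by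
    rw [hTdef]
    calc ((A ∩ B).biUnion fun w => ({s(u,w), s(v,w)} : Finset (Sym2 V))).card
        ≤ ∑ w ∈ A ∩ B, ({s(u,w), s(v,w)} : Finset (Sym2 V)).card :=
          Finset.card_biUnion_le
      _ ≤ ∑ _w ∈ A ∩ B, 2 := Finset.sum_le_sum
          (fun w _ => (Finset.card_insert_le _ _).trans (by simp))
      _ = 2 * (A ∩ B).card := by rw [Finset.sum_const, smul_eq_mul, mul_comm]
  have hI : ((A ∩ B).biUnion E).card ≤ 2 * (A ∩ B).card := by
    calc ((A ∩ B).biUnion E).card ≤ ∑ w ∈ A ∩ B, (E w).card := Finset.card_biUnion_le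
      _ ≤ ∑ _w ∈ A ∩ B, 2 := Finset.sum_le_sum (fun w hw => by
          rw [Finset.mem_inter] at hw
          exact inc2_card_le_two hΔ ((hmemA w).mp hw.1).2.symm
            ((hmemB w).mp hw.2).2.symm hadj.ne')
      _ = 2 * (A ∩ B).card := by rw [Finset.sum_const, smul_eq_mul, mul_comm]
  have hAB : ((A \ B).biUnion E).card ≤ 2 * (A \ B).card + 1 := by
    refine clique_bound _ E ((Finset.card_le_card (Finset.sdiff_subset)).trans hAcard)
      (fun x hx => inc2_card_le_one hΔ
        ((hmemA x).mp (Finset.mem_sdiff.mp hx).1).2.symm) ?_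
    intro x hx y hy hxy
    rw [Finset.mem_sdiff] at hx hy
    obtain ⟨hxA, hxB⟩ := hx
    obtain ⟨hyA, hyB⟩ := hy
    have hux : G.Adj u x := ((hmemA x).mp hxA).2
    have huy : G.Adj u y := ((hmemA y).mp hyA).2
    have hxy' : G.Adj x y := by
      by_contra hnadj
      refine clawfree_adj hclaw hadj.symm hux huy ?_ ?_ hxy ?_ ?_ hnadj
      · exact fun h => ((hmemA x).mp hxA).1 h.symm
      · exact fun h => ((hmemA y).mp hyA).1 h.symm
      · exact fun h => hxB ((hmemB x).mpr ⟨hux.ne', h⟩)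
      · exact fun h => hyB ((hmemB y).mpr ⟨huy.ne', h⟩)
    refine ⟨s(x,y), Finset.mem_inter.mpr ⟨?_, ?_⟩⟩ <;> rw [hEdef, mem_inc2]
    · exact ⟨⟨hxy', by simp⟩, by simp [Sym2.mem_iff]; exact ⟨hux.ne, huy.ne⟩,
        by simp [Sym2.mem_iff]; exact ⟨fun h => ((hmemA x).mp hxA).1 h.symm,
          fun h => ((hmemA y).mp hyA).1 h.symm⟩⟩
    · exact ⟨⟨hxy', by simp⟩, by simp [Sym2.mem_iff]; exact ⟨hux.ne, huy.ne⟩,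
        by simp [Sym2.mem_iff]; exact ⟨fun h => ((hmemA x).mp hxA).1 h.symm,
          fun h => ((hmemA y).mp hyA).1 h.symm⟩⟩
  have hBA : ((B \ A).biUnion E).card ≤ 2 * (B \ A).card + 1 := by
    refine clique_bound _ E ((Finset.card_le_card (Finset.sdiff_subset)).trans
      (hBcard.trans (by norm_num)))
      (fun x hx => inc2_card_le_one' hΔ
        ((hmemB x).mp (Finset.mem_sdiff.mp hx).1).2.symm) ?_
    intro x hx y hy hxy
    rw [Finset.mem_sdiff] at hx hy
    obtain ⟨hxB, hxA⟩ := hx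
    obtain ⟨hyB, hyA⟩ := hy
    have hvx : G.Adj v x := ((hmemB x).mp hxB).2
    have hvy : G.Adj v y := ((hmemB y).mp hyB).2
    have hxy' : G.Adj x y := by
      by_contra hnadj
      refine clawfree_adj hclaw hadj hvx hvy ?_ ?_ hxy ?_ ?_ hnadj
      · exact fun h => ((hmemB x).mp hxB).1 h.symm
      · exact fun h => ((hmemB y).mp hyB).1 h.symm
      · exact fun h => hxA ((hmemA x).mpr ⟨hvx.ne', h⟩)
      · exact fun h => hyA ((hmemA y).mpr ⟨hvy.ne', h⟩)
    refine ⟨s(x,y), Finset.mem_inter.mpr ⟨?_, ?_⟩⟩ <;> rw [hEdef, mem_inc2]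
    · exact ⟨⟨hxy', by simp⟩, by simp [Sym2.mem_iff]; exact ⟨fun h => ((hmemB x).mp hxB).1 h.symm,
          fun h => ((hmemB y).mp hyB).1 h.symm⟩,
        by simp [Sym2.mem_iff]; exact ⟨hvx.ne, hvy.ne⟩⟩
    · exact ⟨⟨hxy', by simp⟩, by simp [Sym2.mem_iff]; exact ⟨fun h => ((hmemB x).mp hxB).1 h.symm,
          fun h => ((hmemB y).mp hyB).1 h.symm⟩,
        by simp [Sym2.mem_iff]; exact ⟨hvx.ne, hvy.ne⟩⟩
  have e1 : (A ∩ B).card + (A \ B).card = A.card := Finset.card_inter_add_card_sdiff A B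
  have e2 : (B ∩ A).card + (B \ A).card = B.card := Finset.card_inter_add_card_sdiff B A
  have e3 : (A ∩ B).card = (B ∩ A).card := by rw [Finset.inter_comm]
  have c1 := Finset.card_union_le T
    ((A ∩ B).biUnion E ∪ ((A \ B).biUnion E ∪ (B \ A).biUnion E))
  have c2 := Finset.card_union_le ((A ∩ B).biUnion E)
    ((A \ B).biUnion E ∪ (B \ A).biUnion E)
  have c3 := Finset.card_union_le ((A \ B).biUnion E) ((B \ A).biUnion E)
  omega

lemma conflicts_symm {V : Type} [Fintype V] {G : SimpleGraph V} {v u u' : V}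
    (hu : G.Adj v u) (hu' : G.Adj v u') (hne : u ≠ u')
    (h : s(v,u') ∈ conflicts G v u) : s(v,u) ∈ conflicts G v u' := by
  rw [mem_conflicts] at h ⊢
  refine ⟨hu, ?_, Sees.symm' h.2.2⟩
  intro hEq
  rw [Sym2.eq_iff] at hEq
  rcases hEq with ⟨-, h1⟩ | ⟨h1, h2⟩
  · exact hne h1
  · exact hu'.ne' h1.symm

lemma greedy_s5 {V : Type} [Fintype V] {G : SimpleGraph V} [DecidableRel G.Adj] {v : V}
    (φold : Sym2 V → Fin 13)
    (hcard : ∀ u ∈ G.neighborFinset v, (conflicts G v u).card ≤ 12) :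
    ∀ S ⊆ G.neighborFinset v, ∃ c : V → Fin 13,
      (∀ u ∈ S, ∀ f ∈ conflicts G v u, v ∉ f → c u ≠ φold f) ∧
      (∀ u ∈ S, ∀ u' ∈ S, u ≠ u' → s(v,u') ∈ conflicts G v u → c u ≠ c u') := by
  classical
  intro S
  induction S using Finset.induction_on with
  | empty => intro _; exact ⟨fun _ => 0, by simp, by simp⟩
  | @insert a S₀ ha ih =>
    intro hS
    have hS₀ : S₀ ⊆ G.neighborFinset v :=
      (Finset.subset_insert a S₀).trans hS
    obtain ⟨c, hc1, hc2⟩ := ih hS₀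
    have haN : a ∈ G.neighborFinset v := hS (Finset.mem_insert_self a S₀)
    have hav : G.Adj v a := (mem_neighborFinset G v a).mp haN
    set forb : Finset (Fin 13) :=
      ((conflicts G v a).filter (fun f => v ∉ f)).image φold ∪
      (S₀.filter (fun u' => s(v,u') ∈ conflicts G v a)).image c with hforb
    have hforbcard : forb.card < 13 := by
      have k1 : (((conflicts G v a).filter (fun f => v ∉ f)).image φold).card ≤
          ((conflicts G v a).filter (fun f => v ∉ f)).card := Finset.card_image_le
      have k2 : ((S₀.filter (fun u' => s(v,u') ∈ conflicts G v a)).image c).card ≤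
          ((conflicts G v a).filter (fun f => v ∈ f)).card := by
        refine Finset.card_image_le.trans
          (Finset.card_le_card_of_injOn (fun u' => s(v,u')) ?_ ?_)
        · intro u' hu'
          rw [Finset.mem_coe, Finset.mem_filter] at hu' ⊢
          exact ⟨hu'.2, by simp⟩
        · intro x hx y hy hEq
          simp only [Finset.coe_filter, Set.mem_setOf_eq] at hx hy
          rw [Sym2.eq_iff] at hEq
          rcases hEq with ⟨-, h1⟩ | ⟨h1, h2⟩
          · exact h1
          · exact absurd h2 (((mem_neighborFinset G v x).mp (hS₀ hx.1)).ne')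
      have k3 : ((conflicts G v a).filter (fun f => v ∈ f)).card +
          ((conflicts G v a).filter (fun f => ¬ v ∈ f)).card =
          (conflicts G v a).card :=
        Finset.card_filter_add_card_filter_not _
      have k4 := hcard a haN
      have k5 := Finset.card_union_le
        (((conflicts G v a).filter (fun f => v ∉ f)).image φold)
        ((S₀.filter (fun u' => s(v,u') ∈ conflicts G v a)).image c)
      rw [← hforb] at k5
      omega
    have hex : ∃ cnew : Fin 13, cnew ∉ forb := by
      have h1 : 0 < forbᶜ.card := by
        rw [Finset.card_compl]
        simp only [Fintype.card_fin]
        omega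
      obtain ⟨cnew, hcnew⟩ := Finset.card_pos.mp h1
      exact ⟨cnew, Finset.mem_compl.mp hcnew⟩
    obtain ⟨cnew, hcnew⟩ := hex
    refine ⟨Function.update c a cnew, ?_, ?_⟩
    · intro u hu f hf hvf
      rcases Finset.mem_insert.mp hu with rfl | hu₀
      · rw [Function.update_self]
        intro hEq
        exact hcnew (hEq ▸ Finset.mem_union_left _
          (Finset.mem_image.mpr ⟨f, Finset.mem_filter.mpr ⟨hf, hvf⟩, rfl⟩))
      · have hua : u ≠ a := by rintro rfl; exact ha hu₀
        rw [Function.update_of_ne hua]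
        exact hc1 u hu₀ f hf hvf
    · intro u hu u' hu' hne hconf
      rcases Finset.mem_insert.mp hu with rfl | hu₀
      · rcases Finset.mem_insert.mp hu' with rfl | hu'₀
        · exact absurd rfl hne
        · have hu'a : u' ≠ u := by rintro rfl; exact ha hu'₀
          rw [Function.update_self, Function.update_of_ne hu'a]
          intro hEq
          exact hcnew (hEq ▸ Finset.mem_union_right _
            (Finset.mem_image.mpr ⟨u', Finset.mem_filter.mpr ⟨hu'₀, hconf⟩, rfl⟩))
      · have hua : u ≠ a := by rintro rfl; exact ha hu₀
        rcases Finset.mem_insert.mp hu' with rfl | hu'₀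
        · rw [Function.update_of_ne hua, Function.update_self]
          have hconf' : s(v,u) ∈ conflicts G v u' :=
            conflicts_symm ((mem_neighborFinset G v u).mp (hS₀ hu₀)) hav hne hconf
          intro hEq
          exact hcnew (hEq.symm ▸ Finset.mem_union_right _
            (Finset.mem_image.mpr ⟨u, Finset.mem_filter.mpr ⟨hu₀, hconf'⟩, rfl⟩))
        · have hu'a : u' ≠ a := by rintro rfl; exact ha hu'₀
          rw [Function.update_of_ne hua, Function.update_of_ne hu'a]
          exact hc2 u hu₀ u' hu'₀ hne hconf

lemma lift_exists {V : Type} (G : SimpleGraph V) (v : V) (f : Sym2 V)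
    (hf : f ∈ G.edgeSet) (hvf : v ∉ f) :
    ∃ g : (G.induce {x : V | x ≠ v}).edgeSet,
      Sym2.map Subtype.val (g : Sym2 {x : V | x ≠ v}) = f := by
  revert hf hvf
  refine Sym2.ind (fun x y hf hvf => ?_) f
  rw [mem_edgeSet] at hf
  have hx : x ∈ {x : V | x ≠ v} := fun h => hvf (h ▸ (by simp : x ∈ s(x,y)))
  have hy : y ∈ {x : V | x ≠ v} := fun h => hvf (h ▸ (by simp : y ∈ s(x,y)))
  refine ⟨⟨s(⟨x, hx⟩, ⟨y, hy⟩), ?_⟩, ?_⟩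
  · rw [mem_edgeSet]
    exact hf
  · rfl

lemma sees_transfer {V : Type} {G : SimpleGraph V} {v : V} {e e' : Sym2 V}
    {g g' : Sym2 {x : V | x ≠ v}}
    (hge : Sym2.map Subtype.val g = e) (hge' : Sym2.map Subtype.val g' = e')
    (hne : e ≠ e') (hv : v ∉ e) (hv' : v ∉ e') (hsees : Sees G e e') :
    Sees (G.induce {x : V | x ≠ v}) g g' := by
  have hinj : Function.Injective (Subtype.val : {x : V | x ≠ v} → V) :=
    Subtype.val_injective
  rcases hsees with ⟨hd, x, hx, y, hy, hxy⟩ | ⟨x, y, z, h1, h2, h3, he, he'⟩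
  · left
    constructor
    · intro a ha ha'
      have h1 : (a : V) ∈ e := hge ▸ Sym2.mem_map.mpr ⟨a, ha, rfl⟩
      have h2 : (a : V) ∈ e' := hge' ▸ Sym2.mem_map.mpr ⟨a, ha', rfl⟩
      exact hd _ h1 h2
    · obtain ⟨xh, hxh, hvx⟩ := Sym2.mem_map.mp (show x ∈ Sym2.map Subtype.val g from hge.symm ▸ hx)
      obtain ⟨yh, hyh, hvy⟩ := Sym2.mem_map.mp (show y ∈ Sym2.map Subtype.val g' from hge'.symm ▸ hy)
      refine ⟨xh, hxh, yh, hyh, ?_⟩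
      show G.Adj xh.val yh.val
      rw [hvx, hvy]
      exact hxy
  · simp only [Set.mem_insert_iff, Set.mem_singleton_iff] at he he'
    have hvx : v ≠ x := by
      rintro rfl
      have he2 : e = s(y,z) := by
        rcases he with rfl | rfl | rfl
        · exact absurd (by simp : v ∈ s(v,y)) (by exact hv)
        · rfl
        · exact absurd (by simp : v ∈ s(v,z)) (by exact hv)
      have he2' : e' = s(y,z) := by
        rcases he' with rfl | rfl | rfl
        · exact absurd (by simp : v ∈ s(v,y)) (by exact hv')
        · rfl
        · exact absurd (by simp : v ∈ s(v,z)) (by exact hv')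
      exact hne (he2.trans he2'.symm)
    have hvy : v ≠ y := by
      rintro rfl
      have he2 : e = s(x,z) := by
        rcases he with rfl | rfl | rfl
        · exact absurd (by simp : v ∈ s(x,v)) (by exact hv)
        · exact absurd (by simp : v ∈ s(v,z)) (by exact hv)
        · rfl
      have he2' : e' = s(x,z) := by
        rcases he' with rfl | rfl | rfl
        · exact absurd (by simp : v ∈ s(x,v)) (by exact hv')
        · exact absurd (by simp : v ∈ s(v,z)) (by exact hv')
        · rfl
      exact hne (he2.trans he2'.symm)
    have hvz : v ≠ z := by
      rintro rfl
      have he2 : e = s(x,y) := by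
        rcases he with rfl | rfl | rfl
        · rfl
        · exact absurd (by simp : v ∈ s(y,v)) (by exact hv)
        · exact absurd (by simp : v ∈ s(x,v)) (by exact hv)
      have he2' : e' = s(x,y) := by
        rcases he' with rfl | rfl | rfl
        · rfl
        · exact absurd (by simp : v ∈ s(y,v)) (by exact hv')
        · exact absurd (by simp : v ∈ s(x,v)) (by exact hv')
      exact hne (he2.trans he2'.symm)
    right
    refine ⟨⟨x, hvx.symm⟩, ⟨y, hvy.symm⟩, ⟨z, hvz.symm⟩, h1, h2, h3, ?_, ?_⟩
    · rcases he with rfl | rfl | rfl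
      · have : g = s(⟨x, hvx.symm⟩, ⟨y, hvy.symm⟩) :=
          Sym2.map.injective hinj (by rw [hge]; rfl)
        rw [this]; left; rfl
      · have : g = s(⟨y, hvy.symm⟩, ⟨z, hvz.symm⟩) :=
          Sym2.map.injective hinj (by rw [hge]; rfl)
        rw [this]; right; left; rfl
      · have : g = s(⟨x, hvx.symm⟩, ⟨z, hvz.symm⟩) :=
          Sym2.map.injective hinj (by rw [hge]; rfl)
        rw [this]; right; right; rfl
    · rcases he' with rfl | rfl | rfl
      · have : g' = s(⟨x, hvx.symm⟩, ⟨y, hvy.symm⟩) :=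
          Sym2.map.injective hinj (by rw [hge']; rfl)
        rw [this]; left; rfl
      · have : g' = s(⟨y, hvy.symm⟩, ⟨z, hvz.symm⟩) :=
          Sym2.map.injective hinj (by rw [hge']; rfl)
        rw [this]; right; left; rfl
      · have : g' = s(⟨x, hvx.symm⟩, ⟨z, hvz.symm⟩) :=
          Sym2.map.injective hinj (by rw [hge']; rfl)
        rw [this]; right; right; rfl

theorem stmt_5 {V : Type} [Fintype V] (G : SimpleGraph V) [DecidableRel G.Adj]
    (hclaw : ClawFree G) (hΔ : G.maxDegree ≤ 4) (hG : 13 < injChromIndex G)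
    (hmin : ∀ (W : Type) [Fintype W] (H : SimpleGraph W) [DecidableRel H.Adj],
      Fintype.card W < Fintype.card V → ClawFree H → H.maxDegree ≤ 4 →
      injChromIndex H ≤ 13) :
    ∀ v : V, G.degree v = 4 := by
  intro v
  by_contra hv4
  classical
  have hdeg4 : G.degree v ≤ 4 := (G.degree_le_maxDegree v).trans hΔ
  have hdeg : G.degree v ≤ 3 := by omega
  set H := G.induce {x : V | x ≠ v} with hH
  letI : DecidableRel H.Adj := Classical.decRel _
  have hcardW : Fintype.card {x : V | x ≠ v} < Fintype.card V :=
    Fintype.card_subtype_lt (x := v) (by simp)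
  have hclawH : ClawFree H :=
    ⟨fun f => hclaw.false ((Embedding.induce {x : V | x ≠ v}).comp f)⟩
  have hΔH : H.maxDegree ≤ 4 := by
    apply maxDegree_le_of_forall_degree_le
    intro a
    have hle : H.degree a ≤ G.degree a.val := by
      apply Finset.card_le_card_of_injOn Subtype.val
      · intro b hb
        rw [Finset.mem_coe, mem_neighborFinset] at hb ⊢
        exact hb
      · exact Subtype.val_injective.injOn
    exact hle.trans ((G.degree_le_maxDegree _).trans hΔ)
  have h13 : HasInjColoring H 13 :=
    hasInjColoring_13 (hmin {x : V | x ≠ v} H hcardW hclawH hΔH)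
  obtain ⟨φ, hφ⟩ := h13
  set φold : Sym2 V → Fin 13 := fun f =>
    if h : f ∈ G.edgeSet ∧ v ∉ f then φ ⟨_, ((lift_exists G v f h.1 h.2).choose).2⟩ else 0
    with hφold
  have hφold_eq : ∀ f (h : f ∈ G.edgeSet ∧ v ∉ f),
      φold f = φ ⟨_, ((lift_exists G v f h.1 h.2).choose).2⟩ := by
    intro f h
    rw [hφold]
    simp only [dif_pos h]
  have hφold_ne : ∀ f f' : Sym2 V, f ∈ G.edgeSet → f' ∈ G.edgeSet → v ∉ f → v ∉ f' →
      f ≠ f' → Sees G f f' → φold f ≠ φold f' := by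
    intro f f' hf hf' hvf hvf' hne hsees
    rw [hφold_eq f ⟨hf, hvf⟩, hφold_eq f' ⟨hf', hvf'⟩]
    have hge := (lift_exists G v f hf hvf).choose_spec
    have hge' := (lift_exists G v f' hf' hvf').choose_spec
    apply hφ
    · intro hEq
      apply hne
      rw [← hge, ← hge']
      exact congrArg _ hEq
    · exact sees_transfer hge hge' hne hvf hvf' hsees
  have hcard : ∀ u ∈ G.neighborFinset v, (conflicts G v u).card ≤ 12 := fun u hu =>
    conflicts_card_le hclaw hΔ ((mem_neighborFinset G v u).mp hu) hdeg
  obtain ⟨c, hc1, hc2⟩ := greedy_s5 φold hcard (G.neighborFinset v) (subset_refl _)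
  have hcolor : HasInjColoring G 13 := by
    refine ⟨fun e => if h : v ∈ (e : Sym2 V) then c (Sym2.Mem.other h) else φold e, ?_⟩
    intro e e' hne hsees
    dsimp only
    by_cases h1 : v ∈ (e : Sym2 V) <;> by_cases h2 : v ∈ (e' : Sym2 V)
    · rw [dif_pos h1, dif_pos h2]
      have hu : s(v, Sym2.Mem.other h1) = (e : Sym2 V) := Sym2.other_spec h1
      have hu' : s(v, Sym2.Mem.other h2) = (e' : Sym2 V) := Sym2.other_spec h2
      have huN : Sym2.Mem.other h1 ∈ G.neighborFinset v := by
        rw [mem_neighborFinset, ← mem_edgeSet, hu]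
        exact e.2
      have hu'N : Sym2.Mem.other h2 ∈ G.neighborFinset v := by
        rw [mem_neighborFinset, ← mem_edgeSet, hu']
        exact e'.2
      apply hc2 _ huN _ hu'N
      · intro hEq
        exact hne (by rw [← hu, ← hu', hEq])
      · rw [mem_conflicts]
        refine ⟨by rw [hu']; exact e'.2, ?_, ?_⟩
        · intro hEq
          exact hne (by rw [← hu, ← hu', hEq])
        · rw [hu, hu']
          exact hsees
    · rw [dif_pos h1, dif_neg h2]
      have hu : s(v, Sym2.Mem.other h1) = (e : Sym2 V) := Sym2.other_spec h1
      have huN : Sym2.Mem.other h1 ∈ G.neighborFinset v := by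
        rw [mem_neighborFinset, ← mem_edgeSet, hu]
        exact e.2
      refine hc1 _ huN (e' : Sym2 V) (mem_conflicts.mpr ⟨e'.2, ?_, ?_⟩) h2
      · intro hEq
        exact hne (hEq.trans hu).symm
      · rw [hu]
        exact hsees
    · rw [dif_neg h1, dif_pos h2]
      have hu' : s(v, Sym2.Mem.other h2) = (e' : Sym2 V) := Sym2.other_spec h2
      have hu'N : Sym2.Mem.other h2 ∈ G.neighborFinset v := by
        rw [mem_neighborFinset, ← mem_edgeSet, hu']
        exact e'.2
      refine (hc1 _ hu'N (e : Sym2 V) (mem_conflicts.mpr ⟨e.2, ?_, ?_⟩) h1).symm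
      · intro hEq
        exact hne (by rw [hEq, hu'])
      · rw [hu']
        exact Sees.symm' hsees
    · rw [dif_neg h1, dif_neg h2]
      exact hφold_ne _ _ e.2 e'.2 h1 h2 hne hsees
  have hle : injChromIndex G ≤ 13 := Nat.sInf_le hcolor
  omega
end Aux
end

section
/- Let G be a graph with maximum degree Δ(G) = 4 and maximum average degree mad(G) < 33/10. Then χ'_inj(G) ≤ 12. -/
set_option linter.unusedSectionVars false


open SimpleGraph

/-- `mad(G) < q`: every nonempty (induced) subgraph `H` satisfies `2|E(H)| < q * |V(H)|`. -/
def MadLt {V : Type} [Fintype V] (G : SimpleGraph V) (q : ℚ) : Prop :=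
  ∀ s : Finset V, s.Nonempty →
    (2 * ({e ∈ G.edgeSet | ∀ x ∈ e, x ∈ s}.ncard) : ℚ) < q * s.card


namespace InjAux
open scoped Classical
variable {V : Type} (G : SimpleGraph V)

noncomputable def conflictsIn (F : Finset (Sym2 V)) (e : Sym2 V) : Finset (Sym2 V) :=
  (F.erase e).filter (fun f => Sees G e f)

lemma sees_symm {e f : Sym2 V} (h : Sees G e f) : Sees G f e := by
  rcases h with ⟨hdisj, x, hx, y, hy, hadj⟩ | ⟨x, y, z, h1, h2, h3, he, hf⟩
  · exact Or.inl ⟨fun a ha hb => hdisj a hb ha, y, hy, x, hx, hadj.symm⟩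
  · exact Or.inr ⟨x, y, z, h1, h2, h3, hf, he⟩


lemma greedy
    (hgood : ∀ F : Finset (Sym2 V), (∀ e ∈ F, e ∈ G.edgeSet) → F.Nonempty →
      ∃ e ∈ F, (conflictsIn G F e).card ≤ 11) :
    ∀ F : Finset (Sym2 V), (∀ e ∈ F, e ∈ G.edgeSet) →
      ∃ φ : Sym2 V → Fin 12, ∀ e ∈ F, ∀ f ∈ F, e ≠ f → Sees G e f → φ e ≠ φ f := by
  intro F
  induction F using Finset.strongInduction with
  | _ F ih =>
    intro hsub
    rcases F.eq_empty_or_nonempty with rfl | hne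
    · exact ⟨fun _ => 0, by simp⟩
    obtain ⟨e, heF, hcard⟩ := hgood F hsub hne
    obtain ⟨φ₀, hφ₀⟩ := ih (F.erase e) (Finset.erase_ssubset heF)
      (fun f hf => hsub f (Finset.mem_of_mem_erase hf))
    have hcard' : ((conflictsIn G F e).image φ₀).card < 12 :=
      lt_of_le_of_lt (le_trans Finset.card_image_le hcard) (by norm_num)
    have hsd : ((Finset.univ : Finset (Fin 12)) \ ((conflictsIn G F e).image φ₀)).Nonempty := by
      rw [← Finset.card_pos, Finset.card_sdiff_of_subset (Finset.subset_univ _)]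
      simp only [Finset.card_univ, Fintype.card_fin]
      omega
    obtain ⟨c, hc⟩ := hsd
    have hc' : c ∉ (conflictsIn G F e).image φ₀ := (Finset.mem_sdiff.mp hc).2
    refine ⟨Function.update φ₀ e c, ?_⟩
    intro a ha b hb hab hsees
    have key : ∀ f ∈ F, f ≠ e → Sees G e f → c ≠ φ₀ f := by
      intro f hf hfe hs
      intro hEq
      refine hc' (Finset.mem_image.mpr ⟨f, ?_, hEq.symm⟩)
      simp only [conflictsIn, Finset.mem_filter, Finset.mem_erase]
      exact ⟨⟨hfe, hf⟩, hs⟩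
    by_cases hae : a = e
    · have hbe : b ≠ e := fun h => hab (hae.trans h.symm)
      have h1 : Function.update φ₀ e c a = c := by rw [hae, Function.update_self]
      rw [h1, Function.update_of_ne hbe]
      exact key b hb hbe (hae ▸ hsees)
    · by_cases hbe : b = e
      · have h1 : Function.update φ₀ e c b = c := by rw [hbe, Function.update_self]
        rw [h1, Function.update_of_ne hae]
        exact fun h => key a ha hae (sees_symm G (hbe ▸ hsees)) h.symm
      · rw [Function.update_of_ne hae, Function.update_of_ne hbe]
        exact hφ₀ a (Finset.mem_erase.mpr ⟨hae, ha⟩) b (Finset.mem_erase.mpr ⟨hbe, hb⟩) hab hsees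



section Core
variable [Fintype V] [DecidableRel G.Adj] (F : Finset (Sym2 V))

/-- F-degree -/
noncomputable def dF (v : V) : ℕ := (F.filter (fun e => v ∈ e)).card

/-- active vertices -/
noncomputable def Aset : Finset V := Finset.univ.filter (fun v => 0 < dF F v)

/-- active neighborhood -/
noncomputable def NA (u : V) : Finset V := G.neighborFinset u ∩ Aset F

/-- active degree -/
noncomputable def hdeg (u : V) : ℕ := (NA G F u).card

/-- the F-neighbors -/
noncomputable def FN (w : V) : Finset V := (NA G F w).filter (fun y => s(w, y) ∈ F)

def Strong (x : V) : Prop := 3 ≤ dF F x ∧ hdeg G F x = 4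

noncomputable def tau (u x : V) : ℕ := ((F.filter (fun e => x ∈ e)).erase s(u, x)).card

noncomputable def side (u v : V) : ℕ := ∑ x ∈ (NA G F u).erase v, tau F u x

variable {G F}

lemma side_def (u v : V) : side G F u v = ∑ x ∈ (NA G F u).erase v, tau F u x := rfl

variable (hF : ∀ e ∈ F, e ∈ G.edgeSet)

lemma mem_Aset {v : V} : v ∈ Aset F ↔ 0 < dF F v := by simp [Aset]

lemma mem_A_of_mem {e : Sym2 V} (he : e ∈ F) {v : V} (hv : v ∈ e) : v ∈ Aset F := by
  rw [mem_Aset]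
  exact Finset.card_pos.mpr ⟨e, Finset.mem_filter.mpr ⟨he, hv⟩⟩

lemma mem_NA {u x : V} : x ∈ NA G F u ↔ G.Adj u x ∧ x ∈ Aset F := by
  simp [NA, SimpleGraph.mem_neighborFinset]

lemma NA_symm {u x : V} (hu : u ∈ Aset F) (hx : x ∈ NA G F u) : u ∈ NA G F x := by
  rw [mem_NA] at hx ⊢
  exact ⟨hx.1.symm, hu⟩

include hF in
lemma mem_FN {w y : V} : y ∈ FN G F w ↔ s(w, y) ∈ F := by
  constructor
  · intro h; exact (Finset.mem_filter.mp h).2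
  · intro h
    refine Finset.mem_filter.mpr ⟨?_, h⟩
    rw [mem_NA]
    exact ⟨(G.mem_edgeSet).mp (hF _ h), mem_A_of_mem h (by simp)⟩

include hF in
lemma card_FN (w : V) : (FN G F w).card = dF F w := by
  rw [dF]
  apply Finset.card_bij (fun y _ => s(w, y))
  · intro y hy
    have h := (Finset.mem_filter.mp hy).2
    exact Finset.mem_filter.mpr ⟨h, by simp⟩
  · intro y1 h1 y2 h2 heq
    have hne1 : w ≠ y1 := by
      have := (mem_NA.mp (Finset.mem_filter.mp h1).1).1
      exact this.ne
    rw [Sym2.eq_iff] at heq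
    rcases heq with ⟨-, h⟩ | ⟨h1', h2'⟩
    · exact h
    · exact absurd h2'.symm hne1
  · intro e he
    obtain ⟨heF, hwe⟩ := Finset.mem_filter.mp he
    obtain ⟨y, rfl⟩ := Sym2.mem_iff_exists.mp hwe
    exact ⟨y, mem_FN hF |>.mpr heF, rfl⟩

lemma FN_subset_NA (w : V) : FN G F w ⊆ NA G F w := Finset.filter_subset _ _

include hF in
lemma FN_symm {w y : V} (h : y ∈ FN G F w) : w ∈ FN G F y := by
  rw [mem_FN hF] at h ⊢
  rwa [Sym2.eq_swap] at h

variable (hΔ : G.maxDegree = 4)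

include hΔ in
lemma hdeg_le (u : V) : hdeg G F u ≤ 4 := by
  calc (NA G F u).card ≤ (G.neighborFinset u).card := Finset.card_le_card (Finset.inter_subset_left)
    _ = G.degree u := (G.card_neighborFinset_eq_degree u)
    _ ≤ 4 := hΔ ▸ G.degree_le_maxDegree u

include hF in
lemma dF_le_hdeg (u : V) : dF F u ≤ hdeg G F u :=
  (card_FN hF u) ▸ Finset.card_le_card (FN_subset_NA u)

/-- tau basics -/
lemma tau_le_dF (u x : V) : tau F u x ≤ dF F x :=
  Finset.card_le_card (Finset.erase_subset _ _)

lemma tau_of_mem {u x : V} (h : s(u, x) ∈ F) (hx : x ∈ s(u,x)) :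
    tau F u x = dF F x - 1 :=
  Finset.card_erase_of_mem (Finset.mem_filter.mpr ⟨h, hx⟩)


/-- key triangle analysis -/
lemma triangle_case {u v : V} (hne : u ≠ v) {f : Sym2 V} (hfne : f ≠ s(u,v))
    {x y z : V} (axy : G.Adj x y) (ayz : G.Adj y z) (axz : G.Adj x z)
    (he : s(u,v) = s(x,y) ∨ s(u,v) = s(y,z) ∨ s(u,v) = s(x,z))
    (hf : f = s(x,y) ∨ f = s(y,z) ∨ f = s(x,z)) :
    ∃ w, G.Adj u w ∧ G.Adj v w ∧ w ≠ u ∧ w ≠ v ∧ w ∈ f ∧ (f = s(u,w) ∨ f = s(v,w)) := by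
  have main : ∀ a b c : V, G.Adj a b → G.Adj b c → G.Adj a c →
      s(u,v) = s(a,b) → (f = s(b,c) ∨ f = s(a,c)) →
      ∃ w, G.Adj u w ∧ G.Adj v w ∧ w ≠ u ∧ w ≠ v ∧ w ∈ f ∧ (f = s(u,w) ∨ f = s(v,w)) := by
    intro a b c hab hbc hac heq hfcase
    rw [Sym2.eq_iff] at heq
    rcases heq with ⟨rfl, rfl⟩ | ⟨rfl, rfl⟩
    · -- u = a, v = b; w := c
      rcases hfcase with rfl | rfl
      · exact ⟨c, hac, hbc, hac.ne', hbc.ne', by simp, Or.inr rfl⟩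
      · exact ⟨c, hac, hbc, hac.ne', hbc.ne', by simp, Or.inl rfl⟩
    · -- u = b, v = a; w := c
      rcases hfcase with rfl | rfl
      · exact ⟨c, hbc, hac, hbc.ne', hac.ne', by simp, Or.inl rfl⟩
      · exact ⟨c, hbc, hac, hbc.ne', hac.ne', by simp, Or.inr rfl⟩
  rcases he with he | he | he
  · rcases hf with hf | hf | hf
    · exact absurd (he ▸ hf) hfne
    · exact main x y z axy ayz axz he (Or.inl hf)
    · exact main x y z axy ayz axz he (Or.inr hf)
  · -- s(u,v) = s(y,z); edges of triangle from perspective (y,z,x): Adj y z, Adj z x, Adj y x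
    rcases hf with hf | hf | hf
    · -- f = s(x,y) = s(y,x)
      refine main y z x ayz axz.symm axy.symm he (Or.inr ?_)
      rw [hf, Sym2.eq_swap]
    · exact absurd (he ▸ hf) hfne
    · -- f = s(x,z) = s(z,x)
      refine main y z x ayz axz.symm axy.symm he (Or.inl ?_)
      rw [hf, Sym2.eq_swap]
  · -- s(u,v) = s(x,z); triangle (x,z,y): Adj x z, Adj z y, Adj x y
    rcases hf with hf | hf | hf
    · exact main x z y axz ayz.symm axy he (Or.inr hf)
    · refine main x z y axz ayz.symm axy he (Or.inl ?_)
      rw [hf, Sym2.eq_swap]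
    · exact absurd (he ▸ hf) hfne

include hF in
lemma covering {u v : V} (huv : s(u,v) ∈ F) :
    (conflictsIn G F s(u,v)).card ≤ side G F u v + side G F v u := by
  have hadj : G.Adj u v := (G.mem_edgeSet).mp (hF _ huv)
  have hne : u ≠ v := hadj.ne
  set B1 := ((NA G F u).erase v).biUnion
    (fun x => (F.filter (fun e => x ∈ e)).erase s(u,x)) with hB1
  set B2 := ((NA G F v).erase u).biUnion
    (fun x => (F.filter (fun e => x ∈ e)).erase s(v,x)) with hB2
  have hsub : conflictsIn G F s(u,v) ⊆ B1 ∪ B2 := by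
    intro f hf
    obtain ⟨hf1, hsees⟩ := Finset.mem_filter.mp hf
    have hfF : f ∈ F := Finset.mem_of_mem_erase hf1
    have hfne : f ≠ s(u,v) := Finset.ne_of_mem_erase hf1
    have witness : ∃ x, ((x ∈ NA G F u ∧ x ≠ v) ∧ x ∈ f ∧ f ≠ s(u,x)) ∨
        ((x ∈ NA G F v ∧ x ≠ u) ∧ x ∈ f ∧ f ≠ s(v,x)) := by
      rcases hsees with ⟨hdisj, p, hp, q, hq, hpq⟩ | ⟨x, y, z, axy, ayz, axz, he, hf2⟩
      · have hunf : u ∉ f := hdisj u (by simp)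
        have hvnf : v ∉ f := hdisj v (by simp)
        have hqA : q ∈ Aset F := mem_A_of_mem hfF hq
        rw [Sym2.mem_iff] at hp
        rcases hp with rfl | rfl
        · refine ⟨q, Or.inl ⟨⟨mem_NA.mpr ⟨hpq, hqA⟩, ?_⟩, hq, ?_⟩⟩
          · rintro rfl; exact hvnf hq
          · rintro rfl; exact hunf (by simp)
        · refine ⟨q, Or.inr ⟨⟨mem_NA.mpr ⟨hpq, hqA⟩, ?_⟩, hq, ?_⟩⟩
          · rintro rfl; exact hunf hq
          · rintro rfl; exact hvnf (by simp)
      · simp only [Set.mem_insert_iff, Set.mem_singleton_iff] at he hf2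
        obtain ⟨w, huw, hvw, hwu, hwv, hwf, hfw⟩ :=
          triangle_case hne hfne axy ayz axz he hf2
        have hwA : w ∈ Aset F := mem_A_of_mem hfF hwf
        rcases hfw with hfw | hfw
        · -- f = s(u,w): put on v-side
          refine ⟨w, Or.inr ⟨⟨mem_NA.mpr ⟨hvw, hwA⟩, hwu⟩, hwf, ?_⟩⟩
          rw [hfw]
          intro hcontr
          rw [Sym2.eq_iff] at hcontr
          rcases hcontr with ⟨rfl, -⟩ | ⟨rfl, hwv'⟩
          · exact hne rfl
          · exact hwu rfl
        · refine ⟨w, Or.inl ⟨⟨mem_NA.mpr ⟨huw, hwA⟩, hwv⟩, hwf, ?_⟩⟩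
          rw [hfw]
          intro hcontr
          rw [Sym2.eq_iff] at hcontr
          rcases hcontr with ⟨rfl, -⟩ | ⟨rfl, hwu'⟩
          · exact hne rfl
          · exact hwv rfl
    obtain ⟨x, hx | hx⟩ := witness
    · refine Finset.mem_union_left _ (Finset.mem_biUnion.mpr ⟨x, ?_, ?_⟩)
      · exact Finset.mem_erase.mpr ⟨hx.1.2, hx.1.1⟩
      · exact Finset.mem_erase.mpr ⟨hx.2.2, Finset.mem_filter.mpr ⟨hfF, hx.2.1⟩⟩
    · refine Finset.mem_union_right _ (Finset.mem_biUnion.mpr ⟨x, ?_, ?_⟩)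
      · exact Finset.mem_erase.mpr ⟨hx.1.2, hx.1.1⟩
      · exact Finset.mem_erase.mpr ⟨hx.2.2, Finset.mem_filter.mpr ⟨hfF, hx.2.1⟩⟩
  calc (conflictsIn G F s(u,v)).card ≤ (B1 ∪ B2).card := Finset.card_le_card hsub
    _ ≤ B1.card + B2.card := Finset.card_union_le _ _
    _ ≤ side G F u v + side G F v u := by
        apply Nat.add_le_add
        · exact le_trans (Finset.card_biUnion_le) (le_of_eq rfl)
        · exact le_trans (Finset.card_biUnion_le) (le_of_eq rfl)

include hF in
lemma cond (hbad : ∀ e ∈ F, 12 ≤ (conflictsIn G F e).card) {u v : V} (huv : s(u,v) ∈ F) :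
    12 ≤ side G F u v + side G F v u :=
  le_trans (hbad _ huv) (covering hF huv)


-- ===== Layer 3: tau bounds =====
include hF in
lemma dF_le_four (hΔ : G.maxDegree = 4) (x : V) : dF F x ≤ 4 :=
  le_trans (dF_le_hdeg hF x) (hdeg_le hΔ x)

include hF in
lemma FN_eq_NA {x : V} (hfull : dF F x = hdeg G F x) : FN G F x = NA G F x :=
  Finset.eq_of_subset_of_card_le (FN_subset_NA x)
    (by rw [card_FN hF]; rw [hdeg] at hfull; omega)

include hF in
lemma mem_F_of_full {u x : V} (hfull : dF F x = hdeg G F x) (hu : u ∈ NA G F x) :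
    s(u, x) ∈ F := by
  have : u ∈ FN G F x := (FN_eq_NA hF hfull) ▸ hu
  have := (mem_FN hF).mp this
  rwa [Sym2.eq_swap] at this

include hF in
lemma tau_eq_sub {u x : V} (h : s(u,x) ∈ F) : tau F u x = dF F x - 1 :=
  Finset.card_erase_of_mem (Finset.mem_filter.mpr ⟨h, by simp⟩)

include hF in
lemma tau_le_three (hΔ : G.maxDegree = 4) {u x : V}
    (hu : u ∈ Aset F) (hx : x ∈ NA G F u) : tau F u x ≤ 3 := by
  have h4 : dF F x ≤ 4 := dF_le_four hF hΔ x
  rcases Nat.lt_or_ge (dF F x) 4 with h | h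
  · exact le_trans (tau_le_dF u x) (by omega)
  · have hfull : dF F x = hdeg G F x := by
      have := dF_le_hdeg hF x
      have := hdeg_le hΔ (F := F) x
      omega
    rw [tau_eq_sub hF (mem_F_of_full hF hfull (NA_symm hu hx))]
    omega

include hF in
lemma strong_of_tau3 (hΔ : G.maxDegree = 4) {u x : V}
    (hu : u ∈ Aset F) (hx : x ∈ NA G F u) (h3 : 3 ≤ tau F u x) : Strong G F x := by
  have hd3 : 3 ≤ dF F x := le_trans h3 (tau_le_dF u x)
  constructor
  · exact hd3
  · by_contra hnot
    have hle : hdeg G F x ≤ 3 := by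
      have := hdeg_le hΔ (F := F) x; omega
    have hfull : dF F x = hdeg G F x := by
      have := dF_le_hdeg hF x; omega
    rw [tau_eq_sub hF (mem_F_of_full hF hfull (NA_symm hu hx))] at h3
    omega

include hF in
lemma tau_le_two_of_not_strong (hΔ : G.maxDegree = 4) {u x : V}
    (hu : u ∈ Aset F) (hx : x ∈ NA G F u) (hns : ¬ Strong G F x) : tau F u x ≤ 2 := by
  by_contra h
  exact hns (strong_of_tau3 hF hΔ hu hx (by omega))

-- ===== Layer 4: sum tools =====
lemma sum_tool_le {s t : Finset V} {f : V → ℕ} (hts : t ⊆ s)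
    (h2 : ∀ y ∈ t, f y ≤ 2) (h3 : ∀ y ∈ s, f y ≤ 3) :
    (∑ y ∈ s, f y) + t.card ≤ 3 * s.card := by
  have hsplit : (∑ y ∈ s \ t, f y) + (∑ y ∈ t, f y) = ∑ y ∈ s, f y :=
    Finset.sum_sdiff hts
  have ha : ∑ y ∈ t, f y ≤ 2 * t.card := by
    calc ∑ y ∈ t, f y ≤ ∑ _y ∈ t, 2 := Finset.sum_le_sum h2
      _ = 2 * t.card := by rw [Finset.sum_const, smul_eq_mul, mul_comm]
  have hb : ∑ y ∈ s \ t, f y ≤ 3 * (s \ t).card := by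
    calc ∑ y ∈ s \ t, f y ≤ ∑ _y ∈ s \ t, 3 :=
        Finset.sum_le_sum (fun y hy => h3 y (Finset.mem_sdiff.mp hy).1)
      _ = 3 * (s \ t).card := by rw [Finset.sum_const, smul_eq_mul, mul_comm]
  have hc : (s \ t).card = s.card - t.card := Finset.card_sdiff_of_subset hts
  have hd : t.card ≤ s.card := Finset.card_le_card hts
  omega

lemma sum_exists_three {s : Finset V} {f : V → ℕ} (h3 : ∀ y ∈ s, f y ≤ 3)
    (h : 2 * s.card < ∑ y ∈ s, f y) : ∃ y ∈ s, f y = 3 := by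
  by_contra hno
  push_neg at hno
  have : ∑ y ∈ s, f y ≤ 2 * s.card := by
    calc ∑ y ∈ s, f y ≤ ∑ _y ∈ s, 2 := by
          refine Finset.sum_le_sum (fun y hy => ?_)
          have := h3 y hy
          have := hno y hy
          omega
      _ = 2 * s.card := by rw [Finset.sum_const, smul_eq_mul, mul_comm]
  omega

lemma sum_all_three {s : Finset V} {f : V → ℕ} (h3 : ∀ y ∈ s, f y ≤ 3)
    (h : 3 * s.card ≤ ∑ y ∈ s, f y) : ∀ y ∈ s, f y = 3 := by
  intro y hy
  by_contra hne
  have hy2 : f y ≤ 2 := by have := h3 y hy; omega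
  have hsplit : f y + (∑ x ∈ s.erase y, f x) = ∑ x ∈ s, f x :=
    Finset.add_sum_erase s f hy
  have hb : ∑ x ∈ s.erase y, f x ≤ 3 * (s.erase y).card := by
    calc ∑ x ∈ s.erase y, f x ≤ ∑ _x ∈ s.erase y, 3 :=
        Finset.sum_le_sum (fun x hx => h3 x (Finset.mem_of_mem_erase hx))
      _ = 3 * (s.erase y).card := by rw [Finset.sum_const, smul_eq_mul, mul_comm]
  have hc : (s.erase y).card = s.card - 1 := Finset.card_erase_of_mem hy
  have hpos : 1 ≤ s.card := Finset.card_pos.mpr ⟨y, hy⟩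
  omega

lemma sum_le_special {s : Finset V} {f : V → ℕ} {v : V} (hv : v ∈ s)
    (h3 : ∀ y ∈ s, f y ≤ 3) : ∑ y ∈ s, f y ≤ 3 * (s.card - 1) + f v := by
  have hsplit : f v + (∑ x ∈ s.erase v, f x) = ∑ x ∈ s, f x :=
    Finset.add_sum_erase s f hv
  have hb : ∑ x ∈ s.erase v, f x ≤ 3 * (s.erase v).card := by
    calc ∑ x ∈ s.erase v, f x ≤ ∑ _x ∈ s.erase v, 3 :=
        Finset.sum_le_sum (fun x hx => h3 x (Finset.mem_of_mem_erase hx))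
      _ = 3 * (s.erase v).card := by rw [Finset.sum_const, smul_eq_mul, mul_comm]
  have hc : (s.erase v).card = s.card - 1 := Finset.card_erase_of_mem hv
  omega

-- ===== Layer 5: structure =====
variable (hΔ : G.maxDegree = 4) (hbad : ∀ e ∈ F, 12 ≤ (conflictsIn G F e).card)

lemma NA_sub_A {u x : V} (hx : x ∈ NA G F u) : x ∈ Aset F := (mem_NA.mp hx).2

include hF hΔ in
lemma side_le_dbl {u : V} (hu : u ∈ Aset F) (v : V) :
    side G F u v ≤ 3 * ((NA G F u).erase v).card := by
  rw [side]
  calc ∑ x ∈ (NA G F u).erase v, tau F u x ≤ ∑ _x ∈ (NA G F u).erase v, 3 :=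
      Finset.sum_le_sum (fun x hx => tau_le_three hF hΔ hu (Finset.mem_of_mem_erase hx))
    _ = 3 * ((NA G F u).erase v).card := by rw [Finset.sum_const, smul_eq_mul, mul_comm]

lemma card_erase_NA {u v : V} (hv : v ∈ NA G F u) :
    ((NA G F u).erase v).card = hdeg G F u - 1 := Finset.card_erase_of_mem hv

include hF hΔ hbad in
lemma hdeg_ge_two {v : V} (hv : v ∈ Aset F) : 2 ≤ hdeg G F v := by
  have hd : 0 < dF F v := mem_Aset.mp hv
  have hFN : (FN G F v).Nonempty := by
    rw [← Finset.card_pos, card_FN hF]; exact hd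
  obtain ⟨u, hu⟩ := hFN
  have huF : s(v, u) ∈ F := (mem_FN hF).mp hu
  have huNA : u ∈ NA G F v := FN_subset_NA v hu
  have huA : u ∈ Aset F := NA_sub_A huNA
  have hvNA : v ∈ NA G F u := NA_symm hv huNA
  have hcond := cond hF hbad huF
  by_contra hlt
  push_neg at hlt
  have h1 : hdeg G F v = 1 := by
    have : 0 < hdeg G F v := Finset.card_pos.mpr ⟨u, huNA⟩
    omega
  have hs1 : side G F v u = 0 := by
    rw [side]
    have : ((NA G F v).erase u).card = 0 := by rw [card_erase_NA huNA, h1]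
    rw [Finset.card_eq_zero.mp this, Finset.sum_empty]
  have hs2 : side G F u v ≤ 9 := by
    have := side_le_dbl hF hΔ huA v
    have h2 := card_erase_NA hvNA
    have h3 := hdeg_le hΔ (F := F) u
    omega
  omega

include hF hΔ hbad in
lemma P1 {z u : V} (hz2 : hdeg G F z = 2) (hu : u ∈ FN G F z) :
    hdeg G F u = 4 ∧ (∀ y ∈ (NA G F u).erase z, tau F u y = 3) ∧
      (∀ w ∈ (NA G F z).erase u, tau F z w = 3) := by
  have huF : s(z, u) ∈ F := (mem_FN hF).mp hu
  have huNA : u ∈ NA G F z := FN_subset_NA z hu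
  have hzA : z ∈ Aset F := mem_A_of_mem huF (by simp)
  have huA : u ∈ Aset F := NA_sub_A huNA
  have hzNA : z ∈ NA G F u := NA_symm hzA huNA
  have hcond := cond hF hbad huF
  have hczu : ((NA G F z).erase u).card = 1 := by rw [card_erase_NA huNA, hz2]
  have hcuz : ((NA G F u).erase z).card = hdeg G F u - 1 := card_erase_NA hzNA
  have hs1 : side G F z u ≤ 3 := by
    have := side_le_dbl hF hΔ hzA u; omega
  have hu4 : hdeg G F u = 4 := by
    by_contra hne
    have : hdeg G F u ≤ 3 := by have := hdeg_le hΔ (F := F) u; omega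
    have := side_le_dbl hF hΔ huA z
    omega
  refine ⟨hu4, ?_, ?_⟩
  · apply sum_all_three
    · exact fun y hy => tau_le_three hF hΔ huA (Finset.mem_of_mem_erase hy)
    · have h9 : 9 ≤ side G F u z := by omega
      rw [side_def] at h9
      rw [hcuz, hu4]
      exact le_trans (by norm_num) h9
  · apply sum_all_three
    · exact fun y hy => tau_le_three hF hΔ hzA (Finset.mem_of_mem_erase hy)
    · have h9 : side G F u z ≤ 9 := by
        have := side_le_dbl hF hΔ huA z; omega
      have h3 : 3 ≤ side G F z u := by omega
      rw [side_def] at h3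
      rw [hczu]
      omega

include hF hΔ hbad in
lemma A2_nbrs_A4 {z : V} (hz2 : hdeg G F z = 2) (hzA : z ∈ Aset F) :
    ∀ x ∈ NA G F z, hdeg G F x = 4 := by
  intro x hx
  have hFN : (FN G F z).Nonempty := by
    rw [← Finset.card_pos, card_FN hF]; exact mem_Aset.mp hzA
  obtain ⟨u, hu⟩ := hFN
  obtain ⟨hu4, -, hall⟩ := P1 hF hΔ hbad hz2 hu
  by_cases hxu : x = u
  · rw [hxu]; exact hu4
  · have := hall x (Finset.mem_erase.mpr ⟨hxu, hx⟩)
    exact (strong_of_tau3 hF hΔ hzA hx (by omega)).2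

include hF hΔ hbad in
lemma O1 {x : V} (hx4 : hdeg G F x = 4) (hxA : x ∈ Aset F) :
    ((NA G F x).filter (fun z => hdeg G F z = 2)).card ≤ 1 := by
  by_contra hgt
  push_neg at hgt
  obtain ⟨v1, hv1, v2, hv2, hne⟩ := Finset.one_lt_card.mp hgt
  obtain ⟨hv1NA, hv1h⟩ := Finset.mem_filter.mp hv1
  obtain ⟨hv2NA, hv2h⟩ := Finset.mem_filter.mp hv2
  have hv1A : v1 ∈ Aset F := NA_sub_A hv1NA
  have hv2A : v2 ∈ Aset F := NA_sub_A hv2NA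
  have hcase : ∀ w1 w2 : V, w1 ≠ w2 → w1 ∈ NA G F x → w2 ∈ NA G F x →
      hdeg G F w1 = 2 → hdeg G F w2 = 2 → s(x, w1) ∈ F → False := by
    intro w1 w2 hne h1 h2 hh1 hh2 hxw
    have hxFN : x ∈ FN G F w1 := by
      rw [mem_FN hF, Sym2.eq_swap]; exact hxw
    obtain ⟨-, hall, -⟩ := P1 hF hΔ hbad hh1 hxFN
    have hw2 : w2 ∈ (NA G F x).erase w1 := Finset.mem_erase.mpr ⟨hne.symm, h2⟩
    have := hall w2 hw2
    have hstr := strong_of_tau3 hF hΔ hxA h2 (by omega)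
    rw [hstr.2] at hh2
    omega
  by_cases h1F : s(x, v1) ∈ F
  · exact hcase v1 v2 hne hv1NA hv2NA hv1h hv2h h1F
  by_cases h2F : s(x, v2) ∈ F
  · exact hcase v2 v1 hne.symm hv2NA hv1NA hv2h hv1h h2F
  -- both non-F
  have hFN1 : (FN G F v1).Nonempty := by
    rw [← Finset.card_pos, card_FN hF]; exact mem_Aset.mp hv1A
  obtain ⟨u1, hu1⟩ := hFN1
  have hu1ne : u1 ≠ x := by
    rintro rfl
    exact h1F (by rw [Sym2.eq_swap]; exact (mem_FN hF).mp hu1)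
  obtain ⟨-, -, hall⟩ := P1 hF hΔ hbad hv1h hu1
  have hxNA1 : x ∈ NA G F v1 := NA_symm hxA hv1NA
  have htau := hall x (Finset.mem_erase.mpr ⟨hu1ne.symm, hxNA1⟩)
  have hstr : Strong G F x := strong_of_tau3 hF hΔ hv1A hxNA1 (by omega)
  -- FN x misses v1 v2 but has card ≥ 3 inside NA x of card 4
  have hsub : FN G F x ⊆ ((NA G F x).erase v1).erase v2 := by
    intro y hy
    refine Finset.mem_erase.mpr ⟨?_, Finset.mem_erase.mpr ⟨?_, FN_subset_NA x hy⟩⟩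
    · rintro rfl; exact h2F ((mem_FN hF).mp hy)
    · rintro rfl; exact h1F ((mem_FN hF).mp hy)
  have hcard : (((NA G F x).erase v1).erase v2).card = 2 := by
    rw [Finset.card_erase_of_mem, Finset.card_erase_of_mem hv1NA]
    · rw [hdeg] at hx4; omega
    · exact Finset.mem_erase.mpr ⟨hne.symm, hv2NA⟩
  have := Finset.card_le_card hsub
  rw [card_FN hF, hcard] at this
  have := hstr.1
  omega

variable (G F) in
/-- h4 vertices with an h2 neighbor -/
noncomputable def Dset : Finset V :=
  (Aset F).filter (fun x => hdeg G F x = 4 ∧ ∃ z ∈ NA G F x, hdeg G F z = 2)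

include hF hΔ hbad in
lemma KD {z s : V} (hzA : z ∈ Aset F) (hz3 : hdeg G F z = 3)
    (hs : s ∈ NA G F z) (ht : tau F z s = 3) (hsD : s ∈ Dset G F) : False := by
  have hstr : Strong G F s := strong_of_tau3 hF hΔ hzA hs (by omega)
  have hmemD := Finset.mem_filter.mp hsD
  have hsA : s ∈ Aset F := hmemD.1
  have hs4 : hdeg G F s = 4 := hmemD.2.1
  obtain ⟨v, hvNA, hv2⟩ := hmemD.2.2
  have hzs : z ∈ NA G F s := NA_symm hzA hs
  have hzv : z ≠ v := by rintro rfl; omega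
  by_cases hsvF : s(s, v) ∈ F
  · have hsFN : s ∈ FN G F v := by rw [mem_FN hF, Sym2.eq_swap]; exact hsvF
    obtain ⟨-, hall, -⟩ := P1 hF hΔ hbad hv2 hsFN
    have := hall z (Finset.mem_erase.mpr ⟨hzv, hzs⟩)
    have hstrz := strong_of_tau3 hF hΔ hsA hzs (by omega)
    rw [hstrz.2] at hz3
    omega
  · rcases Nat.lt_or_ge (dF F s) 4 with hlt | hge
    · -- dF s = 3
      have hd3 : dF F s = 3 := by have := hstr.1; omega
      have hzsF : s(s, z) ∉ F := by
        intro hmem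
        have : s(z, s) ∈ F := by rwa [Sym2.eq_swap] at hmem
        rw [tau_eq_sub hF this, hd3] at ht
        omega
      have hsub : FN G F s ⊆ ((NA G F s).erase v).erase z := by
        intro y hy
        refine Finset.mem_erase.mpr ⟨?_, Finset.mem_erase.mpr ⟨?_, FN_subset_NA s hy⟩⟩
        · rintro rfl; exact hzsF ((mem_FN hF).mp hy)
        · rintro rfl; exact hsvF ((mem_FN hF).mp hy)
      have hcard : (((NA G F s).erase v).erase z).card = 2 := by
        rw [Finset.card_erase_of_mem, Finset.card_erase_of_mem hvNA]
        · rw [hdeg] at hs4; omega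
        · exact Finset.mem_erase.mpr ⟨hzv, hzs⟩
      have := Finset.card_le_card hsub
      rw [card_FN hF, hcard, hd3] at this
      omega
    · -- dF s = 4 : all NA-edges are F-edges, contradicting s(s,v) ∉ F
      have hfull : dF F s = hdeg G F s := by
        have := dF_le_hdeg hF s
        have := hdeg_le hΔ (F := F) s
        omega
      exact hsvF (by
        have := mem_F_of_full hF hfull hvNA
        rwa [Sym2.eq_swap] at this)

variable (G F) in
noncomputable def elig (z : V) : Finset V :=
  (NA G F z).filter (fun s => Strong G F s ∧ s ∉ Dset G F)

include hF hΔ hbad in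
lemma tau3_mem_elig {z s : V} (hzA : z ∈ Aset F) (hz3 : hdeg G F z = 3)
    (hs : s ∈ NA G F z) (ht : tau F z s = 3) : s ∈ elig G F z := by
  refine Finset.mem_filter.mpr ⟨hs, strong_of_tau3 hF hΔ hzA hs (by omega), ?_⟩
  intro hD
  exact KD hF hΔ hbad hzA hz3 hs ht hD

variable (G F) in
noncomputable def FBset (z : V) : Finset V :=
  (FN G F z).filter (fun u => hdeg G F u = 4)

include hF hΔ hbad in
lemma FB_exists {z : V} (hzA : z ∈ Aset F) (hz3 : hdeg G F z = 3)
    (hel : elig G F z = ∅) : (FBset G F z).Nonempty := by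
  have hFN : (FN G F z).Nonempty := by
    rw [← Finset.card_pos, card_FN hF]; exact mem_Aset.mp hzA
  obtain ⟨u, hu⟩ := hFN
  have huF : s(z, u) ∈ F := (mem_FN hF).mp hu
  have huNA : u ∈ NA G F z := FN_subset_NA z hu
  have huA : u ∈ Aset F := NA_sub_A huNA
  have hzNA : z ∈ NA G F u := NA_symm hzA huNA
  have h2 : 2 ≤ hdeg G F u := hdeg_ge_two hF hΔ hbad huA
  have h4 : hdeg G F u ≤ 4 := hdeg_le hΔ u
  interval_cases h : hdeg G F u
  · -- hdeg u = 2
    have : z ∈ FN G F u := FN_symm hF hu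
    obtain ⟨hz4, -, -⟩ := P1 hF hΔ hbad h this
    omega
  · -- hdeg u = 3
    exfalso
    have hcond := cond hF hbad huF
    have hsuz : side G F u z ≤ 6 := by
      have := side_le_dbl hF hΔ huA z
      have := card_erase_NA hzNA
      omega
    have hszu : 6 ≤ side G F z u := by omega
    have hcz : ((NA G F z).erase u).card = 2 := by
      rw [card_erase_NA huNA, hz3]
    have hsum : 3 * ((NA G F z).erase u).card ≤ ∑ y ∈ (NA G F z).erase u, tau F z y := by
      rw [hcz]; rw [side_def] at hszu; omega
    have hall := sum_all_three
      (fun y hy => tau_le_three hF hΔ hzA (Finset.mem_of_mem_erase hy)) hsum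
    have hne : ((NA G F z).erase u).Nonempty := by
      rw [← Finset.card_pos, hcz]; omega
    obtain ⟨y, hy⟩ := hne
    have : y ∈ elig G F z := tau3_mem_elig hF hΔ hbad hzA hz3
      (Finset.mem_of_mem_erase hy) (hall y hy)
    rw [hel] at this
    exact absurd this (Finset.notMem_empty y)
  · -- hdeg u = 4
    exact ⟨u, Finset.mem_filter.mpr ⟨hu, h⟩⟩

include hF hΔ hbad in
lemma FB1 {z u : V} (hzA : z ∈ Aset F) (hz3 : hdeg G F z = 3)
    (hel : elig G F z = ∅) (hu : u ∈ FBset G F z) :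
    u ∉ Dset G F ∧ dF F u ≤ 2 := by
  obtain ⟨huFN, hu4⟩ := Finset.mem_filter.mp hu
  have huF : s(z, u) ∈ F := (mem_FN hF).mp huFN
  have huNA : u ∈ NA G F z := FN_subset_NA z huFN
  have huA : u ∈ Aset F := NA_sub_A huNA
  have hzNA : z ∈ NA G F u := NA_symm hzA huNA
  -- common contradiction: an F-edge from u to an h2-vertex
  have hPcontra : ∀ v, v ∈ NA G F u → hdeg G F v = 2 → s(u, v) ∈ F → False := by
    intro v hvNA hv2 hF'
    have huFNv : u ∈ FN G F v := by rw [mem_FN hF, Sym2.eq_swap]; exact hF'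
    obtain ⟨-, hall, -⟩ := P1 hF hΔ hbad hv2 huFNv
    have hzv : z ≠ v := by rintro rfl; omega
    have := hall z (Finset.mem_erase.mpr ⟨hzv, hzNA⟩)
    have hstrz := strong_of_tau3 hF hΔ huA hzNA (by omega)
    rw [hstrz.2] at hz3
    omega
  have hnstr : ¬ Strong G F u := by
    intro hstr
    by_cases huD : u ∈ Dset G F
    · obtain ⟨v, hvNA, hv2⟩ := (Finset.mem_filter.mp huD).2.2
      by_cases hF' : s(u, v) ∈ F
      · exact hPcontra v hvNA hv2 hF'
      · -- free edge to the h2 vertex; v has dF = 1, so side u z ≤ 7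
        have hvA : v ∈ Aset F := NA_sub_A hvNA
        have huNAv : u ∈ NA G F v := NA_symm huA hvNA
        have hdFv : dF F v ≤ 1 := by
          have hsub : FN G F v ⊆ (NA G F v).erase u := by
            intro y hy
            refine Finset.mem_erase.mpr ⟨?_, FN_subset_NA v hy⟩
            rintro rfl
            exact hF' (by rw [Sym2.eq_swap]; exact (mem_FN hF).mp hy)
          have := Finset.card_le_card hsub
          rw [card_FN hF, Finset.card_erase_of_mem huNAv, ← hdeg, hv2] at this
          omega
        have htauuv : tau F u v ≤ 1 := le_trans (tau_le_dF u v) hdFv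
        have hcond := cond hF hbad huF
        have hsuz : side G F u z ≤ 7 := by
          have hvmem : v ∈ (NA G F u).erase z := by
            refine Finset.mem_erase.mpr ⟨?_, hvNA⟩
            rintro rfl; omega
          have hsp := sum_le_special hvmem
            (fun y hy => tau_le_three hF hΔ huA (Finset.mem_of_mem_erase hy))
          rw [side_def]
          have hc : ((NA G F u).erase z).card = 3 := by
            rw [card_erase_NA hzNA, hu4]
          rw [hc] at hsp
          omega
        have hszu : 5 ≤ side G F z u := by omega
        have hcz : ((NA G F z).erase u).card = 2 := by
          rw [card_erase_NA huNA, hz3]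
        have hex : ∃ y ∈ (NA G F z).erase u, tau F z y = 3 := by
          apply sum_exists_three
            (fun y hy => tau_le_three hF hΔ hzA (Finset.mem_of_mem_erase hy))
          rw [hcz]; rw [side_def] at hszu; omega
        obtain ⟨y, hy, hy3⟩ := hex
        have : y ∈ elig G F z := tau3_mem_elig hF hΔ hbad hzA hz3
          (Finset.mem_of_mem_erase hy) hy3
        rw [hel] at this
        exact absurd this (Finset.notMem_empty y)
    · have : u ∈ elig G F z := Finset.mem_filter.mpr ⟨huNA, hstr, huD⟩
      rw [hel] at this
      exact absurd this (Finset.notMem_empty u)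
  constructor
  · -- u ∉ Dset
    intro huD
    obtain ⟨v, hvNA, hv2⟩ := (Finset.mem_filter.mp huD).2.2
    by_cases hF' : s(u, v) ∈ F
    · exact hPcontra v hvNA hv2 hF'
    · have hvA : v ∈ Aset F := NA_sub_A hvNA
      have huNAv : u ∈ NA G F v := NA_symm huA hvNA
      have hFNv : (FN G F v).Nonempty := by
        rw [← Finset.card_pos, card_FN hF]; exact mem_Aset.mp hvA
      obtain ⟨u1, hu1⟩ := hFNv
      have hu1ne : u1 ≠ u := by
        rintro rfl
        exact hF' (by rw [Sym2.eq_swap]; exact (mem_FN hF).mp hu1)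
      obtain ⟨-, -, hall⟩ := P1 hF hΔ hbad hv2 hu1
      have := hall u (Finset.mem_erase.mpr ⟨hu1ne.symm, huNAv⟩)
      exact hnstr (strong_of_tau3 hF hΔ hvA huNAv (by omega))
  · -- dF u ≤ 2
    by_contra hd
    push_neg at hd
    exact hnstr ⟨by omega, hu4⟩

include hF hΔ hbad in
lemma HC {x : V} (hxA : x ∈ Aset F) (hstr : Strong G F x) (hxD : x ∉ Dset G F) :
    ∑ z ∈ ((NA G F x).filter (fun z => hdeg G F z = 3 ∧ x ∈ elig G F z)),
      ((elig G F z).card : ℚ)⁻¹ ≤ 2 := by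
  set J := (NA G F x).filter (fun z => hdeg G F z = 3 ∧ x ∈ elig G F z) with hJdef
  have hJsub : J ⊆ NA G F x := Finset.filter_subset _ _
  have hx4 : hdeg G F x = 4 := hstr.2
  have hjle : J.card ≤ 4 := by
    have := Finset.card_le_card hJsub
    rw [← hdeg, hx4] at this
    exact this
  have hterm1 : ∀ z ∈ J, ((elig G F z).card : ℚ)⁻¹ ≤ 1 := by
    intro z hz
    have hxel : x ∈ elig G F z := (Finset.mem_filter.mp hz).2.2
    have h1 : 1 ≤ (elig G F z).card := Finset.card_pos.mpr ⟨x, hxel⟩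
    rw [inv_le_one_iff₀]
    right
    exact_mod_cast h1
  have htermpos : ∀ z ∈ J, (0:ℚ) ≤ ((elig G F z).card : ℚ)⁻¹ := by
    intro z hz
    positivity
  have hcases : J.card ≤ 2 ∨ J.card = 3 ∨ J.card = 4 := by omega
  rcases hcases with hc | hc
  · calc ∑ z ∈ J, ((elig G F z).card : ℚ)⁻¹ ≤ ∑ _z ∈ J, (1:ℚ) :=
        Finset.sum_le_sum hterm1
      _ = J.card := by rw [Finset.sum_const, nsmul_eq_mul, mul_one]
      _ ≤ 2 := by exact_mod_cast hc
  -- the interesting cases: J.card = 3 or 4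
  · set K := J.filter (fun z => s(x, z) ∈ F) with hKdef
    have hKJ : K ⊆ J := Finset.filter_subset _ _
    have hKeq : K = J ∩ FN G F x := by
      ext z
      simp only [hKdef, Finset.mem_filter, Finset.mem_inter]
      constructor
      · rintro ⟨hz, hzF⟩
        exact ⟨hz, (mem_FN hF).mpr hzF⟩
      · rintro ⟨hz, hzFN⟩
        exact ⟨hz, (mem_FN hF).mp hzFN⟩
    have hKcard : J.card + dF F x ≤ K.card + 4 := by
      have hsub2 : J ∪ FN G F x ⊆ NA G F x :=
        Finset.union_subset hJsub (FN_subset_NA x)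
      have hu4 : (J ∪ FN G F x).card ≤ 4 := by
        have := Finset.card_le_card hsub2
        rw [← hdeg, hx4] at this
        exact this
      have := Finset.card_union_add_card_inter J (FN G F x)
      rw [← hKeq, card_FN hF] at this
      omega
    have hdFx : 3 ≤ dF F x := hstr.1
    -- main eligibility bound for z ∈ K
    have hKelig : ∀ z ∈ K, J.card - 1 ≤ (elig G F z).card := by
      intro z hzK
      have hzJ : z ∈ J := hKJ hzK
      have hzxF : s(x, z) ∈ F := (Finset.mem_filter.mp hzK).2
      obtain ⟨hzNA, hz3, hxel⟩ := Finset.mem_filter.mp hzJ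
      have hzA : z ∈ Aset F := NA_sub_A hzNA
      have hxNAz : x ∈ NA G F z := NA_symm hxA hzNA
      have hcond := cond hF hbad hzxF
      -- bound side x z
      have hts : J.erase z ⊆ (NA G F x).erase z := by
        intro y hy
        obtain ⟨hyz, hyJ⟩ := Finset.mem_erase.mp hy
        exact Finset.mem_erase.mpr ⟨hyz, hJsub hyJ⟩
      have h2 : ∀ y ∈ J.erase z, tau F x y ≤ 2 := by
        intro y hy
        have hyJ := Finset.mem_of_mem_erase hy
        obtain ⟨hyNA, hy3, -⟩ := Finset.mem_filter.mp hyJ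
        refine tau_le_two_of_not_strong hF hΔ hxA hyNA ?_
        intro hsy
        rw [hsy.2] at hy3
        omega
      have h3 : ∀ y ∈ (NA G F x).erase z, tau F x y ≤ 3 :=
        fun y hy => tau_le_three hF hΔ hxA (Finset.mem_of_mem_erase hy)
      have htool := sum_tool_le hts h2 h3
      have hcxz : ((NA G F x).erase z).card = 3 := by
        rw [card_erase_NA hzNA, hx4]
      have hcJz : (J.erase z).card = J.card - 1 := Finset.card_erase_of_mem hzJ
      have hsxz : side G F x z + (J.card - 1) ≤ 9 := by
        rw [side_def]
        rw [hcxz, hcJz] at htool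
        omega
      have hszx : 2 + J.card ≤ side G F z x := by omega
      have hcs' : ((NA G F z).erase x).card = 2 := by
        rw [card_erase_NA hxNAz, hz3]
      have h3' : ∀ y ∈ (NA G F z).erase x, tau F z y ≤ 3 :=
        fun y hy => tau_le_three hF hΔ hzA (Finset.mem_of_mem_erase hy)
      rcases hc with hc3 | hc4
      · -- J.card = 3 : find one more elig member
        have hex : ∃ y ∈ (NA G F z).erase x, tau F z y = 3 := by
          apply sum_exists_three h3'
          rw [hcs']
          rw [side_def] at hszx
          omega
        obtain ⟨y, hy, hy3⟩ := hex
        have hyel : y ∈ elig G F z := tau3_mem_elig hF hΔ hbad hzA hz3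
          (Finset.mem_of_mem_erase hy) hy3
        have hyx : y ≠ x := (Finset.mem_erase.mp hy).1
        have hsub3 : insert y ({x} : Finset V) ⊆ elig G F z := by
          intro w hw
          rcases Finset.mem_insert.mp hw with rfl | hw
          · exact hyel
          · rw [Finset.mem_singleton.mp hw]; exact hxel
        have : (insert y ({x} : Finset V)).card = 2 := by
          rw [Finset.card_insert_of_notMem (by simpa using hyx), Finset.card_singleton]
        rw [hc3]
        calc 3 - 1 = 2 := by norm_num
          _ = (insert y ({x} : Finset V)).card := this.symm
          _ ≤ (elig G F z).card := Finset.card_le_card hsub3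
      · -- J.card = 4 : both remaining neighbors are elig
        have hall := sum_all_three h3' (by
          rw [hcs']
          rw [side_def] at hszx
          omega)
        have hsub3 : insert x ((NA G F z).erase x) ⊆ elig G F z := by
          intro w hw
          rcases Finset.mem_insert.mp hw with rfl | hw
          · exact hxel
          · exact tau3_mem_elig hF hΔ hbad hzA hz3
              (Finset.mem_of_mem_erase hw) (hall w hw)
        have hcins : (insert x ((NA G F z).erase x)).card = 3 := by
          rw [Finset.card_insert_of_notMem (Finset.notMem_erase x _), hcs']
        rw [hc4]
        calc 4 - 1 = 3 := by norm_num
          _ = (insert x ((NA G F z).erase x)).card := hcins.symm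
          _ ≤ (elig G F z).card := Finset.card_le_card hsub3
    -- now sum up
    have hsplit : (∑ z ∈ J \ K, ((elig G F z).card : ℚ)⁻¹) +
        (∑ z ∈ K, ((elig G F z).card : ℚ)⁻¹) = ∑ z ∈ J, ((elig G F z).card : ℚ)⁻¹ :=
      Finset.sum_sdiff hKJ
    have hcsd : (J \ K).card = J.card - K.card := Finset.card_sdiff_of_subset hKJ
    have hKle : K.card ≤ J.card := Finset.card_le_card hKJ
    have hsd_le : (∑ z ∈ J \ K, ((elig G F z).card : ℚ)⁻¹) ≤ ((J.card - K.card : ℕ) : ℚ) := by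
      rw [← hcsd]
      calc ∑ z ∈ J \ K, ((elig G F z).card : ℚ)⁻¹ ≤ ∑ _z ∈ J \ K, (1:ℚ) :=
          Finset.sum_le_sum (fun z hz => hterm1 z (Finset.mem_sdiff.mp hz).1)
        _ = ((J \ K).card : ℚ) := by rw [Finset.sum_const, nsmul_eq_mul, mul_one]
    rcases hc with hc3 | hc4
    · have hK2 : 2 ≤ K.card := by omega
      have hK_le : (∑ z ∈ K, ((elig G F z).card : ℚ)⁻¹) ≤ (K.card : ℚ) * (1/2) := by
        have hstep : ∀ z ∈ K, ((elig G F z).card : ℚ)⁻¹ ≤ (1/2 : ℚ) := by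
          intro z hz
          have h2e : 2 ≤ (elig G F z).card := by
            have := hKelig z hz; rw [hc3] at this; omega
          rw [show (1/2 : ℚ) = ((2:ℚ))⁻¹ by norm_num]
          apply inv_anti₀ (by norm_num)
          exact_mod_cast h2e
        calc ∑ z ∈ K, ((elig G F z).card : ℚ)⁻¹ ≤ ∑ _z ∈ K, (1/2 : ℚ) :=
            Finset.sum_le_sum hstep
          _ = (K.card : ℚ) * (1/2) := by rw [Finset.sum_const, nsmul_eq_mul]
      have hcast : ((J.card - K.card : ℕ) : ℚ) = (J.card : ℚ) - (K.card : ℚ) := by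
        have := hKle
        push_cast [Nat.cast_sub this]
        ring
      have hjq : (J.card : ℚ) = 3 := by exact_mod_cast hc3
      have hkq : (2:ℚ) ≤ (K.card : ℚ) := by exact_mod_cast hK2
      rw [← hsplit]
      rw [hcast] at hsd_le
      linarith
    · have hK3 : 3 ≤ K.card := by omega
      have hK_le : (∑ z ∈ K, ((elig G F z).card : ℚ)⁻¹) ≤ (K.card : ℚ) * (1/3) := by
        have hstep : ∀ z ∈ K, ((elig G F z).card : ℚ)⁻¹ ≤ (1/3 : ℚ) := by
          intro z hz
          have h3e : 3 ≤ (elig G F z).card := by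
            have := hKelig z hz; rw [hc4] at this; omega
          rw [show (1/3 : ℚ) = ((3:ℚ))⁻¹ by norm_num]
          apply inv_anti₀ (by norm_num)
          exact_mod_cast h3e
        calc ∑ z ∈ K, ((elig G F z).card : ℚ)⁻¹ ≤ ∑ _z ∈ K, (1/3 : ℚ) :=
            Finset.sum_le_sum hstep
          _ = (K.card : ℚ) * (1/3) := by rw [Finset.sum_const, nsmul_eq_mul]
      have hcast : ((J.card - K.card : ℕ) : ℚ) = (J.card : ℚ) - (K.card : ℚ) := by
        have := hKle
        push_cast [Nat.cast_sub this]
        ring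
      have hjq : (J.card : ℚ) = 4 := by exact_mod_cast hc4
      have hkq : (3:ℚ) ≤ (K.card : ℚ) := by exact_mod_cast hK3
      rw [← hsplit]
      rw [hcast] at hsd_le
      linarith

variable (G F) in
noncomputable def fbf (z : V) : V :=
  if h : (FBset G F z).Nonempty then h.choose else z

lemma fbf_mem {z : V} (h : (FBset G F z).Nonempty) : fbf G F z ∈ FBset G F z := by
  rw [fbf, dif_pos h]
  exact h.choose_spec

variable (G F) in
noncomputable def pay (x z : V) : ℚ :=
  (if hdeg G F z = 2 ∧ x ∈ NA G F z then 2 else 0) +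
  (if hdeg G F z = 3 ∧ x ∈ elig G F z then ((elig G F z).card : ℚ)⁻¹ else 0) +
  (if hdeg G F z = 3 ∧ elig G F z = ∅ ∧ x = fbf G F z then 1 else 0)

variable (G F) in
noncomputable def A2 : Finset V := (Aset F).filter (fun v => hdeg G F v = 2)
variable (G F) in
noncomputable def A3 : Finset V := (Aset F).filter (fun v => hdeg G F v = 3)
variable (G F) in
noncomputable def A4 : Finset V := (Aset F).filter (fun v => hdeg G F v = 4)


lemma elig_sub_NA {z s : V} (h : s ∈ elig G F z) : s ∈ NA G F z :=
  (Finset.mem_filter.mp h).1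

lemma elig_strong {z s : V} (h : s ∈ elig G F z) : Strong G F s :=
  (Finset.mem_filter.mp h).2.1

lemma elig_notD {z s : V} (h : s ∈ elig G F z) : s ∉ Dset G F :=
  (Finset.mem_filter.mp h).2.2

lemma mem_A4 {x : V} : x ∈ A4 G F ↔ x ∈ Aset F ∧ hdeg G F x = 4 := Finset.mem_filter

lemma elig_sub_A4 {z : V} : elig G F z ⊆ A4 G F := by
  intro s hs
  exact mem_A4.mpr ⟨NA_sub_A (elig_sub_NA hs), (elig_strong hs).2⟩

lemma FBset_sub_A4 {z : V} : FBset G F z ⊆ A4 G F := by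
  intro u hu
  obtain ⟨huFN, hu4⟩ := Finset.mem_filter.mp hu
  exact mem_A4.mpr ⟨NA_sub_A (FN_subset_NA z huFN), hu4⟩

include hF hΔ hbad in
lemma row2 {z : V} (hz : z ∈ A2 G F) : ∑ x ∈ A4 G F, pay G F x z = 4 := by
  obtain ⟨hzA, hz2⟩ := Finset.mem_filter.mp hz
  have hsimp : ∀ x ∈ A4 G F, pay G F x z = if x ∈ NA G F z then 2 else 0 := by
    intro x _
    simp [pay, hz2]
  rw [Finset.sum_congr rfl hsimp, ← Finset.sum_filter]
  have hfe : (A4 G F).filter (fun x => x ∈ NA G F z) = NA G F z := by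
    apply Finset.Subset.antisymm
    · exact fun x hx => (Finset.mem_filter.mp hx).2
    · intro x hx
      refine Finset.mem_filter.mpr ⟨?_, hx⟩
      exact mem_A4.mpr ⟨NA_sub_A hx, A2_nbrs_A4 hF hΔ hbad hz2 hzA x hx⟩
  rw [hfe, Finset.sum_const, nsmul_eq_mul, ← hdeg, hz2]
  norm_num

include hF hΔ hbad in
lemma row3 {z : V} (hz : z ∈ A3 G F) : ∑ x ∈ A4 G F, pay G F x z = 1 := by
  obtain ⟨hzA, hz3⟩ := Finset.mem_filter.mp hz
  by_cases hel : elig G F z = ∅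
  · have hsimp : ∀ x ∈ A4 G F, pay G F x z = if x = fbf G F z then 1 else 0 := by
      intro x _
      simp [pay, hz3, hel]
    rw [Finset.sum_congr rfl hsimp, Finset.sum_ite_eq' (A4 G F) (fbf G F z) (fun _ => (1:ℚ))]
    rw [if_pos]
    exact FBset_sub_A4 (fbf_mem (FB_exists hF hΔ hbad hzA hz3 hel))
  · have hsimp : ∀ x ∈ A4 G F, pay G F x z =
        if x ∈ elig G F z then ((elig G F z).card : ℚ)⁻¹ else 0 := by
      intro x _
      simp [pay, hz3, hel]
    rw [Finset.sum_congr rfl hsimp, ← Finset.sum_filter]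
    have hfe : (A4 G F).filter (fun x => x ∈ elig G F z) = elig G F z := by
      apply Finset.Subset.antisymm
      · exact fun x hx => (Finset.mem_filter.mp hx).2
      · exact fun x hx => Finset.mem_filter.mpr ⟨elig_sub_A4 hx, hx⟩
    rw [hfe, Finset.sum_const, nsmul_eq_mul]
    apply mul_inv_cancel₀
    have : (elig G F z).Nonempty := Finset.nonempty_iff_ne_empty.mpr hel
    have := Finset.card_pos.mpr this
    positivity

include hF hΔ hbad in
lemma col {x : V} (hx : x ∈ A4 G F) :
    ∑ z ∈ A2 G F ∪ A3 G F, pay G F x z ≤ 2 := by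
  obtain ⟨hxA, hx4⟩ := mem_A4.mp hx
  set U := A2 G F ∪ A3 G F with hU
  have hUA : ∀ z ∈ U, z ∈ Aset F := by
    intro z hz
    rcases Finset.mem_union.mp hz with h | h
    · exact (Finset.mem_filter.mp h).1
    · exact (Finset.mem_filter.mp h).1
  have hexpand : ∑ z ∈ U, pay G F x z =
      (∑ z ∈ U, (if hdeg G F z = 2 ∧ x ∈ NA G F z then (2:ℚ) else 0)) +
      (∑ z ∈ U, (if hdeg G F z = 3 ∧ x ∈ elig G F z then ((elig G F z).card : ℚ)⁻¹ else 0)) +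
      (∑ z ∈ U, (if hdeg G F z = 3 ∧ elig G F z = ∅ ∧ x = fbf G F z then (1:ℚ) else 0)) := by
    rw [← Finset.sum_add_distrib, ← Finset.sum_add_distrib]
    rfl
  rw [hexpand]
  -- S1 bound
  have hS1 : (∑ z ∈ U, (if hdeg G F z = 2 ∧ x ∈ NA G F z then (2:ℚ) else 0)) =
      2 * ((U.filter (fun z => hdeg G F z = 2 ∧ x ∈ NA G F z)).card : ℚ) := by
    rw [← Finset.sum_filter, Finset.sum_const, nsmul_eq_mul, mul_comm]
  have hS1sub : U.filter (fun z => hdeg G F z = 2 ∧ x ∈ NA G F z) ⊆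
      (NA G F x).filter (fun z => hdeg G F z = 2) := by
    intro z hz
    obtain ⟨hzU, hz2, hxNA⟩ := Finset.mem_filter.mp hz
    exact Finset.mem_filter.mpr ⟨NA_symm (hUA z hzU) hxNA, hz2⟩
  -- S3 bound
  have hS3 : (∑ z ∈ U, (if hdeg G F z = 3 ∧ elig G F z = ∅ ∧ x = fbf G F z then (1:ℚ) else 0)) =
      ((U.filter (fun z => hdeg G F z = 3 ∧ elig G F z = ∅ ∧ x = fbf G F z)).card : ℚ) := by
    rw [← Finset.sum_filter, Finset.sum_const, nsmul_eq_mul, mul_one]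
  have hS3sub : U.filter (fun z => hdeg G F z = 3 ∧ elig G F z = ∅ ∧ x = fbf G F z) ⊆
      FN G F x := by
    intro z hz
    obtain ⟨hzU, hz3, hel, hxfb⟩ := Finset.mem_filter.mp hz
    have hmem : fbf G F z ∈ FBset G F z :=
      fbf_mem (FB_exists hF hΔ hbad (hUA z hzU) hz3 hel)
    have : fbf G F z ∈ FN G F z := (Finset.mem_filter.mp hmem).1
    rw [← hxfb] at this
    exact FN_symm hF this
  -- S2 bound
  have hS2sub : U.filter (fun z => hdeg G F z = 3 ∧ x ∈ elig G F z) ⊆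
      (NA G F x).filter (fun z => hdeg G F z = 3 ∧ x ∈ elig G F z) := by
    intro z hz
    obtain ⟨hzU, hz3, hxel⟩ := Finset.mem_filter.mp hz
    exact Finset.mem_filter.mpr
      ⟨NA_symm (hUA z hzU) (elig_sub_NA hxel), hz3, hxel⟩
  have hS2 : (∑ z ∈ U, (if hdeg G F z = 3 ∧ x ∈ elig G F z then ((elig G F z).card : ℚ)⁻¹ else 0)) ≤
      ∑ z ∈ (NA G F x).filter (fun z => hdeg G F z = 3 ∧ x ∈ elig G F z),
        ((elig G F z).card : ℚ)⁻¹ := by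
    rw [← Finset.sum_filter]
    apply Finset.sum_le_sum_of_subset_of_nonneg hS2sub
    intro z _ _
    positivity
  by_cases hxD : x ∈ Dset G F
  · -- S1 ≤ 2, S2 = 0, S3 = 0
    have h1 : ((U.filter (fun z => hdeg G F z = 2 ∧ x ∈ NA G F z)).card : ℚ) ≤ 1 := by
      have := le_trans (Finset.card_le_card hS1sub) (O1 hF hΔ hbad hx4 hxA)
      exact_mod_cast this
    have h2 : (∑ z ∈ U, (if hdeg G F z = 3 ∧ x ∈ elig G F z then ((elig G F z).card : ℚ)⁻¹ else 0)) = 0 := by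
      apply Finset.sum_eq_zero
      intro z _
      rw [if_neg]
      rintro ⟨-, hxel⟩
      exact (elig_notD hxel) hxD
    have h3 : (∑ z ∈ U, (if hdeg G F z = 3 ∧ elig G F z = ∅ ∧ x = fbf G F z then (1:ℚ) else 0)) = 0 := by
      apply Finset.sum_eq_zero
      intro z hzU
      rw [if_neg]
      rintro ⟨hz3, hel, hxfb⟩
      have := (FB1 hF hΔ hbad (hUA z hzU) hz3 hel
        (fbf_mem (FB_exists hF hΔ hbad (hUA z hzU) hz3 hel))).1
      rw [← hxfb] at this
      exact this hxD
    rw [h2, h3, hS1]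
    linarith
  · have h1 : (∑ z ∈ U, (if hdeg G F z = 2 ∧ x ∈ NA G F z then (2:ℚ) else 0)) = 0 := by
      apply Finset.sum_eq_zero
      intro z hzU
      rw [if_neg]
      rintro ⟨hz2, hxNA⟩
      exact hxD (Finset.mem_filter.mpr ⟨hxA, hx4,
        z, NA_symm (hUA z hzU) hxNA, hz2⟩)
    by_cases hstr : Strong G F x
    · have h3 : (∑ z ∈ U, (if hdeg G F z = 3 ∧ elig G F z = ∅ ∧ x = fbf G F z then (1:ℚ) else 0)) = 0 := by
        apply Finset.sum_eq_zero
        intro z hzU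
        rw [if_neg]
        rintro ⟨hz3, hel, hxfb⟩
        have := (FB1 hF hΔ hbad (hUA z hzU) hz3 hel
          (fbf_mem (FB_exists hF hΔ hbad (hUA z hzU) hz3 hel))).2
        rw [← hxfb] at this
        have := hstr.1
        omega
      have h2 := le_trans hS2 (HC hF hΔ hbad hxA hstr hxD)
      rw [h1, h3]
      linarith
    · have h2 : (∑ z ∈ U, (if hdeg G F z = 3 ∧ x ∈ elig G F z then ((elig G F z).card : ℚ)⁻¹ else 0)) = 0 := by
        apply Finset.sum_eq_zero
        intro z _
        rw [if_neg]
        rintro ⟨-, hxel⟩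
        exact hstr (elig_strong hxel)
      have hdx : dF F x ≤ 2 := by
        by_contra hd
        push_neg at hd
        exact hstr ⟨by omega, hx4⟩
      have h3 : ((U.filter (fun z => hdeg G F z = 3 ∧ elig G F z = ∅ ∧ x = fbf G F z)).card : ℚ) ≤ 2 := by
        have := Finset.card_le_card hS3sub
        rw [card_FN hF] at this
        exact_mod_cast le_trans this hdx
      rw [h1, h2, hS3]
      linarith

variable (G F) in
noncomputable def GA : SimpleGraph V where
  Adj a b := G.Adj a b ∧ a ∈ Aset F ∧ b ∈ Aset F
  symm := by
    constructor
    rintro a b ⟨h, ha, hb⟩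
    exact ⟨h.symm, hb, ha⟩
  loopless := by
    constructor
    rintro a ⟨h, -, -⟩
    exact G.loopless.irrefl a h

lemma GA_adj {a b : V} : (GA G F).Adj a b ↔ G.Adj a b ∧ a ∈ Aset F ∧ b ∈ Aset F :=
  Iff.rfl

lemma GA_nbr_mem {v : V} (hv : v ∈ Aset F) : (GA G F).neighborFinset v = NA G F v := by
  ext x
  rw [SimpleGraph.mem_neighborFinset, GA_adj, mem_NA]
  tauto

lemma GA_nbr_not_mem {v : V} (hv : v ∉ Aset F) : (GA G F).neighborFinset v = ∅ := by
  ext x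
  rw [SimpleGraph.mem_neighborFinset, GA_adj]
  simp only [Finset.notMem_empty, iff_false]
  tauto

lemma GA_sum_deg : ∑ v ∈ Aset F, hdeg G F v = 2 * (GA G F).edgeFinset.card := by
  rw [← SimpleGraph.sum_degrees_eq_twice_card_edges]
  rw [← Finset.sum_subset (Finset.subset_univ (Aset F))
    (fun v _ hv => by rw [SimpleGraph.degree, GA_nbr_not_mem hv, Finset.card_empty])]
  apply Finset.sum_congr rfl
  intro v hv
  rw [SimpleGraph.degree, GA_nbr_mem hv, hdeg]

lemma GA_edge_set : {e ∈ G.edgeSet | ∀ x ∈ e, x ∈ Aset F} = ↑(GA G F).edgeFinset := by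
  ext e
  induction e with
  | _ a b =>
    simp only [Set.mem_setOf_eq, Finset.coe_sort_coe, Finset.mem_coe,
      SimpleGraph.mem_edgeFinset, SimpleGraph.mem_edgeSet, GA_adj, Sym2.mem_iff]
    constructor
    · rintro ⟨hadj, hall⟩
      exact ⟨hadj, hall a (Or.inl rfl), hall b (Or.inr rfl)⟩
    · rintro ⟨hadj, ha, hb⟩
      refine ⟨hadj, ?_⟩
      rintro x (rfl | rfl)
      · exact ha
      · exact hb

include hF hΔ hbad in
lemma class_sum : (∑ v ∈ Aset F, hdeg G F v) =
    2 * (A2 G F).card + 3 * (A3 G F).card + 4 * (A4 G F).card ∧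
    (Aset F).card = (A2 G F).card + (A3 G F).card + (A4 G F).card := by
  have hA2eq : (Aset F).filter (fun x => hdeg G F x = 2) = A2 G F := rfl
  have hsplit1 := Finset.sum_filter_add_sum_filter_not (Aset F)
    (fun v => hdeg G F v = 2) (fun v => hdeg G F v)
  set B := (Aset F).filter (fun v => ¬ hdeg G F v = 2) with hB
  have hsplit2 := Finset.sum_filter_add_sum_filter_not B
    (fun v => hdeg G F v = 3) (fun v => hdeg G F v)
  have hB3 : B.filter (fun v => hdeg G F v = 3) = A3 G F := by
    ext v
    simp only [Finset.mem_filter, hB, A3]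
    constructor
    · rintro ⟨⟨hA, -⟩, h3⟩; exact ⟨hA, h3⟩
    · rintro ⟨hA, h3⟩; exact ⟨⟨hA, by omega⟩, h3⟩
  have hB4 : B.filter (fun v => ¬ hdeg G F v = 3) = A4 G F := by
    ext v
    simp only [Finset.mem_filter, hB, A4]
    constructor
    · rintro ⟨⟨hA, h2⟩, h3⟩
      refine ⟨hA, ?_⟩
      have := hdeg_ge_two hF hΔ hbad hA
      have := hdeg_le hΔ (F := F) v
      omega
    · rintro ⟨hA, h4⟩
      exact ⟨⟨hA, by omega⟩, by omega⟩
  have e2 : ∑ v ∈ A2 G F, hdeg G F v = 2 * (A2 G F).card := by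
    calc ∑ v ∈ A2 G F, hdeg G F v = ∑ _v ∈ A2 G F, 2 :=
        Finset.sum_congr rfl (fun v hv => (Finset.mem_filter.mp hv).2)
      _ = 2 * (A2 G F).card := by rw [Finset.sum_const, smul_eq_mul, mul_comm]
  have e3 : ∑ v ∈ A3 G F, hdeg G F v = 3 * (A3 G F).card := by
    calc ∑ v ∈ A3 G F, hdeg G F v = ∑ _v ∈ A3 G F, 3 :=
        Finset.sum_congr rfl (fun v hv => (Finset.mem_filter.mp hv).2)
      _ = 3 * (A3 G F).card := by rw [Finset.sum_const, smul_eq_mul, mul_comm]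
  have e4 : ∑ v ∈ A4 G F, hdeg G F v = 4 * (A4 G F).card := by
    calc ∑ v ∈ A4 G F, hdeg G F v = ∑ _v ∈ A4 G F, 4 :=
        Finset.sum_congr rfl (fun v hv => (Finset.mem_filter.mp hv).2)
      _ = 4 * (A4 G F).card := by rw [Finset.sum_const, smul_eq_mul, mul_comm]
  rw [hA2eq] at hsplit1
  rw [hB3, hB4] at hsplit2
  constructor
  · rw [← hsplit1, ← hsplit2, e2, e3, e4]
    ring
  · have hc1 := Finset.card_filter_add_card_filter_not
      (s := Aset F) (p := fun v => hdeg G F v = 2)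
    have hc2 := Finset.card_filter_add_card_filter_not
      (s := B) (p := fun v => hdeg G F v = 3)
    rw [hB3, hB4] at hc2
    rw [hA2eq] at hc1
    rw [← hc1, ← hc2]
    omega

include hF hΔ hbad in
lemma key_count :
    4 * ((A2 G F).card : ℚ) + ((A3 G F).card : ℚ) ≤ 2 * ((A4 G F).card : ℚ) := by
  have hdisj : Disjoint (A2 G F) (A3 G F) := by
    rw [Finset.disjoint_left]
    intro z h2 h3
    have := (Finset.mem_filter.mp h2).2
    have := (Finset.mem_filter.mp h3).2
    omega
  have hbig : ∑ z ∈ A2 G F ∪ A3 G F, ∑ x ∈ A4 G F, pay G F x z =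
      4 * ((A2 G F).card : ℚ) + ((A3 G F).card : ℚ) := by
    rw [Finset.sum_union hdisj]
    rw [Finset.sum_congr rfl (fun z hz => row2 hF hΔ hbad hz),
      Finset.sum_congr rfl (fun z hz => row3 hF hΔ hbad hz)]
    rw [Finset.sum_const, Finset.sum_const, nsmul_eq_mul, nsmul_eq_mul]
    ring
  have hswap : ∑ z ∈ A2 G F ∪ A3 G F, ∑ x ∈ A4 G F, pay G F x z =
      ∑ x ∈ A4 G F, ∑ z ∈ A2 G F ∪ A3 G F, pay G F x z := Finset.sum_comm
  have hcol : ∑ x ∈ A4 G F, ∑ z ∈ A2 G F ∪ A3 G F, pay G F x z ≤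
      2 * ((A4 G F).card : ℚ) := by
    calc ∑ x ∈ A4 G F, ∑ z ∈ A2 G F ∪ A3 G F, pay G F x z
        ≤ ∑ _x ∈ A4 G F, (2:ℚ) := Finset.sum_le_sum (fun x hx => col hF hΔ hbad hx)
      _ = 2 * ((A4 G F).card : ℚ) := by
          rw [Finset.sum_const, nsmul_eq_mul, mul_comm]
  rw [← hbig, hswap]
  exact hcol

include hF hΔ hbad in
lemma final_contra (hmad : MadLt G (33/10 : ℚ)) (hAne : (Aset F).Nonempty) : False := by
  have hclass := class_sum hF hΔ hbad
  have hkey := key_count hF hΔ hbad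
  have hhs := GA_sum_deg (G := G) (F := F)
  have hmad' := hmad (Aset F) hAne
  rw [GA_edge_set, Set.ncard_coe_finset] at hmad'
  set a2 := (A2 G F).card
  set a3 := (A3 G F).card
  set a4 := (A4 G F).card
  set E := (GA G F).edgeFinset.card
  have h1 : 2 * E = 2 * a2 + 3 * a3 + 4 * a4 := by
    rw [← hhs, hclass.1]
  have h2 : (Aset F).card = a2 + a3 + a4 := hclass.2
  have hq1 : 2 * (E : ℚ) = 2 * a2 + 3 * a3 + 4 * a4 := by exact_mod_cast h1
  have hq2 : ((Aset F).card : ℚ) = a2 + a3 + a4 := by exact_mod_cast h2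
  have hpos : 1 ≤ ((Aset F).card : ℚ) := by
    have := Finset.card_pos.mpr hAne
    exact_mod_cast this
  rw [hq2] at hmad' hpos
  linarith

include hF hΔ in
lemma core_good (hmad : MadLt G (33/10 : ℚ)) (hne : F.Nonempty)
    (hcon : ¬ ∃ e ∈ F, (conflictsIn G F e).card ≤ 11) : False := by
  push_neg at hcon
  have hbad : ∀ e ∈ F, 12 ≤ (conflictsIn G F e).card := by
    intro e he
    have := hcon e he
    omega
  obtain ⟨e0, he0⟩ := hne
  have hAne : (Aset F).Nonempty := ⟨e0.out.1, mem_A_of_mem he0 (Sym2.out_fst_mem e0)⟩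
  exact final_contra hF hΔ hbad hmad hAne

end Core
end InjAux


theorem stmt_17 {V : Type} [Fintype V] (G : SimpleGraph V) [DecidableRel G.Adj]
    (hΔ : G.maxDegree = 4) (hmad : MadLt G (33/10 : ℚ)) :
    injChromIndex G ≤ 12 := by
  classical
  have hgood : ∀ F : Finset (Sym2 V), (∀ e ∈ F, e ∈ G.edgeSet) → F.Nonempty →
      ∃ e ∈ F, (InjAux.conflictsIn G F e).card ≤ 11 := by
    intro F hF hne
    by_contra hcon
    exact InjAux.core_good hF hΔ hmad hne hcon
  obtain ⟨φ, hφ⟩ := InjAux.greedy G hgood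
    (G.edgeSet.toFinite.toFinset) (fun e he => (Set.Finite.mem_toFinset _).mp he)
  refine Nat.sInf_le ⟨fun e => φ e, ?_⟩
  intro e e' hne hs
  exact hφ e ((Set.Finite.mem_toFinset _).mpr e.2) e'
    ((Set.Finite.mem_toFinset _).mpr e'.2) hne hs
end

section
/- Let G be a graph with maximum degree Δ(G) = 4 and maximum average degree mad(G) < 18/5. Then χ'_inj(G) ≤ 14. -/
open SimpleGraph

open Finset
open scoped Classical

set_option linter.unusedSectionVars false

noncomputable section
namespace InjP

variable {V : Type} [Fintype V] (G : SimpleGraph V) [DecidableRel G.Adj] (F : Finset (Sym2 V))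

def vs : Finset V := Finset.univ.filter (fun v => ∃ e ∈ F, v ∈ e)

def nb (v : V) : Finset V :=
  Finset.univ.filter (fun x => G.Adj v x ∧ v ∈ vs F ∧ x ∈ vs F)

def dH (v : V) : ℕ := (nb G F v).card

def seenF (e : Sym2 V) : Finset (Sym2 V) := F.filter (fun e' => e' ≠ e ∧ Sees G e e')

def cA (e : Sym2 V) (w : V) : ℕ := ((seenF G F e).filter (fun e' => w ∈ e')).card

def Wse (u v : V) : Finset V := (nb G F u ∪ nb G F v) \ {u, v}

def wt (u : V) : ℕ := if (∃ x ∈ nb G F u, dH G F x = 3) then 3 else 2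

def n3 (v : V) : Finset V := (nb G F v).filter (fun x => dH G F x = 3)
def n4 (v : V) : Finset V := (nb G F v).filter (fun x => dH G F x = 4)

def D3f : Finset V := (vs F).filter (fun v => dH G F v = 3)
def D4f : Finset V := (vs F).filter (fun v => dH G F v = 4)

lemma wt_le_3 (u : V) : wt G F u ≤ 3 := by
  rw [wt]; split <;> omega


lemma sees_symm {e e' : Sym2 V} (h : Sees G e e') : Sees G e' e := by
  rcases h with ⟨hd, x, hx, y, hy, hxy⟩ | ⟨x, y, z, h1, h2, h3, he, he'⟩
  · exact Or.inl ⟨fun a ha hae => hd a hae ha, y, hy, x, hx, hxy.symm⟩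
  · exact Or.inr ⟨x, y, z, h1, h2, h3, he', he⟩

lemma mem_nb {v x : V} : x ∈ nb G F v ↔ G.Adj v x ∧ v ∈ vs F ∧ x ∈ vs F := by
  simp [nb]

lemma nb_symm {v x : V} (h : x ∈ nb G F v) : v ∈ nb G F x := by
  rw [mem_nb] at h ⊢; exact ⟨h.1.symm, h.2.2, h.2.1⟩

lemma nb_subset_vs (v : V) : nb G F v ⊆ vs F := fun x hx => ((mem_nb G F).mp hx).2.2

lemma not_self_nb (v : V) : v ∉ nb G F v := by
  simp [mem_nb]

lemma ne_of_nb {v x : V} (h : x ∈ nb G F v) : x ≠ v :=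
  fun he => not_self_nb G F v (he ▸ h)

lemma mem_vs_of_mem_edge {u : V} {e : Sym2 V} (he : e ∈ F) (hu : u ∈ e) : u ∈ vs F := by
  simp only [vs, Finset.mem_filter, Finset.mem_univ, true_and]
  exact ⟨e, he, hu⟩

lemma Wse_swap (u v : V) : Wse G F u v = Wse G F v u := by
  rw [Wse, Wse, Finset.union_comm, Finset.pair_comm]

variable {G F}
variable (hd4 : ∀ v : V, G.degree v ≤ 4) (hFE : ∀ e ∈ F, e ∈ G.edgeSet)

include hd4 in
lemma dH_le_4 (v : V) : dH G F v ≤ 4 := by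
  have : nb G F v ⊆ G.neighborFinset v := by
    intro x hx; rw [mem_nb] at hx; exact (G.mem_neighborFinset v x).mpr hx.1
  calc dH G F v ≤ (G.neighborFinset v).card := Finset.card_le_card this
    _ = G.degree v := (G.card_neighborFinset_eq_degree v)
    _ ≤ 4 := hd4 v

include hFE in
lemma adj_of_mem {u v : V} (h : s(u,v) ∈ F) : G.Adj u v := (G.mem_edgeSet).mp (hFE _ h)

include hFE in
lemma nb_of_edge {u v : V} (h : s(u,v) ∈ F) : v ∈ nb G F u := by
  rw [mem_nb]
  exact ⟨adj_of_mem hFE h, mem_vs_of_mem_edge F h (by simp),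
    mem_vs_of_mem_edge F h (by simp)⟩

include hFE in
lemma not_diag_of_mem {e : Sym2 V} (h : e ∈ F) : ¬ e.IsDiag := by
  have := hFE e h
  exact (SimpleGraph.not_isDiag_of_mem_edgeSet G this)

/-- any two distinct members of the triangle vertex set are adjacent -/
lemma tri_adj {x y z a b : V} (h1 : G.Adj x y) (h2 : G.Adj y z) (h3 : G.Adj x z)
    (ha : a = x ∨ a = y ∨ a = z) (hb : b = x ∨ b = y ∨ b = z) (hab : a ≠ b) :
    G.Adj a b := by
  rcases ha with rfl | rfl | rfl <;> rcases hb with rfl | rfl | rfl <;>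
    first
      | exact absurd rfl hab
      | assumption
      | exact h1.symm
      | exact h2.symm
      | exact h3.symm

lemma mem_tri {x y z a : V} {e : Sym2 V}
    (he : e ∈ ({s(x, y), s(y, z), s(x, z)} : Set (Sym2 V))) (hae : a ∈ e) :
    a = x ∨ a = y ∨ a = z := by
  rcases he with rfl | rfl | rfl <;> rcases Sym2.mem_iff.mp hae with rfl | rfl <;> tauto

lemma exists_not_mem_pair {u v : V} {e' : Sym2 V} (hnd : ¬ e'.IsDiag)
    (hne : e' ≠ s(u,v)) : ∃ w ∈ e', w ∉ s(u,v) := by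
  by_contra hc
  push_neg at hc
  induction e' using Sym2.inductionOn with
  | hf a b =>
    have ha := hc a (by simp)
    have hb := hc b (by simp)
    rw [Sym2.mem_iff] at ha hb
    rw [Sym2.isDiag_iff_proj_eq] at hnd
    apply hne
    rcases ha with rfl | rfl <;> rcases hb with rfl | rfl <;>
      first | exact absurd rfl hnd | rw [Sym2.eq_swap] | rfl

include hFE in
lemma seen_endpoint {u v : V} {e' : Sym2 V} (huv : s(u,v) ∈ F)
    (h : e' ∈ seenF G F s(u,v)) : ∃ w ∈ Wse G F u v, w ∈ e' := by
  rw [seenF, Finset.mem_filter] at h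
  obtain ⟨he'F, hne, hsees⟩ := h
  have hu : u ∈ vs F := mem_vs_of_mem_edge F huv (by simp)
  have hv : v ∈ vs F := mem_vs_of_mem_edge F huv (by simp)
  rcases hsees with ⟨hd, x, hx, y, hy, hxy⟩ | ⟨x, y, z, h1, h2, h3, he, he'⟩
  · refine ⟨y, ?_, hy⟩
    have hyvs : y ∈ vs F := mem_vs_of_mem_edge F he'F hy
    have hyu : y ≠ u := fun h => (hd u (by simp)) (h ▸ hy)
    have hyv : y ≠ v := fun h => (hd v (by simp)) (h ▸ hy)
    rw [Wse, Finset.mem_sdiff, Finset.mem_union]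
    refine ⟨?_, by simp [hyu, hyv]⟩
    rcases Sym2.mem_iff.mp hx with rfl | rfl
    · exact Or.inl ((mem_nb G F).mpr ⟨hxy, hu, hyvs⟩)
    · exact Or.inr ((mem_nb G F).mpr ⟨hxy, hv, hyvs⟩)
  · obtain ⟨w, hwe', hw⟩ := exists_not_mem_pair (not_diag_of_mem hFE he'F) hne
    refine ⟨w, ?_, hwe'⟩
    have hwvs : w ∈ vs F := mem_vs_of_mem_edge F he'F hwe'
    have hwu : w ≠ u := fun h => hw (h ▸ (by simp : u ∈ s(u,v)))
    have hwv : w ≠ v := fun h => hw (h ▸ (by simp : v ∈ s(u,v)))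
    have hut : u = x ∨ u = y ∨ u = z := mem_tri he (by simp)
    have hwt : w = x ∨ w = y ∨ w = z := mem_tri he' hwe'
    have hadj : G.Adj u w := tri_adj h1 h2 h3 hut hwt (fun h => hwu h.symm)
    rw [Wse, Finset.mem_sdiff, Finset.mem_union]
    exact ⟨Or.inl ((mem_nb G F).mpr ⟨hadj, hu, hwvs⟩), by simp [hwu, hwv]⟩

include hFE in
lemma sum_cA_ge (hbad : ∀ e ∈ F, 14 ≤ (seenF G F e).card) {u v : V} (huv : s(u,v) ∈ F) :
    14 ≤ ∑ w ∈ Wse G F u v, cA G F s(u,v) w := by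
  refine le_trans (hbad _ huv) ?_
  calc (seenF G F s(u,v)).card
      ≤ ((Wse G F u v).biUnion (fun w => (seenF G F s(u,v)).filter (fun e' => w ∈ e'))).card := by
        apply Finset.card_le_card
        intro e' he'
        obtain ⟨w, hw, hwe'⟩ := seen_endpoint hFE huv he'
        exact Finset.mem_biUnion.mpr ⟨w, hw, Finset.mem_filter.mpr ⟨he', hwe'⟩⟩
    _ ≤ _ := Finset.card_biUnion_le

include hFE in
lemma cA_le_dH {e : Sym2 V} (w : V) : cA G F e w ≤ dH G F w := by
  rw [cA, dH]
  refine le_trans (Finset.card_le_card ?_) (Finset.card_image_le (f := fun t => s(w,t)))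
  intro e' he'
  rw [Finset.mem_filter] at he'
  obtain ⟨hs, hwe'⟩ := he'
  have he'F : e' ∈ F := Finset.mem_filter.mp (by exact hs) |>.1
  obtain ⟨t, rfl⟩ := Sym2.mem_iff_exists.mp hwe'
  have hadj : G.Adj w t := adj_of_mem hFE he'F
  refine Finset.mem_image.mpr ⟨t, ?_, rfl⟩
  exact (mem_nb G F).mpr ⟨hadj, mem_vs_of_mem_edge F he'F (by simp),
    mem_vs_of_mem_edge F he'F (by simp)⟩

include hFE in
/-- an edge containing `w` seen by `s(u,v)` cannot also contain `u`,
provided `w` is a neighbor of `u` but not of `v` (and `w ≠ v`). -/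
lemma seen_at_not_u {u v w : V} {e' : Sym2 V} (hvvs : v ∈ vs F)
    (hw : w ∈ nb G F u) (hwnv : w ∉ nb G F v)
    (hwv : w ≠ v) (he' : e' ∈ seenF G F s(u,v)) (hwe' : w ∈ e') : u ∉ e' := by
  intro hue'
  rw [seenF, Finset.mem_filter] at he'
  obtain ⟨he'F, hne, hsees⟩ := he'
  have hwu : w ≠ u := ne_of_nb G F hw
  rcases hsees with ⟨hd, _⟩ | ⟨x, y, z, h1, h2, h3, he, he2⟩
  · exact hd u (by simp) hue'
  · have hvt : v = x ∨ v = y ∨ v = z := mem_tri he (by simp)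
    have hwt : w = x ∨ w = y ∨ w = z := mem_tri he2 hwe'
    have hadj : G.Adj v w := tri_adj h1 h2 h3 hvt hwt (fun h => hwv h.symm)
    exact hwnv ((mem_nb G F).mpr ⟨hadj, hvvs, ((mem_nb G F).mp hw).2.2⟩)

include hFE in
lemma cA_le_dH_sub {u v w : V} (hvvs : v ∈ vs F)
    (hw : w ∈ nb G F u) (hwnv : w ∉ nb G F v) (hwv : w ≠ v) :
    cA G F s(u,v) w + 1 ≤ dH G F w := by
  have hwu : w ≠ u := ne_of_nb G F hw
  have huw : u ∈ nb G F w := nb_symm G F hw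
  have hsub : (seenF G F s(u,v)).filter (fun e' => w ∈ e') ⊆
      ((nb G F w).erase u).image (fun t => s(w,t)) := by
    intro e' he'
    rw [Finset.mem_filter] at he'
    obtain ⟨hs, hwe'⟩ := he'
    have he'F : e' ∈ F := (Finset.mem_filter.mp hs).1
    obtain ⟨t, rfl⟩ := Sym2.mem_iff_exists.mp hwe'
    have hadj : G.Adj w t := adj_of_mem hFE he'F
    have htu : t ≠ u := by
      intro rfl'
      exact seen_at_not_u hFE hvvs hw hwnv hwv hs hwe' (rfl' ▸ (by simp : t ∈ s(w,t)))
    refine Finset.mem_image.mpr ⟨t, Finset.mem_erase.mpr ⟨htu, ?_⟩, rfl⟩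
    exact (mem_nb G F).mpr ⟨hadj, mem_vs_of_mem_edge F he'F (by simp),
      mem_vs_of_mem_edge F he'F (by simp)⟩
  have h1 : cA G F s(u,v) w ≤ ((nb G F w).erase u).card :=
    le_trans (Finset.card_le_card hsub) Finset.card_image_le
  have h2 : ((nb G F w).erase u).card = dH G F w - 1 := Finset.card_erase_of_mem huw
  have h3 : 1 ≤ dH G F w := Finset.card_pos.mpr ⟨u, huw⟩
  omega

lemma mem_Wse {u v w : V} : w ∈ Wse G F u v ↔
    (w ∈ nb G F u ∨ w ∈ nb G F v) ∧ w ≠ u ∧ w ≠ v := by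
  rw [Wse, Finset.mem_sdiff, Finset.mem_union]
  simp

include hFE in
lemma cA_le_3 {u v w : V} (huvs : u ∈ vs F) (hvvs : v ∈ vs F) (hd4 : ∀ x, G.degree x ≤ 4)
    (hw : w ∈ Wse G F u v) (hwC : w ∉ nb G F u ∩ nb G F v) :
    cA G F s(u,v) w + 1 ≤ 4 := by
  rw [mem_Wse] at hw
  obtain ⟨hor, hwu, hwv⟩ := hw
  rw [Finset.mem_inter] at hwC
  push_neg at hwC
  rcases hor with h | h
  · exact le_trans (cA_le_dH_sub hFE hvvs h (hwC h) hwv) (dH_le_4 hd4 w)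
  · have : cA G F s(u,v) w = cA G F s(v,u) w := by rw [Sym2.eq_swap]
    rw [this]
    refine le_trans (cA_le_dH_sub hFE huvs h ?_ hwu) (dH_le_4 hd4 w)
    intro hwu'
    exact (hwC hwu') h

include hFE in
lemma C_subset_W {u v : V} : nb G F u ∩ nb G F v ⊆ Wse G F u v := by
  intro w hw
  rw [Finset.mem_inter] at hw
  rw [mem_Wse]
  exact ⟨Or.inl hw.1, ne_of_nb G F hw.1, ne_of_nb G F hw.2⟩

include hFE in
lemma W_card {u v : V} (huv : s(u,v) ∈ F) :
    (Wse G F u v).card + 2 + (nb G F u ∩ nb G F v).card = dH G F u + dH G F v := by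
  have hvnb : v ∈ nb G F u := nb_of_edge hFE huv
  have hunb : u ∈ nb G F v := nb_symm G F hvnb
  have huv' : u ≠ v := (adj_of_mem hFE huv).ne
  have hsub : ({u,v} : Finset V) ⊆ nb G F u ∪ nb G F v := by
    intro x hx
    rcases Finset.mem_insert.mp hx with rfl | hx
    · exact Finset.mem_union_right _ hunb
    · exact Finset.mem_union_left _ (Finset.mem_singleton.mp hx ▸ hvnb)
  have h1 : (nb G F u ∪ nb G F v).card + (nb G F u ∩ nb G F v).card
      = dH G F u + dH G F v := Finset.card_union_add_card_inter _ _
  have h2 : (Wse G F u v).card = (nb G F u ∪ nb G F v).card - ({u,v} : Finset V).card :=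
    Finset.card_sdiff_of_subset hsub
  have h3 : ({u,v} : Finset V).card = 2 := Finset.card_pair huv'
  have h4 : ({u,v} : Finset V).card ≤ (nb G F u ∪ nb G F v).card := Finset.card_le_card hsub
  omega

include hd4 hFE in
lemma key_count (hbad : ∀ e ∈ F, 14 ≤ (seenF G F e).card) {u v : V} (huv : s(u,v) ∈ F) :
    14 ≤ 3 * (Wse G F u v).card + (nb G F u ∩ nb G F v).card := by
  have huvs : u ∈ vs F := mem_vs_of_mem_edge F huv (by simp)
  have hvvs : v ∈ vs F := mem_vs_of_mem_edge F huv (by simp)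
  have hsum := sum_cA_ge hFE hbad huv
  have hper : ∀ w ∈ Wse G F u v, cA G F s(u,v) w ≤
      (if w ∈ nb G F u ∩ nb G F v then 4 else 3) := by
    intro w hw
    split
    · exact le_trans (cA_le_dH hFE w) (dH_le_4 hd4 w)
    · next h => have := cA_le_3 hFE huvs hvvs hd4 hw h; omega
  have h2 : ∑ w ∈ Wse G F u v, cA G F s(u,v) w ≤
      ∑ w ∈ Wse G F u v, (if w ∈ nb G F u ∩ nb G F v then 4 else 3) :=
    Finset.sum_le_sum hper
  have h3 : ∑ w ∈ Wse G F u v, (if w ∈ nb G F u ∩ nb G F v then 4 else 3)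
      = 3 * (Wse G F u v).card + (nb G F u ∩ nb G F v).card := by
    have : ∀ w, (if w ∈ nb G F u ∩ nb G F v then 4 else 3)
        = 3 + (if w ∈ nb G F u ∩ nb G F v then 1 else 0) := by
      intro w; split <;> rfl
    rw [Finset.sum_congr rfl (fun w _ => this w), Finset.sum_add_distrib,
      Finset.sum_const, ← Finset.card_filter]
    have hfe : (Wse G F u v).filter (fun w => w ∈ nb G F u ∩ nb G F v)
        = nb G F u ∩ nb G F v := by
      rw [Finset.filter_mem_eq_inter, Finset.inter_eq_right.mpr (C_subset_W hFE)]
    rw [hfe, smul_eq_mul]; ring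
  omega

include hd4 hFE in
lemma deg_sum_ge_7 (hbad : ∀ e ∈ F, 14 ≤ (seenF G F e).card) {u v : V} (huv : s(u,v) ∈ F) :
    7 ≤ dH G F u + dH G F v := by
  have h1 := key_count hd4 hFE hbad huv
  have h2 := W_card hFE huv
  have h3 := dH_le_4 (F := F) hd4 u
  have h4 := dH_le_4 (F := F) hd4 v
  omega

include hd4 hFE in
lemma deg3_facts (hbad : ∀ e ∈ F, 14 ≤ (seenF G F e).card) {u v : V} (huv : s(u,v) ∈ F)
    (h3 : dH G F u = 3) :
    dH G F v = 4 ∧ nb G F u ∩ nb G F v = ∅ ∧ (Wse G F u v).card = 5 := by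
  have h1 := key_count hd4 hFE hbad huv
  have h2 := W_card hFE huv
  have h4 := dH_le_4 (F := F) hd4 v
  have h5 : (nb G F u ∩ nb G F v).card = 0 ∧ dH G F v = 4 ∧ (Wse G F u v).card = 5 := by
    omega
  exact ⟨h5.2.1, Finset.card_eq_zero.mp h5.1, h5.2.2⟩

include hd4 hFE in
lemma deg3_cA_ge2 (hbad : ∀ e ∈ F, 14 ≤ (seenF G F e).card) {u v : V} (huv : s(u,v) ∈ F)
    (h3 : dH G F u = 3) : ∀ w ∈ Wse G F u v, 2 ≤ cA G F s(u,v) w := by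
  intro w hw
  have huvs : u ∈ vs F := mem_vs_of_mem_edge F huv (by simp)
  have hvvs : v ∈ vs F := mem_vs_of_mem_edge F huv (by simp)
  obtain ⟨hv4, hC, hW5⟩ := deg3_facts hd4 hFE hbad huv h3
  have hsum := sum_cA_ge hFE hbad huv
  have hsplit : cA G F s(u,v) w + ∑ x ∈ (Wse G F u v).erase w, cA G F s(u,v) x
      = ∑ x ∈ Wse G F u v, cA G F s(u,v) x := by
    rw [add_comm]; exact Finset.sum_erase_add _ _ hw
  have hbound : ∑ x ∈ (Wse G F u v).erase w, cA G F s(u,v) x ≤ 4 * 3 := by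
    have hcard : ((Wse G F u v).erase w).card = 4 := by
      rw [Finset.card_erase_of_mem hw, hW5]
    calc ∑ x ∈ (Wse G F u v).erase w, cA G F s(u,v) x
        ≤ ((Wse G F u v).erase w).card * 3 := by
          apply Finset.sum_le_card_nsmul
          intro x hx
          have hxW : x ∈ Wse G F u v := Finset.mem_of_mem_erase hx
          have hxC : x ∉ nb G F u ∩ nb G F v := by rw [hC]; simp
          have := cA_le_3 hFE huvs hvvs hd4 hxW hxC
          omega
      _ = 4 * 3 := by rw [hcard]
  omega

include hd4 hFE in
lemma sum_dH_ge_19 (hbad : ∀ e ∈ F, 14 ≤ (seenF G F e).card) {u v : V} (huv : s(u,v) ∈ F)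
    (h3 : dH G F u = 3) : 19 ≤ ∑ w ∈ Wse G F u v, dH G F w := by
  have huvs : u ∈ vs F := mem_vs_of_mem_edge F huv (by simp)
  have hvvs : v ∈ vs F := mem_vs_of_mem_edge F huv (by simp)
  obtain ⟨hv4, hC, hW5⟩ := deg3_facts hd4 hFE hbad huv h3
  have hsum := sum_cA_ge hFE hbad huv
  have hper : ∀ w ∈ Wse G F u v, cA G F s(u,v) w + 1 ≤ dH G F w := by
    intro w hw
    rw [mem_Wse] at hw
    obtain ⟨hor, hwu, hwv⟩ := hw
    rcases hor with h | h
    · have hnv : w ∉ nb G F v := by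
        intro hv'
        have : w ∈ nb G F u ∩ nb G F v := Finset.mem_inter.mpr ⟨h, hv'⟩
        rw [hC] at this; simp at this
      exact cA_le_dH_sub hFE hvvs h hnv hwv
    · have hnu : w ∉ nb G F u := by
        intro hu'
        have : w ∈ nb G F u ∩ nb G F v := Finset.mem_inter.mpr ⟨hu', h⟩
        rw [hC] at this; simp at this
      have heq : cA G F s(u,v) w = cA G F s(v,u) w := by rw [Sym2.eq_swap]
      rw [heq]
      exact cA_le_dH_sub hFE huvs h hnu hwu
  have h1 : ∑ w ∈ Wse G F u v, (cA G F s(u,v) w + 1) ≤ ∑ w ∈ Wse G F u v, dH G F w :=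
    Finset.sum_le_sum hper
  rw [Finset.sum_add_distrib, Finset.sum_const, hW5, smul_eq_mul] at h1
  omega

include hd4 hFE in
lemma no_two_small (hbad : ∀ e ∈ F, 14 ≤ (seenF G F e).card) {u v w1 w2 : V}
    (huv : s(u,v) ∈ F) (h3 : dH G F u = 3) (hw1 : w1 ∈ Wse G F u v) (hw2 : w2 ∈ Wse G F u v)
    (hne : w1 ≠ w2) : 7 ≤ dH G F w1 + dH G F w2 := by
  obtain ⟨hv4, hC, hW5⟩ := deg3_facts hd4 hFE hbad huv h3
  have h19 := sum_dH_ge_19 hd4 hFE hbad huv h3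
  have hw2' : w2 ∈ (Wse G F u v).erase w1 := Finset.mem_erase.mpr ⟨hne.symm, hw2⟩
  have e1 : ∑ x ∈ (Wse G F u v).erase w1, dH G F x + dH G F w1
      = ∑ x ∈ Wse G F u v, dH G F x := Finset.sum_erase_add _ _ hw1
  have e2 : ∑ x ∈ ((Wse G F u v).erase w1).erase w2, dH G F x + dH G F w2
      = ∑ x ∈ (Wse G F u v).erase w1, dH G F x := Finset.sum_erase_add _ _ hw2'
  have hcard : (((Wse G F u v).erase w1).erase w2).card = 3 := by
    rw [Finset.card_erase_of_mem hw2', Finset.card_erase_of_mem hw1, hW5]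
  have hb : ∑ x ∈ ((Wse G F u v).erase w1).erase w2, dH G F x ≤ 3 * 4 := by
    calc ∑ x ∈ ((Wse G F u v).erase w1).erase w2, dH G F x
        ≤ (((Wse G F u v).erase w1).erase w2).card * 4 :=
          Finset.sum_le_card_nsmul _ _ 4 (fun x _ => dH_le_4 hd4 x)
      _ = 3 * 4 := by rw [hcard]
  omega

lemma F_edge_exists {u : V} (hu : u ∈ vs F) : ∃ h, s(u,h) ∈ F := by
  rw [vs, Finset.mem_filter] at hu
  obtain ⟨-, e, heF, hue⟩ := hu
  obtain ⟨b, rfl⟩ := Sym2.mem_iff_exists.mp hue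
  exact ⟨b, heF⟩

include hd4 hFE in
lemma dH_ge_3 (hbad : ∀ e ∈ F, 14 ≤ (seenF G F e).card) {u : V} (hu : u ∈ vs F) :
    3 ≤ dH G F u := by
  obtain ⟨h, hF⟩ := F_edge_exists hu
  have h7 := deg_sum_ge_7 hd4 hFE hbad hF
  have h4 := dH_le_4 (F := F) hd4 h
  omega

include hd4 hFE in
/-- a degree-3 vertex has at most one degree-3 neighbor -/
lemma deg3_nbr_unique (hbad : ∀ e ∈ F, 14 ≤ (seenF G F e).card) {u a b : V}
    (hu : u ∈ vs F) (h3 : dH G F u = 3) (ha : a ∈ nb G F u) (hb : b ∈ nb G F u)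
    (hab : a ≠ b) (h3a : dH G F a = 3) (h3b : dH G F b = 3) : False := by
  obtain ⟨h, hF⟩ := F_edge_exists hu
  have hfacts := deg3_facts hd4 hFE hbad hF h3
  have hha : h ≠ a := fun he => by rw [he, h3a] at hfacts; omega
  have hhb : h ≠ b := fun he => by rw [he, h3b] at hfacts; omega
  have haW : a ∈ Wse G F u h := by
    rw [mem_Wse]; exact ⟨Or.inl ha, ne_of_nb G F ha, Ne.symm hha⟩
  have hbW : b ∈ Wse G F u h := by
    rw [mem_Wse]; exact ⟨Or.inl hb, ne_of_nb G F hb, Ne.symm hhb⟩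
  have := no_two_small hd4 hFE hbad hF h3 haW hbW hab
  omega

include hd4 hFE in
/-- no F-edge from `v` to a degree-3 vertex `x` if `v` has two other
distinct degree-3 neighbors -/
lemma no_deg3_F_edge (hbad : ∀ e ∈ F, 14 ≤ (seenF G F e).card) {v x a b : V}
    (hvx : s(v,x) ∈ F) (hx3 : dH G F x = 3) (ha : a ∈ nb G F v) (hb : b ∈ nb G F v)
    (hab : a ≠ b) (h3a : dH G F a = 3) (h3b : dH G F b = 3) (hax : a ≠ x) (hbx : b ≠ x) :
    False := by
  have hxv : s(x,v) ∈ F := by rwa [Sym2.eq_swap] at hvx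
  have haW : a ∈ Wse G F x v := by
    rw [mem_Wse]; exact ⟨Or.inr ha, hax, ne_of_nb G F ha⟩
  have hbW : b ∈ Wse G F x v := by
    rw [mem_Wse]; exact ⟨Or.inr hb, hbx, ne_of_nb G F hb⟩
  have := no_two_small hd4 hFE hbad hxv hx3 haW hbW hab
  omega

lemma cA_le_card {e : Sym2 V} {v : V} {T : Finset V}
    (h : ∀ t, s(v,t) ∈ seenF G F e → t ∈ T) : cA G F e v ≤ T.card := by
  rw [cA]
  refine le_trans (Finset.card_le_card ?_) (Finset.card_image_le (f := fun t => s(v,t)))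
  intro e' he'
  rw [Finset.mem_filter] at he'
  obtain ⟨hs, hve'⟩ := he'
  obtain ⟨t, rfl⟩ := Sym2.mem_iff_exists.mp hve'
  exact Finset.mem_image.mpr ⟨t, h t hs, rfl⟩

lemma seenF_subset_F {e : Sym2 V} : seenF G F e ⊆ F := Finset.filter_subset _ _

include hd4 hFE in
/-- L2: a degree-4 vertex cannot have three distinct degree-3 neighbors -/
lemma no_three_deg3_nbrs (hbad : ∀ e ∈ F, 14 ≤ (seenF G F e).card) {v u1 u2 u3 : V}
    (hv : v ∈ vs F) (hv4 : dH G F v = 4)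
    (h1 : u1 ∈ nb G F v) (h2 : u2 ∈ nb G F v) (h3 : u3 ∈ nb G F v)
    (h12 : u1 ≠ u2) (h13 : u1 ≠ u3) (h23 : u2 ≠ u3)
    (d1 : dH G F u1 = 3) (d2 : dH G F u2 = 3) (d3 : dH G F u3 = 3) : False := by
  have hu1vs : u1 ∈ vs F := nb_subset_vs G F _ h1
  obtain ⟨h, hF⟩ := F_edge_exists hu1vs
  obtain ⟨hh4, hC, hW5⟩ := deg3_facts hd4 hFE hbad hF d1
  by_cases hhv : h = v
  · subst hhv
    have haW : u2 ∈ Wse G F u1 h := by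
      rw [mem_Wse]; exact ⟨Or.inr h2, fun he => h12 he.symm, ne_of_nb G F h2⟩
    have hbW : u3 ∈ Wse G F u1 h := by
      rw [mem_Wse]; exact ⟨Or.inr h3, fun he => h13 he.symm, ne_of_nb G F h3⟩
    have := no_two_small hd4 hFE hbad hF d1 haW hbW h23
    omega
  · -- h ≠ v
    have hvnbu1 : v ∈ nb G F u1 := nb_symm G F h1
    have hvW : v ∈ Wse G F u1 h := by
      rw [mem_Wse]
      exact ⟨Or.inl hvnbu1, (ne_of_nb G F h1).symm, Ne.symm hhv⟩
    have hge2 : 2 ≤ cA G F s(u1,h) v := deg3_cA_ge2 hd4 hFE hbad hF d1 v hvW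
    -- now bound cA ≤ 1
    have hsub3 : ({u1,u2,u3} : Finset V) ⊆ nb G F v := by
      intro x hx
      rcases Finset.mem_insert.mp hx with rfl | hx
      · exact h1
      rcases Finset.mem_insert.mp hx with rfl | hx
      · exact h2
      · exact Finset.mem_singleton.mp hx ▸ h3
    have hcard3 : ({u1,u2,u3} : Finset V).card = 3 := by
      rw [Finset.card_insert_of_notMem (by simp [h12, h13]),
        Finset.card_insert_of_notMem (by simp [h23]), Finset.card_singleton]
    have hle1 : cA G F s(u1,h) v ≤ (nb G F v \ {u1,u2,u3}).card := by
      apply cA_le_card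
      intro t hts
      have htF : s(v,t) ∈ F := seenF_subset_F hts
      have htnb : t ∈ nb G F v := nb_of_edge hFE htF
      have htu1 : t ≠ u1 := by
        intro heq
        have hvnh : v ∉ nb G F h := by
          intro hc
          have : v ∈ nb G F u1 ∩ nb G F h := Finset.mem_inter.mpr ⟨hvnbu1, hc⟩
          rw [hC] at this; simp at this
        have := seen_at_not_u hFE (mem_vs_of_mem_edge F hF (by simp)) hvnbu1 hvnh
          (Ne.symm hhv) hts (by simp : v ∈ s(v,t))
        exact this (by rw [heq]; simp)
      have htu2 : t ≠ u2 := by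
        intro heq; rw [heq] at htF
        exact no_deg3_F_edge hd4 hFE hbad htF d2 h1 h3 h13 d1 d3 h12 h23.symm
      have htu3 : t ≠ u3 := by
        intro heq; rw [heq] at htF
        exact no_deg3_F_edge hd4 hFE hbad htF d3 h1 h2 h12 d1 d2 h13 h23
      rw [Finset.mem_sdiff]
      exact ⟨htnb, by simp [htu1, htu2, htu3]⟩
    have hcard : (nb G F v \ {u1,u2,u3}).card = 1 := by
      rw [Finset.card_sdiff_of_subset hsub3, hcard3]
      rw [show (nb G F v).card = dH G F v from rfl, hv4]
    omega

include hd4 hFE in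
/-- L1: a degree-4 vertex cannot have two distinct degree-3 neighbors one of
which itself has a degree-3 neighbor -/
lemma no_two_deg3_one_deep (hbad : ∀ e ∈ F, 14 ≤ (seenF G F e).card) {v u1 u2 x1 : V}
    (hv : v ∈ vs F) (hv4 : dH G F v = 4)
    (h1 : u1 ∈ nb G F v) (h2 : u2 ∈ nb G F v) (h12 : u1 ≠ u2)
    (d1 : dH G F u1 = 3) (d2 : dH G F u2 = 3)
    (hx1 : x1 ∈ nb G F u1) (dx1 : dH G F x1 = 3) : False := by
  have hu1vs : u1 ∈ vs F := nb_subset_vs G F _ h1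
  have hx1v : x1 ≠ v := fun he => by rw [he, hv4] at dx1; omega
  have hx1u1 : x1 ≠ u1 := ne_of_nb G F hx1
  have hu1v : u1 ≠ v := ne_of_nb G F h1
  have hu2v : u2 ≠ v := ne_of_nb G F h2
  -- s(u1, v) is not an F-edge
  have hnotF : s(u1,v) ∉ F := by
    intro huvF
    obtain ⟨-, hC', -⟩ := deg3_facts hd4 hFE hbad huvF d1
    by_cases hx1u2 : x1 = u2
    · have : x1 ∈ nb G F u1 ∩ nb G F v := Finset.mem_inter.mpr ⟨hx1, hx1u2 ▸ h2⟩
      rw [hC'] at this; simp at this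
    · have haW : x1 ∈ Wse G F u1 v := by
        rw [mem_Wse]; exact ⟨Or.inl hx1, hx1u1, hx1v⟩
      have hbW : u2 ∈ Wse G F u1 v := by
        rw [mem_Wse]; exact ⟨Or.inr h2, h12.symm, hu2v⟩
      have := no_two_small hd4 hFE hbad huvF d1 haW hbW hx1u2
      omega
  obtain ⟨h, hF⟩ := F_edge_exists hu1vs
  obtain ⟨hh4, hC, hW5⟩ := deg3_facts hd4 hFE hbad hF d1
  have hhv : h ≠ v := fun he => hnotF (he ▸ hF)
  have hhx1 : h ≠ x1 := fun he => by rw [← he, hh4] at dx1; omega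
  have hhu1 : h ≠ u1 := ne_of_nb G F (nb_of_edge hFE hF)
  have hnbu1 : nb G F u1 = {h, x1, v} := by
    symm
    apply Finset.eq_of_subset_of_card_le
    · intro x hx
      rcases Finset.mem_insert.mp hx with rfl | hx
      · exact nb_of_edge hFE hF
      rcases Finset.mem_insert.mp hx with rfl | hx
      · exact hx1
      · exact Finset.mem_singleton.mp hx ▸ nb_symm G F h1
    · rw [show (nb G F u1).card = dH G F u1 from rfl, d1]
      rw [Finset.card_insert_of_notMem (by simp [hhx1, hhv]),
        Finset.card_insert_of_notMem (by simp [hx1v]), Finset.card_singleton]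
  have hu1x1notF : s(u1,x1) ∉ F := by
    intro hc
    have := deg_sum_ge_7 hd4 hFE hbad hc
    rw [d1, dx1] at this; omega
  by_cases hvu2 : s(v,u2) ∈ F
  · -- e2 = s(u2,v) ∈ F
    have he2 : s(u2,v) ∈ F := by rwa [Sym2.eq_swap] at hvu2
    obtain ⟨-, hC2, -⟩ := deg3_facts hd4 hFE hbad he2 d2
    by_cases hx1u2 : x1 = u2
    · have : u1 ∈ nb G F u2 ∩ nb G F v :=
        Finset.mem_inter.mpr ⟨nb_symm G F (hx1u2 ▸ hx1), h1⟩
      rw [hC2] at this; simp at this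
    · have hu1W2 : u1 ∈ Wse G F u2 v := by
        rw [mem_Wse]; exact ⟨Or.inr h1, h12, hu1v⟩
      have hge2 : 2 ≤ cA G F s(u2,v) u1 := deg3_cA_ge2 hd4 hFE hbad he2 d2 u1 hu1W2
      have hle : cA G F s(u2,v) u1 ≤ (nb G F u1 \ {v, x1}).card := by
        apply cA_le_card
        intro t hts
        have htF : s(u1,t) ∈ F := seenF_subset_F hts
        have htnb : t ∈ nb G F u1 := nb_of_edge hFE htF
        have htv : t ≠ v := by intro heq; rw [heq] at htF; exact hnotF htF
        have htx1 : t ≠ x1 := by intro heq; rw [heq] at htF; exact hu1x1notF htF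
        rw [Finset.mem_sdiff]
        exact ⟨htnb, by simp [htv, htx1]⟩
      have hcard : (nb G F u1 \ {v, x1}).card = 1 := by
        have hsub : ({v, x1} : Finset V) ⊆ nb G F u1 := by
          intro x hx
          rcases Finset.mem_insert.mp hx with rfl | hx
          · exact nb_symm G F h1
          · exact Finset.mem_singleton.mp hx ▸ hx1
        rw [Finset.card_sdiff_of_subset hsub, Finset.card_pair (Ne.symm hx1v),
          show (nb G F u1).card = dH G F u1 from rfl, d1]
      omega
  · -- s(v,u2) ∉ F ; global count on s(u1,h) gives ≤ 13
    have hu1vsF : u1 ∈ vs F := hu1vs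
    have hhvs : h ∈ vs F := mem_vs_of_mem_edge F hF (by simp)
    have hsum := sum_cA_ge hFE hbad hF
    have hx1W : x1 ∈ Wse G F u1 h := by
      rw [mem_Wse]; exact ⟨Or.inl hx1, hx1u1, Ne.symm hhx1⟩
    have hvW : v ∈ Wse G F u1 h := by
      rw [mem_Wse]; exact ⟨Or.inl (nb_symm G F h1), Ne.symm hu1v, Ne.symm hhv⟩
    have hx1nh : x1 ∉ nb G F h := by
      intro hc
      have : x1 ∈ nb G F u1 ∩ nb G F h := Finset.mem_inter.mpr ⟨hx1, hc⟩
      rw [hC] at this; simp at this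
    have bx1 : cA G F s(u1,h) x1 ≤ 2 := by
      have := cA_le_dH_sub hFE hhvs hx1 hx1nh (Ne.symm hhx1)
      rw [dx1] at this; omega
    have bv : cA G F s(u1,h) v ≤ 2 := by
      have hle : cA G F s(u1,h) v ≤ (nb G F v \ {u1, u2}).card := by
        apply cA_le_card
        intro t hts
        have htF : s(v,t) ∈ F := seenF_subset_F hts
        have htnb : t ∈ nb G F v := nb_of_edge hFE htF
        have htu1 : t ≠ u1 := by
          intro heq; rw [heq] at htF
          rw [Sym2.eq_swap] at htF
          exact hnotF htF
        have htu2 : t ≠ u2 := by intro heq; rw [heq] at htF; exact hvu2 htF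
        rw [Finset.mem_sdiff]
        exact ⟨htnb, by simp [htu1, htu2]⟩
      have hcard : (nb G F v \ {u1, u2}).card = 2 := by
        have hsub : ({u1, u2} : Finset V) ⊆ nb G F v := by
          intro x hx
          rcases Finset.mem_insert.mp hx with rfl | hx
          · exact h1
          · exact Finset.mem_singleton.mp hx ▸ h2
        rw [Finset.card_sdiff_of_subset hsub, Finset.card_pair h12,
          show (nb G F v).card = dH G F v from rfl, hv4]
      omega
    have hx1vne : x1 ≠ v := hx1v
    have hvW' : v ∈ (Wse G F u1 h).erase x1 := Finset.mem_erase.mpr ⟨Ne.symm hx1vne, hvW⟩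
    have e1 : ∑ x ∈ (Wse G F u1 h).erase x1, cA G F s(u1,h) x + cA G F s(u1,h) x1
        = ∑ x ∈ Wse G F u1 h, cA G F s(u1,h) x := Finset.sum_erase_add _ _ hx1W
    have e2 : ∑ x ∈ ((Wse G F u1 h).erase x1).erase v, cA G F s(u1,h) x + cA G F s(u1,h) v
        = ∑ x ∈ (Wse G F u1 h).erase x1, cA G F s(u1,h) x := Finset.sum_erase_add _ _ hvW'
    have hcard : (((Wse G F u1 h).erase x1).erase v).card = 3 := by
      rw [Finset.card_erase_of_mem hvW', Finset.card_erase_of_mem hx1W, hW5]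
    have hb : ∑ x ∈ ((Wse G F u1 h).erase x1).erase v, cA G F s(u1,h) x ≤ 3 * 3 := by
      calc ∑ x ∈ ((Wse G F u1 h).erase x1).erase v, cA G F s(u1,h) x
          ≤ (((Wse G F u1 h).erase x1).erase v).card * 3 := by
            apply Finset.sum_le_card_nsmul
            intro x hx
            have hxW : x ∈ Wse G F u1 h :=
              Finset.mem_of_mem_erase (Finset.mem_of_mem_erase hx)
            have hxC : x ∉ nb G F u1 ∩ nb G F h := by rw [hC]; simp
            have := cA_le_3 hFE hu1vsF hhvs hd4 hxW hxC
            omega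
        _ = 3 * 3 := by rw [hcard]
    omega

include hd4 hFE in
lemma n3_card_add_n4_card (hbad : ∀ e ∈ F, 14 ≤ (seenF G F e).card) {u : V} (hu : u ∈ vs F) :
    (n3 G F u).card + (n4 G F u).card = dH G F u := by
  have heq : n4 G F u = (nb G F u).filter (fun x => ¬ dH G F x = 3) := by
    apply Finset.filter_congr
    intro x hx
    have h1 := dH_ge_3 hd4 hFE hbad (nb_subset_vs G F u hx)
    have h2 := dH_le_4 (F := F) hd4 x
    omega
  rw [n3, heq, Finset.card_filter_add_card_filter_not]
  rfl

include hd4 hFE in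
lemma recv6 (hbad : ∀ e ∈ F, 14 ≤ (seenF G F e).card) {u : V} (hu : u ∈ vs F)
    (h3 : dH G F u = 3) : wt G F u * (n4 G F u).card = 6 := by
  have hpart := n3_card_add_n4_card hd4 hFE hbad hu
  rw [h3] at hpart
  by_cases hex : ∃ x ∈ nb G F u, dH G F x = 3
  · obtain ⟨x, hx, hx3⟩ := hex
    have hwt : wt G F u = 3 := if_pos ⟨x, hx, hx3⟩
    have hcard1 : (n3 G F u).card = 1 := by
      apply Finset.card_eq_one.mpr
      refine ⟨x, ?_⟩
      apply Finset.eq_singleton_iff_unique_mem.mpr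
      refine ⟨Finset.mem_filter.mpr ⟨hx, hx3⟩, ?_⟩
      intro y hy
      rw [n3, Finset.mem_filter] at hy
      by_contra hyx
      exact deg3_nbr_unique hd4 hFE hbad hu h3 hy.1 hx hyx hy.2 hx3
    rw [hwt]; omega
  · have hwt : wt G F u = 2 := if_neg hex
    have hcard0 : (n3 G F u).card = 0 := by
      rw [Finset.card_eq_zero, Finset.eq_empty_iff_forall_notMem]
      intro x hx
      rw [n3, Finset.mem_filter] at hx
      exact hex ⟨x, hx.1, hx.2⟩
    rw [hwt]; omega

include hd4 hFE in
lemma paid4 (hbad : ∀ e ∈ F, 14 ≤ (seenF G F e).card) {v : V} (hv : v ∈ vs F)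
    (hv4 : dH G F v = 4) : ∑ u ∈ n3 G F v, wt G F u ≤ 4 := by
  have hmem : ∀ u ∈ n3 G F v, u ∈ nb G F v ∧ dH G F u = 3 := by
    intro u hu; exact Finset.mem_filter.mp hu
  rcases Nat.lt_or_ge (n3 G F v).card 2 with hk | hk
  · -- at most one element
    refine le_trans (Finset.sum_le_card_nsmul (n3 G F v) _ 3 (fun u _ => wt_le_3 G F u)) ?_
    simp only [smul_eq_mul]
    omega
  · rcases Nat.lt_or_ge (n3 G F v).card 3 with hk2 | hk3
    · -- exactly two elements : each weight ≤ 2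
      have hwt2 : ∀ u ∈ n3 G F v, wt G F u ≤ 2 := by
        intro u hu
        obtain ⟨hunb, hu3⟩ := hmem u hu
        rw [wt]
        split
        · next hex =>
            obtain ⟨x, hxnb, hx3⟩ := hex
            obtain ⟨u', hu', hne⟩ := Finset.exists_mem_ne (s := n3 G F v) (by omega) u
            obtain ⟨hu'nb, hu'3⟩ := hmem u' hu'
            exact absurd (no_two_deg3_one_deep hd4 hFE hbad hv hv4 hunb hu'nb hne.symm
              hu3 hu'3 hxnb hx3) (by simp)
        · omega
      refine le_trans (Finset.sum_le_card_nsmul (n3 G F v) _ 2 hwt2) ?_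
      simp only [smul_eq_mul]
      omega
    · -- at least three elements : contradiction
      exfalso
      obtain ⟨a, ha⟩ := Finset.card_pos.mp (by omega : 0 < (n3 G F v).card)
      obtain ⟨b, hb, hba⟩ := Finset.exists_mem_ne (s := n3 G F v) (by omega) a
      have hcd : 0 < ((n3 G F v) \ {a, b}).card := by
        have hsub : ({a, b} : Finset V) ⊆ n3 G F v := by
          intro x hx
          rcases Finset.mem_insert.mp hx with rfl | hx
          · exact ha
          · exact Finset.mem_singleton.mp hx ▸ hb
        have h2 : ({a, b} : Finset V).card ≤ 2 := Finset.card_insert_le _ _ |>.trans (by simp)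
        have := Finset.card_sdiff_of_subset hsub
        omega
      obtain ⟨c, hc⟩ := Finset.card_pos.mp hcd
      rw [Finset.mem_sdiff] at hc
      obtain ⟨hcn3, hcab⟩ := hc
      have hca : c ≠ a := fun he => hcab (by simp [he])
      have hcb : c ≠ b := fun he => hcab (by simp [he])
      obtain ⟨hanb, ha3⟩ := hmem a ha
      obtain ⟨hbnb, hb3⟩ := hmem b hb
      obtain ⟨hcnb, hc3⟩ := hmem c hcn3
      exact no_three_deg3_nbrs hd4 hFE hbad hv hv4 hanb hbnb hcnb hba.symm hca.symm hcb.symm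
        ha3 hb3 hc3

include hd4 hFE in
lemma six_le_four (hbad : ∀ e ∈ F, 14 ≤ (seenF G F e).card) :
    6 * (D3f G F).card ≤ 4 * (D4f G F).card := by
  set A := D3f G F with hA
  set B := D4f G F with hB
  have key : ∑ u ∈ A, ∑ v ∈ B, (if v ∈ nb G F u then wt G F u else 0)
      = ∑ v ∈ B, ∑ u ∈ A, (if v ∈ nb G F u then wt G F u else 0) := Finset.sum_comm
  have hL : ∀ u ∈ A, ∑ v ∈ B, (if v ∈ nb G F u then wt G F u else 0) = 6 := by
    intro u hu
    rw [hA, D3f, Finset.mem_filter] at hu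
    have hfe : B.filter (fun v => v ∈ nb G F u) = n4 G F u := by
      ext x
      rw [hB, D4f, n4, Finset.mem_filter, Finset.mem_filter, Finset.mem_filter]
      constructor
      · rintro ⟨⟨hxvs, hx4⟩, hxnb⟩
        exact ⟨hxnb, hx4⟩
      · rintro ⟨hxnb, hx4⟩
        exact ⟨⟨nb_subset_vs G F u hxnb, hx4⟩, hxnb⟩
    rw [← Finset.sum_filter, hfe, Finset.sum_const, smul_eq_mul, mul_comm]
    exact recv6 hd4 hFE hbad hu.1 hu.2
  have hR : ∀ v ∈ B, ∑ u ∈ A, (if v ∈ nb G F u then wt G F u else 0) ≤ 4 := by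
    intro v hv
    rw [hB, D4f, Finset.mem_filter] at hv
    have hfe : A.filter (fun u => v ∈ nb G F u) = n3 G F v := by
      ext x
      rw [hA, D3f, n3, Finset.mem_filter, Finset.mem_filter, Finset.mem_filter]
      constructor
      · rintro ⟨⟨hxvs, hx3⟩, hxnb⟩
        exact ⟨nb_symm G F hxnb, hx3⟩
      · rintro ⟨hxnb, hx3⟩
        exact ⟨⟨nb_subset_vs G F v hxnb, hx3⟩, nb_symm G F hxnb⟩
    rw [← Finset.sum_filter, hfe]
    exact paid4 hd4 hFE hbad hv.1 hv.2
  have hLs : ∑ u ∈ A, ∑ v ∈ B, (if v ∈ nb G F u then wt G F u else 0) = 6 * A.card := by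
    rw [Finset.sum_congr rfl hL, Finset.sum_const, smul_eq_mul, mul_comm]
  have hRs : ∑ v ∈ B, ∑ u ∈ A, (if v ∈ nb G F u then wt G F u else 0) ≤ 4 * B.card := by
    calc ∑ v ∈ B, ∑ u ∈ A, (if v ∈ nb G F u then wt G F u else 0)
        ≤ B.card * 4 := Finset.sum_le_card_nsmul _ _ 4 hR
      _ = 4 * B.card := by ring
  omega

variable (G F) in
def Hgr : SimpleGraph V where
  Adj a b := G.Adj a b ∧ a ∈ vs F ∧ b ∈ vs F
  symm := by constructor; intro a b h; exact ⟨h.1.symm, h.2.2, h.2.1⟩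
  loopless := by constructor; intro a h; exact G.irrefl h.1

lemma Hgr_nbf (v : V) : (Hgr G F).neighborFinset v = nb G F v := by
  ext x
  rw [SimpleGraph.mem_neighborFinset, mem_nb]
  exact Iff.rfl

lemma dH_eq_zero {v : V} (hv : v ∉ vs F) : dH G F v = 0 := by
  rw [dH, Finset.card_eq_zero, Finset.eq_empty_iff_forall_notMem]
  intro x hx
  exact hv ((mem_nb G F).mp hx).2.1

lemma sum_dH_eq : ∑ v ∈ vs F, dH G F v = 2 * (Hgr G F).edgeFinset.card := by
  have h1 := SimpleGraph.sum_degrees_eq_twice_card_edges (Hgr G F)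
  have h2 : ∀ v : V, (Hgr G F).degree v = dH G F v := by
    intro v
    rw [← SimpleGraph.card_neighborFinset_eq_degree, Hgr_nbf]
    rfl
  have h3 : ∑ v ∈ Finset.univ, dH G F v = ∑ v ∈ vs F, dH G F v := by
    symm
    apply Finset.sum_subset (Finset.subset_univ _)
    intro x _ hx
    exact dH_eq_zero hx
  rw [← h3, ← Finset.sum_congr rfl (fun v _ => h2 v), h1]

lemma edge_set_eq :
    {e ∈ G.edgeSet | ∀ x ∈ e, x ∈ vs F} = ↑(Hgr G F).edgeFinset := by
  ext e
  induction e using Sym2.inductionOn with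
  | hf a b =>
    simp only [Set.mem_setOf_eq, Finset.coe_sort_coe, Finset.mem_coe,
      SimpleGraph.mem_edgeFinset, SimpleGraph.mem_edgeSet]
    constructor
    · rintro ⟨hadj, hall⟩
      exact ⟨hadj, hall a (by simp), hall b (by simp)⟩
    · rintro ⟨hadj, ha, hb⟩
      refine ⟨hadj, ?_⟩
      intro x hx
      rcases Sym2.mem_iff.mp hx with rfl | rfl
      · exact ha
      · exact hb

include hd4 hFE in
theorem exists_low_seen (hmad : MadLt G (18/5 : ℚ)) (hne : F.Nonempty) :
    ∃ e ∈ F, (seenF G F e).card ≤ 13 := by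
  by_contra hc
  push_neg at hc
  have hbad : ∀ e ∈ F, 14 ≤ (seenF G F e).card := fun e he => hc e he
  obtain ⟨e0, he0⟩ := hne
  have hvs_ne : (vs F).Nonempty :=
    ⟨e0.out.1, mem_vs_of_mem_edge F he0 (Sym2.out_fst_mem e0)⟩
  have hmads := hmad (vs F) hvs_ne
  set A := D3f G F with hA
  set B := D4f G F with hB
  have hAsub : A ⊆ vs F := by rw [hA, D3f]; exact Finset.filter_subset _ _
  have hBeq : vs F \ A = B := by
    ext x
    rw [hA, hB, D3f, D4f, Finset.mem_sdiff, Finset.mem_filter, Finset.mem_filter]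
    constructor
    · rintro ⟨hx, hnx⟩
      have h1 := dH_ge_3 hd4 hFE hbad hx
      have h2 := dH_le_4 (F := F) hd4 x
      refine ⟨hx, ?_⟩
      rcases Nat.lt_or_ge (dH G F x) 4 with hlt | hge
      · exact absurd ⟨hx, by omega⟩ hnx
      · omega
    · rintro ⟨hx, h4⟩
      exact ⟨hx, fun hc => by rw [hc.2] at h4; omega⟩
  have hsum1 : ∑ v ∈ vs F \ A, dH G F v + ∑ v ∈ A, dH G F v = ∑ v ∈ vs F, dH G F v :=
    Finset.sum_sdiff hAsub
  have hAs : ∑ v ∈ A, dH G F v = 3 * A.card := by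
    rw [Finset.sum_const_nat
      (fun v hv => by rw [hA, D3f] at hv; exact (Finset.mem_filter.mp hv).2), mul_comm]
  have hBs : ∑ v ∈ vs F \ A, dH G F v = 4 * B.card := by
    rw [hBeq, Finset.sum_const_nat
      (fun v hv => by rw [hB, D4f] at hv; exact (Finset.mem_filter.mp hv).2), mul_comm]
  have hsplit : ∑ v ∈ vs F, dH G F v = 3 * A.card + 4 * B.card := by
    omega
  have hvscard : (vs F).card = A.card + B.card := by
    have := Finset.card_sdiff_add_card_eq_card hAsub
    rw [hBeq] at this
    omega
  have h64 := six_le_four hd4 hFE hbad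
  rw [← hA, ← hB] at h64
  have hncard : ({e ∈ G.edgeSet | ∀ x ∈ e, x ∈ vs F}.ncard) = (Hgr G F).edgeFinset.card := by
    rw [edge_set_eq]
    exact Set.ncard_coe_finset _
  rw [hncard] at hmads
  have hQ : (5 : ℚ) * (2 * ((Hgr G F).edgeFinset.card : ℚ)) < 18 * ((vs F).card : ℚ) := by
    have h5 : (18 / 5 : ℚ) * ((vs F).card : ℚ) * 5 = 18 * ((vs F).card : ℚ) := by ring
    nlinarith [hmads]
  have hN : 5 * (2 * (Hgr G F).edgeFinset.card) < 18 * (vs F).card := by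
    exact_mod_cast hQ
  rw [← sum_dH_eq, hsplit, hvscard] at hN
  omega

include hd4 in
lemma greedy (hmad : MadLt G (18/5 : ℚ)) :
    ∀ (n : ℕ) (F : Finset (Sym2 V)), F.card ≤ n → (∀ e ∈ F, e ∈ G.edgeSet) →
    ∃ φ : Sym2 V → Fin 14, ∀ e ∈ F, ∀ e' ∈ F, e ≠ e' → Sees G e e' → φ e ≠ φ e' := by
  intro n
  induction n with
  | zero =>
    intro F hcard hFE'
    have : F = ∅ := Finset.card_eq_zero.mp (Nat.le_zero.mp hcard)
    subst this
    exact ⟨fun _ => 0, by simp⟩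
  | succ n ih =>
    intro F hcard hFE'
    rcases F.eq_empty_or_nonempty with rfl | hne
    · exact ⟨fun _ => 0, by simp⟩
    · obtain ⟨e₀, he₀, hlow⟩ := exists_low_seen hd4 hFE' hmad hne
      have hcard' : (F.erase e₀).card ≤ n := by
        rw [Finset.card_erase_of_mem he₀]
        omega
      obtain ⟨φ, hφ⟩ := ih (F.erase e₀) hcard'
        (fun e he => hFE' e (Finset.erase_subset _ _ he))
      set S := (F.erase e₀).filter (fun e' => Sees G e₀ e') with hS
      have hSsub : S ⊆ seenF G F e₀ := by
        intro e' he'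
        rw [hS, Finset.mem_filter, Finset.mem_erase] at he'
        rw [seenF, Finset.mem_filter]
        exact ⟨he'.1.2, he'.1.1, he'.2⟩
      have hcardS : (S.image φ).card ≤ 13 :=
        le_trans Finset.card_image_le (le_trans (Finset.card_le_card hSsub) hlow)
      have hex : ∃ c : Fin 14, c ∉ S.image φ := by
        by_contra h
        push_neg at h
        have : (S.image φ) = Finset.univ := Finset.eq_univ_iff_forall.mpr h
        rw [this, Finset.card_univ, Fintype.card_fin] at hcardS
        omega
      obtain ⟨c, hc⟩ := hex
      refine ⟨Function.update φ e₀ c, ?_⟩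
      intro e he e' he' hnee hsees
      have hSm : ∀ {f : Sym2 V}, f ∈ F → f ≠ e₀ → Sees G e₀ f → φ f ∈ S.image φ := by
        intro f hf hfne hfs
        exact Finset.mem_image_of_mem φ
          (by rw [hS, Finset.mem_filter, Finset.mem_erase]; exact ⟨⟨hfne, hf⟩, hfs⟩)
      by_cases h1 : e = e₀
      · subst h1
        have h2 : e' ≠ e := hnee.symm
        rw [Function.update_self, Function.update_of_ne h2]
        intro heq
        exact hc (heq ▸ hSm he' h2 hsees)
      · rw [Function.update_of_ne h1]
        by_cases h2 : e' = e₀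
        · subst h2
          rw [Function.update_self]
          intro heq
          exact hc (heq ▸ hSm he h1 (sees_symm G hsees))
        · rw [Function.update_of_ne h2]
          exact hφ e (Finset.mem_erase.mpr ⟨h1, he⟩) e' (Finset.mem_erase.mpr ⟨h2, he'⟩)
            hnee hsees

end InjP

end

theorem stmt_19 {V : Type} [Fintype V] (G : SimpleGraph V) [DecidableRel G.Adj]
    (hΔ : G.maxDegree = 4) (hmad : MadLt G (18/5 : ℚ)) :
    injChromIndex G ≤ 14 := by
  classical
  have hd4 : ∀ v, G.degree v ≤ 4 := fun v => hΔ ▸ G.degree_le_maxDegree v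
  obtain ⟨φ, hφ⟩ := InjP.greedy hd4 hmad G.edgeFinset.card G.edgeFinset le_rfl
    (fun e he => (SimpleGraph.mem_edgeFinset).mp he)
  have hcol : HasInjColoring G 14 := by
    refine ⟨fun e => φ ↑e, ?_⟩
    intro e e' hne hsees
    exact hφ ↑e (SimpleGraph.mem_edgeFinset.mpr e.2) ↑e'
      (SimpleGraph.mem_edgeFinset.mpr e'.2) hne hsees
  exact Nat.sInf_le hcol
end
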